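/- arXiv:2105.01110 — 3 statements merged into one kernel-verified Lean document; each statement's English description precedes it below -/
import Mathlib

section
/- Let d ≥ 1 and let ψ be a multiplier of H²_d with ‖ψ‖_Mult ≤ 1. Then |ψ(z)| ≤ 1 for all z ∈ B_d, and for every r ∈ (0,1) the function (1−ψ)/(1−r·ψ) is a multiplier of H²_d with multiplier norm at most 2/(1+r). -/
open Metric Filter Finset
open scoped BigOperators Real Topology

noncomputable section

abbrev Edim (d : ℕ) := EuclideanSpace ℂ (Fin d)

def ballD (d : ℕ) : Set (Edim d) := Metric.ball 0 1

def msize {d : ℕ} (α : Fin d → ℕ) : ℕ := ∑ i, α i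

def w2 {d : ℕ} (α : Fin d → ℕ) : ℝ :=
  ((∏ i, Nat.factorial (α i) : ℕ) : ℝ) / ((Nat.factorial (msize α) : ℕ) : ℝ)

def omegaIdx {d : ℕ} (α : Fin d → ℕ) : ℝ := Real.sqrt (w2 α)

def mpow {d : ℕ} (z : Edim d) (α : Fin d → ℕ) : ℂ := ∏ i, z i ^ α i

def IsExpansion {d : ℕ} (f : Edim d → ℂ) (a : (Fin d → ℕ) → ℂ) : Prop :=
  ∀ z ∈ ballD d, HasSum (fun α => a α * mpow z α) (f z)

def SummableH2 {d : ℕ} (a : (Fin d → ℕ) → ℂ) : Prop :=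
  Summable (fun α => ‖a α‖ ^ 2 * w2 α)

def h2NormSq {d : ℕ} (a : (Fin d → ℕ) → ℂ) : ℝ := ∑' α, ‖a α‖ ^ 2 * w2 α

def h2Inner {d : ℕ} (a b : (Fin d → ℕ) → ℂ) : ℂ :=
  ∑' α, a α * (starRingEnd ℂ) (b α) * ((w2 α : ℝ) : ℂ)

def MemH2 {d : ℕ} (f : Edim d → ℂ) : Prop :=
  ∃ a, IsExpansion f a ∧ SummableH2 a

def IsMultiplier {d : ℕ} (m : Edim d → ℂ) : Prop :=
  DifferentiableOn ℂ m (ballD d) ∧ ∀ f, MemH2 f → MemH2 (fun z => m z * f z)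

def MultNormLE {d : ℕ} (m : Edim d → ℂ) (C : ℝ) : Prop :=
  IsMultiplier m ∧ ∀ f a c, IsExpansion f a → SummableH2 a →
    IsExpansion (fun z => m z * f z) c → h2NormSq c ≤ C ^ 2 * h2NormSq a

def CyclicMult {d : ℕ} (m : Edim d → ℂ) : Prop :=
  IsMultiplier m ∧ ∀ b, SummableH2 b → ∀ ε > (0:ℝ),
    ∃ (h : Edim d → ℂ) (a c : (Fin d → ℕ) → ℂ), IsExpansion h a ∧ SummableH2 a ∧
      IsExpansion (fun z => m z * h z) c ∧ SummableH2 c ∧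
      h2NormSq (fun α => c α - b α) < ε

def sliceInt {d : ℕ} (f : Edim d → ℂ) (ζ : Edim d) (r : ℝ) : ℝ :=
  (1 / (2 * Real.pi)) *
    ∫ θ in (0:ℝ)..(2 * Real.pi),
      Real.log (1 + ‖f (((r : ℂ) * Complex.exp (Complex.I * θ)) • ζ)‖)

def smirnovSet {d : ℕ} (f : Edim d → ℂ) : Set ℝ :=
  {x | ∃ ζ ∈ Metric.sphere (0 : Edim d) 1, ∃ r ∈ Set.Ioo (0:ℝ) 1, x = sliceInt f ζ r}

def tnorm {d : ℕ} (f : Edim d → ℂ) : ℝ := sSup (smirnovSet f)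

def MemNu {d : ℕ} (f : Edim d → ℂ) : Prop :=
  DifferentiableOn ℂ f (ballD d) ∧ BddAbove (smirnovSet f) ∧
    Tendsto (fun r : ℝ => tnorm (fun z => f z - f ((r : ℂ) • z)))
      (nhdsWithin 1 (Set.Ioo 0 1)) (nhds 0)

def sliceInt1 (f : ℂ → ℂ) (r : ℝ) : ℝ :=
  (1 / (2 * Real.pi)) *
    ∫ θ in (0:ℝ)..(2 * Real.pi),
      Real.log (1 + ‖f ((r : ℂ) * Complex.exp (Complex.I * θ))‖)

def smirnovSet1 (f : ℂ → ℂ) : Set ℝ := {x | ∃ r ∈ Set.Ioo (0:ℝ) 1, x = sliceInt1 f r}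

def tnorm1 (f : ℂ → ℂ) : ℝ := sSup (smirnovSet1 f)

def MemNplus1 (f : ℂ → ℂ) : Prop :=
  DifferentiableOn ℂ f (Metric.ball 0 1) ∧ BddAbove (smirnovSet1 f) ∧
    Tendsto (fun r : ℝ => tnorm1 (fun z => f z - f ((r:ℂ) * z)))
      (nhdsWithin 1 (Set.Ioo 0 1)) (nhds 0)

def IsExpansion1 (f : ℂ → ℂ) (a : ℕ → ℂ) : Prop :=
  ∀ w ∈ Metric.ball (0:ℂ) 1, HasSum (fun n => a n * w ^ n) (f w)

def homPart {d : ℕ} (a : (Fin d → ℕ) → ℂ) (n : ℕ) (z : Edim d) : ℂ :=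
  ∑' α, if msize α = n then a α * mpow z α else 0

def homNormSq {d : ℕ} (a : (Fin d → ℕ) → ℂ) (n : ℕ) : ℝ :=
  ∑' α, if msize α = n then ‖a α‖ ^ 2 * w2 α else 0

section Chunk1
variable {d : ℕ}

lemma w2_pos (α : Fin d → ℕ) : 0 < w2 α := by
  unfold w2
  have h1 : (0:ℝ) < ((∏ i, Nat.factorial (α i) : ℕ) : ℝ) := by
    exact_mod_cast Finset.prod_pos fun i _ => Nat.factorial_pos _
  have h2 : (0:ℝ) < ((Nat.factorial (msize α) : ℕ) : ℝ) := by
    exact_mod_cast Nat.factorial_pos _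
  exact div_pos h1 h2

lemma w2_sqrt_pos (α : Fin d → ℕ) : 0 < Real.sqrt (w2 α) := Real.sqrt_pos.2 (w2_pos α)

lemma mpow_normsq (z : Edim d) (α : Fin d → ℕ) :
    ‖mpow z α‖ ^ 2 = ∏ i, (‖z i‖ ^ 2) ^ (α i) := by
  unfold mpow
  rw [norm_prod]
  rw [← Finset.prod_pow]
  refine Finset.prod_congr rfl fun i _ => ?_
  rw [norm_pow, ← pow_mul, ← pow_mul, mul_comm]

/-- the reproducing kernel summand -/
def kerF (z : Edim d) (α : Fin d → ℕ) : ℝ := ‖mpow z α‖ ^ 2 / w2 α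

lemma ker_nonneg (z : Edim d) (α : Fin d → ℕ) : 0 ≤ kerF z α := by
  exact div_nonneg (sq_nonneg _) (le_of_lt (w2_pos α))

lemma normsq_lt {z : Edim d} (hz : z ∈ ballD d) : ∑ i, ‖z i‖ ^ 2 < 1 := by
  have h : ‖z‖ < 1 := by simpa [ballD] using hz
  rw [EuclideanSpace.norm_eq] at h
  have hnn : 0 ≤ ∑ i, ‖z i‖ ^ 2 := Finset.sum_nonneg fun i _ => sq_nonneg _
  by_contra hle
  push_neg at hle
  have := Real.one_le_sqrt.2 hle
  · linarith
  
lemma normsq_nonneg (z : Edim d) : 0 ≤ ∑ i, ‖z i‖ ^ 2 :=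
  Finset.sum_nonneg fun i _ => sq_nonneg _

/-- kernel constant -/
def Kz (z : Edim d) : ℝ := (1 - ∑ i, ‖z i‖ ^ 2)⁻¹

lemma Kz_nonneg {z : Edim d} (hz : z ∈ ballD d) : 0 ≤ Kz z := by
  have h := normsq_lt hz
  unfold Kz
  have : (0:ℝ) < 1 - ∑ i, ‖z i‖ ^ 2 := by linarith
  positivity

lemma ker_sum_le {z : Edim d} (hz : z ∈ ballD d) (s : Finset (Fin d → ℕ)) :
    ∑ α ∈ s, kerF z α ≤ Kz z := by
  classical
  set t : Fin d → ℝ := fun i => ‖z i‖ ^ 2 with ht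
  have htnn : ∀ i, 0 ≤ t i := fun i => sq_nonneg _
  have hσ1 : ∑ i, t i < 1 := normsq_lt hz
  have hσ0 : 0 ≤ ∑ i, t i := normsq_nonneg z
  set N := s.sup msize with hN
  have hsub : s ⊆ (Finset.range (N + 1)).biUnion
      (fun n => Finset.piAntidiag Finset.univ n) := by
    intro α hα
    refine Finset.mem_biUnion.2 ⟨msize α, Finset.mem_range.2 ?_, ?_⟩
    · exact Nat.lt_succ_of_le (Finset.le_sup hα)
    · exact Finset.mem_piAntidiag.2 ⟨rfl, fun i _ => Finset.mem_univ i⟩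
  have hstep : ∑ α ∈ s, kerF z α ≤
      ∑ α ∈ (Finset.range (N + 1)).biUnion (fun n => Finset.piAntidiag Finset.univ n),
        kerF z α :=
    Finset.sum_le_sum_of_subset_of_nonneg hsub (fun α _ _ => ker_nonneg z α)
  have hdisj : ∀ n₁ ∈ Finset.range (N+1), ∀ n₂ ∈ Finset.range (N+1), n₁ ≠ n₂ →
      Disjoint (Finset.piAntidiag (Finset.univ : Finset (Fin d)) n₁)
        (Finset.piAntidiag Finset.univ n₂) := by
    intro n₁ _ n₂ _ hne
    refine Finset.disjoint_left.2 fun α h1 h2 => hne ?_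
    have e1 := (Finset.mem_piAntidiag.1 h1).1
    have e2 := (Finset.mem_piAntidiag.1 h2).1
    omega
  rw [Finset.sum_biUnion hdisj] at hstep
  have hinner : ∀ n, ∑ α ∈ Finset.piAntidiag (Finset.univ : Finset (Fin d)) n, kerF z α
      = (∑ i, t i) ^ n := by
    intro n
    rw [Finset.sum_pow_eq_sum_piAntidiag Finset.univ t n]
    refine Finset.sum_congr rfl fun k hk => ?_
    obtain ⟨hsum, -⟩ := Finset.mem_piAntidiag.1 hk
    have hm : msize k = n := by simpa [msize] using hsum
    have hspec := Nat.multinomial_spec Finset.univ k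
    have hprodpos : (0:ℝ) < ((∏ i, Nat.factorial (k i) : ℕ) : ℝ) := by
      exact_mod_cast Finset.prod_pos fun i _ => Nat.factorial_pos _
    have hnpos : (0:ℝ) < ((Nat.factorial n : ℕ) : ℝ) := by
      exact_mod_cast Nat.factorial_pos _
    have hmult : (Nat.multinomial Finset.univ k : ℝ)
        = ((Nat.factorial n : ℕ) : ℝ) / ((∏ i, Nat.factorial (k i) : ℕ) : ℝ) := by
      rw [eq_div_iff (ne_of_gt hprodpos), mul_comm]
      have := congrArg (fun m : ℕ => (m : ℝ)) hspec
      simpa [hsum] using this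
    unfold kerF w2
    rw [mpow_normsq, hm, hmult]
    simp only [ht]
    rw [div_div_eq_mul_div]
    ring
  calc ∑ α ∈ s, kerF z α ≤ ∑ n ∈ Finset.range (N+1), ∑ α ∈ Finset.piAntidiag
        (Finset.univ : Finset (Fin d)) n, kerF z α := hstep
    _ = ∑ n ∈ Finset.range (N+1), (∑ i, t i) ^ n := by
        exact Finset.sum_congr rfl fun n _ => hinner n
    _ ≤ ∑' n, (∑ i, t i) ^ n := by
        refine Summable.sum_le_tsum _ (fun n _ => pow_nonneg hσ0 n) ?_
        exact summable_geometric_of_lt_one hσ0 hσ1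
    _ = Kz z := by rw [tsum_geometric_of_lt_one hσ0 hσ1]; rfl

lemma ker_summable {z : Edim d} (hz : z ∈ ballD d) : Summable (kerF z) :=
  summable_of_sum_le (fun α => ker_nonneg z α) (ker_sum_le hz)

end Chunk1
section Chunk2
variable {d : ℕ} {b : (Fin d → ℕ) → ℂ} {z : Edim d}

lemma h2NormSq_nonneg (b : (Fin d → ℕ) → ℂ) : 0 ≤ h2NormSq b :=
  tsum_nonneg fun α => mul_nonneg (sq_nonneg _) (le_of_lt (w2_pos α))

lemma eval_sum_norm_le (hb : SummableH2 b) (hz : z ∈ ballD d) (s : Finset (Fin d → ℕ)) :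
    ∑ α ∈ s, ‖b α * mpow z α‖ ≤ Real.sqrt (h2NormSq b * Kz z) := by
  set f : (Fin d → ℕ) → ℝ := fun α => ‖b α‖ * Real.sqrt (w2 α) with hf
  set g : (Fin d → ℕ) → ℝ := fun α => ‖mpow z α‖ / Real.sqrt (w2 α) with hg
  have hterm : ∀ α, ‖b α * mpow z α‖ = f α * g α := by
    intro α
    have hs := (w2_sqrt_pos α).ne'
    rw [hf, hg, norm_mul]
    field_simp
  have hf2 : ∀ α, f α ^ 2 = ‖b α‖ ^ 2 * w2 α := by
    intro α
    rw [hf, mul_pow, Real.sq_sqrt (w2_pos α).le]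
  have hg2 : ∀ α, g α ^ 2 = kerF z α := by
    intro α
    rw [hg, div_pow, Real.sq_sqrt (w2_pos α).le]
    rfl
  have hCS := Finset.sum_mul_sq_le_sq_mul_sq s f g
  have h1 : ∑ α ∈ s, f α ^ 2 ≤ h2NormSq b := by
    refine Summable.sum_le_tsum s (fun α _ => mul_nonneg (sq_nonneg _) (w2_pos α).le) hb
      |>.trans_eq' ?_
    exact Finset.sum_congr rfl fun α _ => (hf2 α).symm
  have h2 : ∑ α ∈ s, g α ^ 2 ≤ Kz z := by
    have := ker_sum_le hz s
    calc ∑ α ∈ s, g α ^ 2 = ∑ α ∈ s, kerF z α := Finset.sum_congr rfl fun α _ => hg2 α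
      _ ≤ Kz z := this
  have hsumnn : 0 ≤ ∑ α ∈ s, ‖b α * mpow z α‖ :=
    Finset.sum_nonneg fun α _ => norm_nonneg _
  have hsq : (∑ α ∈ s, ‖b α * mpow z α‖) ^ 2 ≤ h2NormSq b * Kz z := by
    have hfg : ∑ α ∈ s, ‖b α * mpow z α‖ = ∑ α ∈ s, f α * g α :=
      Finset.sum_congr rfl fun α _ => hterm α
    rw [hfg]
    refine le_trans hCS ?_
    have hgnn : 0 ≤ ∑ α ∈ s, g α ^ 2 := Finset.sum_nonneg fun α _ => sq_nonneg _
    have hfnn : 0 ≤ ∑ α ∈ s, f α ^ 2 := Finset.sum_nonneg fun α _ => sq_nonneg _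
    exact mul_le_mul h1 h2 hgnn (h2NormSq_nonneg b)
  exact Real.le_sqrt_of_sq_le hsq

lemma eval_summable_norm (hb : SummableH2 b) (hz : z ∈ ballD d) :
    Summable (fun α => ‖b α * mpow z α‖) :=
  summable_of_sum_le (fun α => norm_nonneg _) (eval_sum_norm_le hb hz)

lemma eval_summable (hb : SummableH2 b) (hz : z ∈ ballD d) :
    Summable (fun α => b α * mpow z α) :=
  (eval_summable_norm hb hz).of_norm

lemma eval_tsum_norm_le (hb : SummableH2 b) (hz : z ∈ ballD d) :
    ‖∑' α, b α * mpow z α‖ ≤ Real.sqrt (h2NormSq b * Kz z) := by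
  refine le_trans (norm_tsum_le_tsum_norm (eval_summable_norm hb hz)) ?_
  exact Summable.tsum_le_of_sum_le (eval_summable_norm hb hz) (eval_sum_norm_le hb hz)

end Chunk2
section Chunk3

lemma one_dim_unique {s : ℝ} (hs : 0 < s) (b : ℕ → ℂ)
    (h : ∀ w : ℂ, ‖w‖ < s → HasSum (fun k => b k * w ^ k) 0) : b = 0 := by
  classical
  set p : FormalMultilinearSeries ℂ ℂ ℂ :=
    fun n => ContinuousMultilinearMap.mkPiRing ℂ (Fin n) (b n) with hp
  have hpn : ∀ n, ‖p n‖ = ‖b n‖ := fun n => ContinuousMultilinearMap.norm_mkPiRing _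
  have hpapply : ∀ n (y : ℂ), (p n) (fun _ => y) = b n * y ^ n := by
    intro n y
    rw [hp]
    rw [ContinuousMultilinearMap.mkPiRing_apply]
    simp [smul_eq_mul, mul_comm]
  set r : NNReal := ⟨s / 2, by positivity⟩ with hr
  have hrs : (s / 2 : ℝ) < s := by linarith
  have hw0 : ‖((s / 2 : ℝ) : ℂ)‖ < s := by
    rw [Complex.norm_real]
    rw [Real.norm_eq_abs, abs_of_pos (by positivity)]
    exact hrs
  have hsum0 := (h _ hw0).summable
  have hsumnorm : Summable fun n => ‖p n‖ * (r : ℝ) ^ n := by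
    have h1 : Summable fun n => ‖b n * ((s / 2 : ℝ) : ℂ) ^ n‖ :=
      summable_norm_iff.2 hsum0
    refine h1.congr fun n => ?_
    rw [norm_mul, norm_pow, Complex.norm_real, Real.norm_eq_abs,
      abs_of_pos (by positivity), hpn]
    rfl
  have hrad : (r : ENNReal) ≤ p.radius := p.le_radius_of_summable hsumnorm
  have hball : HasFPowerSeriesOnBall (0 : ℂ → ℂ) p 0 r := by
    refine ⟨hrad, ?_, ?_⟩
    · exact_mod_cast (show (0:NNReal) < r from by
        rw [← NNReal.coe_lt_coe]; show (0:ℝ) < s/2; positivity)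
    · intro y hy
      have hy2 : (‖y‖₊ : ENNReal) < (r : ENNReal) := by
        rw [ENNReal.coe_lt_coe, ← NNReal.coe_lt_coe, coe_nnnorm]
        simpa using hy
      have hy3 : ‖y‖₊ < r := by exact_mod_cast hy2
      have hy' : ‖y‖ < s / 2 := by
        have := NNReal.coe_lt_coe.2 hy3
        exact this
      have hsy := h y (lt_trans hy' hrs)
      simp only [Pi.zero_apply]
      have heq : (fun n => (p n) fun _ => y) = fun n => b n * y ^ n :=
        funext fun n => hpapply n y
      rw [heq]
      simpa using hsy
  have hpz : p = 0 := hball.hasFPowerSeriesAt.eq_zero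
  funext n
  have := congrFun hpz n
  have happ := congrArg (fun q => q (fun _ : Fin n => (1:ℂ))) this
  simpa [hpapply n 1] using happ

end Chunk3
section Chunk4

lemma zero_mem_ballD (d : ℕ) : (0 : Edim d) ∈ ballD d := by
  simp [ballD]

lemma expansion_unique_zero (d : ℕ) : ∀ (e : (Fin d → ℕ) → ℂ),
    (∀ z ∈ ballD d, HasSum (fun α => e α * mpow z α) 0) → e = 0 := by
  induction d with
  | zero =>
    intro e h
    have h0 := h (0 : Edim 0) (zero_mem_ballD 0)
    have hfin : HasSum (fun α : Fin 0 → ℕ => e α * mpow (0 : Edim 0) α)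
        (∑ α : Fin 0 → ℕ, e α * mpow (0 : Edim 0) α) := hasSum_fintype _
    have hval : (∑ α : Fin 0 → ℕ, e α * mpow (0 : Edim 0) α) = 0 := hfin.unique h0
    funext α
    have hα : α = default := Subsingleton.elim _ _
    have : e default * mpow (0 : Edim 0) default = 0 := by
      rw [← hval]
      rw [Finset.sum_eq_single_of_mem default (Finset.mem_univ _)]
      intro β _ hβ
      exact absurd (Subsingleton.elim β default) hβ
    have hm : mpow (0 : Edim 0) default = 1 := by
      unfold mpow
      simp
    rw [hm, mul_one] at this
    rw [hα, this]
    rfl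
  | succ d IH =>
    intro e h
    have key : ∀ (k : ℕ) (β : Fin d → ℕ), e (Fin.cons k β) = 0 := by
      intro k
      have : (fun β => e (Fin.cons k β)) = 0 := by
        refine IH (fun β => e (Fin.cons k β)) ?_
        intro z' hz'
        -- setup
        have hS' : ∑ i, ‖z' i‖ ^ 2 < 1 := normsq_lt hz'
        set τ : ℝ := 1 - ∑ i, ‖z' i‖ ^ 2 with hτdef
        have hτ : 0 < τ := by simp only [hτdef]; linarith
        -- the embedded point
        set mkZ : ℂ → Edim (d + 1) := fun w =>
          (WithLp.equiv 2 (Fin (d+1) → ℂ)).symm (Fin.cons w (fun i => z' i)) with hmkZ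
        have hZapp0 : ∀ w, mkZ w 0 = w := fun w => rfl
        have hZapps : ∀ w i, mkZ w i.succ = z' i := fun w i => rfl
        have hZball : ∀ w : ℂ, ‖w‖ ^ 2 < τ → mkZ w ∈ ballD (d + 1) := by
          intro w hw
          have hnormsq : ∑ i, ‖mkZ w i‖ ^ 2 = ‖w‖ ^ 2 + ∑ i, ‖z' i‖ ^ 2 := by
            rw [Fin.sum_univ_succ]
            rfl
          have hlt : ∑ i, ‖mkZ w i‖ ^ 2 < 1 := by
            rw [hnormsq]
            simp only [hτdef] at hw
            linarith
          have : ‖mkZ w‖ < 1 := by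
            rw [EuclideanSpace.norm_eq]
            have h0 : (0:ℝ) ≤ ∑ i, ‖mkZ w i‖ ^ 2 :=
              Finset.sum_nonneg fun i _ => sq_nonneg _
            calc Real.sqrt (∑ i, ‖mkZ w i‖ ^ 2) < Real.sqrt 1 :=
                  Real.sqrt_lt_sqrt h0 hlt
              _ = 1 := Real.sqrt_one
          simpa [ballD] using this
        have hmpow : ∀ (w : ℂ) (α : Fin (d+1) → ℕ),
            mpow (mkZ w) α = w ^ (α 0) * mpow z' (fun i => α i.succ) := by
          intro w α
          unfold mpow
          rw [Fin.prod_univ_succ]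
          rfl
        -- product HasSum
        have hProd : ∀ w : ℂ, ‖w‖ ^ 2 < τ →
            HasSum (fun pk : ℕ × (Fin d → ℕ) =>
              e (Fin.cons pk.1 pk.2) * (w ^ pk.1 * mpow z' pk.2)) 0 := by
          intro w hw
          have h0 := h (mkZ w) (hZball w hw)
          have hcs := (Fin.consEquiv (fun _ : Fin (d+1) => ℕ)).hasSum_iff.2 h0
          have heq : ((fun α => e α * mpow (mkZ w) α) ∘ ⇑(Fin.consEquiv fun _ : Fin (d+1) => ℕ))
              = fun pk : ℕ × (Fin d → ℕ) =>
                e (Fin.cons pk.1 pk.2) * (w ^ pk.1 * mpow z' pk.2) := by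
            funext pk
            have hck : (Fin.consEquiv fun _ : Fin (d+1) => ℕ) pk = Fin.cons pk.1 pk.2 := rfl
            simp only [Function.comp_apply, hck]
            rw [hmpow w (Fin.cons pk.1 pk.2)]
            simp [Fin.cons_zero, Fin.cons_succ]
          rwa [heq] at hcs
        -- fiber summability
        set w₀ : ℂ := ((Real.sqrt τ / 2 : ℝ) : ℂ) with hw₀def
        have hw₀norm : ‖w₀‖ ^ 2 < τ := by
          rw [hw₀def, Complex.norm_real, Real.norm_eq_abs,
            abs_of_pos (by positivity)]
          rw [div_pow, Real.sq_sqrt hτ.le]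
          linarith
        have hw₀ne : w₀ ≠ 0 := by
          rw [hw₀def]
          exact_mod_cast Complex.ofReal_ne_zero.2 (ne_of_gt (by positivity))
        have hfib : ∀ k : ℕ, Summable (fun β => e (Fin.cons k β) * mpow z' β) := by
          intro k
          have h1 := (hProd w₀ hw₀norm).summable.prod_factor k
          have h2 := h1.mul_left ((w₀ ^ k)⁻¹)
          refine h2.congr fun β => ?_
          have hwk : (w₀ : ℂ) ^ k ≠ 0 := pow_ne_zero _ hw₀ne
          field_simp
        set F : ℕ → ℂ := fun k => ∑' β, e (Fin.cons k β) * mpow z' β with hF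
        have hOneDim : ∀ w : ℂ, ‖w‖ < Real.sqrt τ → HasSum (fun k => F k * w ^ k) 0 := by
          intro w hw
          have hw2 : ‖w‖ ^ 2 < τ := by
            have h1 : ‖w‖ ^ 2 < (Real.sqrt τ) ^ 2 := by
              have := norm_nonneg w
              nlinarith
            rwa [Real.sq_sqrt hτ.le] at h1
          refine HasSum.prod_fiberwise (hProd w hw2) fun k => ?_
          have h1 := ((hfib k).hasSum).mul_left (w ^ k)
          have heq : (fun β => w ^ k * (e (Fin.cons k β) * mpow z' β))
              = fun β => e (Fin.cons k β) * (w ^ k * mpow z' β) := funext fun β => by ring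
          rw [heq] at h1
          simpa [hF, mul_comm] using h1
        have hF0 : F = 0 := one_dim_unique (Real.sqrt_pos.2 hτ) F hOneDim
        have h2 : HasSum (fun β => e (Fin.cons k β) * mpow z' β) (F k) := (hfib k).hasSum
        rw [hF0] at h2
        simpa using h2
      intro β
      exact congrFun this β
    funext α
    have := key (α 0) (Fin.tail α)
    rwa [Fin.cons_self_tail α] at this

end Chunk4
section Chunk5
variable {d : ℕ}

lemma expansion_unique {f : Edim d → ℂ} {a b : (Fin d → ℕ) → ℂ}
    (ha : IsExpansion f a) (hb : IsExpansion f b) : a = b := by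
  have h : a - b = 0 := by
    refine expansion_unique_zero d (a - b) fun z hz => ?_
    have h1 := (ha z hz).sub (hb z hz)
    rw [sub_self] at h1
    have heq : (fun α => a α * mpow z α - b α * mpow z α)
        = fun α => (a - b) α * mpow z α := by
      funext α
      simp [sub_mul]
    rwa [heq] at h1
  exact sub_eq_zero.1 h

abbrev H2S (d : ℕ) := lp (fun _ : (Fin d → ℕ) => ℂ) 2

def toH (a : (Fin d → ℕ) → ℂ) : (Fin d → ℕ) → ℂ :=
  fun α => a α * ((Real.sqrt (w2 α) : ℝ) : ℂ)

def fromHfun (x : (Fin d → ℕ) → ℂ) : (Fin d → ℕ) → ℂ :=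
  fun α => x α / ((Real.sqrt (w2 α) : ℝ) : ℂ)

lemma sqrtw2_ne (α : Fin d → ℕ) : ((Real.sqrt (w2 α) : ℝ) : ℂ) ≠ 0 :=
  Complex.ofReal_ne_zero.2 (ne_of_gt (w2_sqrt_pos α))

lemma normsq_toH (a : (Fin d → ℕ) → ℂ) (α : Fin d → ℕ) :
    ‖toH a α‖ ^ 2 = ‖a α‖ ^ 2 * w2 α := by
  unfold toH
  rw [norm_mul, mul_pow, Complex.norm_real, Real.norm_eq_abs,
    abs_of_pos (w2_sqrt_pos α), Real.sq_sqrt (w2_pos α).le]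

lemma two_toReal : ((2 : ENNReal)).toReal = (2 : ℝ) := by norm_num

lemma rpow_two_eq (x : ℝ) (hx : 0 ≤ x) : x ^ ((2 : ENNReal)).toReal = x ^ 2 := by
  rw [two_toReal]
  rw [show ((2:ℝ) = ((2:ℕ):ℝ)) by norm_num, Real.rpow_natCast]

lemma memlp_toH {a : (Fin d → ℕ) → ℂ} (ha : SummableH2 a) : Memℓp (toH a) 2 := by
  refine memℓp_gen ?_
  refine ha.congr fun α => ?_
  rw [rpow_two_eq _ (norm_nonneg _), normsq_toH]

def mkH (a : (Fin d → ℕ) → ℂ) (ha : SummableH2 a) : H2S d := ⟨toH a, memlp_toH ha⟩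

def coeffOf (x : H2S d) : (Fin d → ℕ) → ℂ := fromHfun (x : (Fin d → ℕ) → ℂ)

lemma coeffOf_mk (a : (Fin d → ℕ) → ℂ) (ha : SummableH2 a) : coeffOf (mkH a ha) = a := by
  funext α
  unfold coeffOf fromHfun mkH toH
  exact mul_div_cancel_right₀ _ (sqrtw2_ne α)

lemma normsq_coeffOf (x : H2S d) (α : Fin d → ℕ) :
    ‖coeffOf x α‖ ^ 2 * w2 α = ‖(x : (Fin d → ℕ) → ℂ) α‖ ^ 2 := by
  unfold coeffOf fromHfun
  rw [norm_div, div_pow, Complex.norm_real, Real.norm_eq_abs,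
    abs_of_pos (w2_sqrt_pos α), Real.sq_sqrt (w2_pos α).le]
  rw [div_mul_cancel₀]
  exact (w2_pos α).ne'

lemma summableH2_coeffOf (x : H2S d) : SummableH2 (coeffOf x) := by
  have hm := lp.memℓp x
  have hs : Summable fun α => ‖(x : (Fin d → ℕ) → ℂ) α‖ ^ 2 := by
    have := hm.summable (by rw [two_toReal]; norm_num : 0 < ((2:ENNReal)).toReal)
    refine this.congr fun α => ?_
    rw [rpow_two_eq _ (norm_nonneg _)]
  exact hs.congr fun α => (normsq_coeffOf x α).symm

lemma h2NormSq_coeffOf (x : H2S d) : h2NormSq (coeffOf x) = ‖x‖ ^ 2 := by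
  unfold h2NormSq
  have h := lp.norm_rpow_eq_tsum (p := 2)
    (by rw [two_toReal]; norm_num) x
  rw [rpow_two_eq _ (norm_nonneg x)] at h
  rw [h]
  refine tsum_congr fun α => ?_
  rw [rpow_two_eq _ (norm_nonneg _)]
  exact normsq_coeffOf x α

lemma coeffOf_add (x y : H2S d) : coeffOf (x + y) = coeffOf x + coeffOf y := by
  funext α
  unfold coeffOf fromHfun
  rw [lp.coeFn_add]
  simp [add_div]

lemma coeffOf_sub (x y : H2S d) : coeffOf (x - y) = coeffOf x - coeffOf y := by
  funext α
  unfold coeffOf fromHfun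
  rw [lp.coeFn_sub]
  simp [sub_div]

lemma coeffOf_smul (c : ℂ) (x : H2S d) : coeffOf (c • x) = c • coeffOf x := by
  funext α
  unfold coeffOf fromHfun
  rw [lp.coeFn_smul]
  simp [Pi.smul_apply, smul_eq_mul, mul_div_assoc]

lemma norm_mkH (a : (Fin d → ℕ) → ℂ) (ha : SummableH2 a) : ‖mkH a ha‖ ^ 2 = h2NormSq a := by
  rw [← h2NormSq_coeffOf, coeffOf_mk]

/-- the holomorphic function attached to an `ℓ²` element -/
def funOf (x : H2S d) : Edim d → ℂ := fun z => ∑' α, coeffOf x α * mpow z α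

lemma isExpansion_funOf (x : H2S d) : IsExpansion (funOf x) (coeffOf x) :=
  fun z hz => (eval_summable (summableH2_coeffOf x) hz).hasSum

lemma memH2_funOf (x : H2S d) : MemH2 (funOf x) :=
  ⟨coeffOf x, isExpansion_funOf x, summableH2_coeffOf x⟩

lemma funOf_eval_diff (x y : H2S d) {z : Edim d} (hz : z ∈ ballD d) :
    ‖funOf x z - funOf y z‖ ≤ Real.sqrt (‖x - y‖ ^ 2 * Kz z) := by
  have hsx := eval_summable (summableH2_coeffOf x) hz
  have hsy := eval_summable (summableH2_coeffOf y) hz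
  have hdiff : funOf x z - funOf y z = ∑' α, coeffOf (x - y) α * mpow z α := by
    unfold funOf
    rw [← Summable.tsum_sub hsx hsy]
    refine tsum_congr fun α => ?_
    rw [coeffOf_sub]
    simp [sub_mul]
  rw [hdiff, ← h2NormSq_coeffOf]
  exact eval_tsum_norm_le (summableH2_coeffOf _) hz

lemma funOf_mkH {f : Edim d → ℂ} {a : (Fin d → ℕ) → ℂ} (hexp : IsExpansion f a)
    (ha : SummableH2 a) {z : Edim d} (hz : z ∈ ballD d) : funOf (mkH a ha) z = f z := by
  unfold funOf
  rw [coeffOf_mk]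
  exact (hexp z hz).tsum_eq

end Chunk5
section Chunk6
variable {d : ℕ} {ψ : Edim d → ℂ}

/-- coefficients of `ψ · funOf x` -/
noncomputable def Tcoef (hm : IsMultiplier ψ) (x : H2S d) : (Fin d → ℕ) → ℂ :=
  (hm.2 (funOf x) (memH2_funOf x)).choose

lemma Tcoef_exp (hm : IsMultiplier ψ) (x : H2S d) :
    IsExpansion (fun z => ψ z * funOf x z) (Tcoef hm x) :=
  (hm.2 (funOf x) (memH2_funOf x)).choose_spec.1

lemma Tcoef_sum (hm : IsMultiplier ψ) (x : H2S d) : SummableH2 (Tcoef hm x) :=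
  (hm.2 (funOf x) (memH2_funOf x)).choose_spec.2

noncomputable def TopM (hm : IsMultiplier ψ) (x : H2S d) : H2S d :=
  mkH (Tcoef hm x) (Tcoef_sum hm x)

lemma coeffOf_Top (hm : IsMultiplier ψ) (x : H2S d) :
    coeffOf (TopM hm x) = Tcoef hm x := coeffOf_mk _ _

lemma isExpansion_Top (hm : IsMultiplier ψ) (x : H2S d) :
    IsExpansion (fun z => ψ z * funOf x z) (coeffOf (TopM hm x)) := by
  rw [coeffOf_Top]; exact Tcoef_exp hm x

lemma Top_norm_le (hψ : MultNormLE ψ 1) (x : H2S d) : ‖TopM hψ.1 x‖ ≤ ‖x‖ := by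
  have hb := hψ.2 (funOf x) (coeffOf x) (Tcoef hψ.1 x) (isExpansion_funOf x)
    (summableH2_coeffOf x) (Tcoef_exp hψ.1 x)
  have h1 : ‖TopM hψ.1 x‖ ^ 2 = h2NormSq (Tcoef hψ.1 x) := norm_mkH _ _
  have h2 : h2NormSq (coeffOf x) = ‖x‖ ^ 2 := h2NormSq_coeffOf x
  have : ‖TopM hψ.1 x‖ ^ 2 ≤ ‖x‖ ^ 2 := by
    rw [h1]
    calc h2NormSq (Tcoef hψ.1 x) ≤ 1 ^ 2 * h2NormSq (coeffOf x) := hb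
      _ = ‖x‖ ^ 2 := by rw [h2]; ring
  have hx : (0:ℝ) ≤ ‖x‖ := norm_nonneg _
  have hT : (0:ℝ) ≤ ‖TopM hψ.1 x‖ := norm_nonneg _
  nlinarith

lemma funOf_add (x y : H2S d) {z : Edim d} (hz : z ∈ ballD d) :
    funOf (x + y) z = funOf x z + funOf y z := by
  unfold funOf
  rw [coeffOf_add, ← Summable.tsum_add (eval_summable (summableH2_coeffOf x) hz)
    (eval_summable (summableH2_coeffOf y) hz)]
  refine tsum_congr fun α => ?_
  simp [add_mul]

lemma funOf_smul (c : ℂ) (x : H2S d) {z : Edim d} (hz : z ∈ ballD d) :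
    funOf (c • x) z = c * funOf x z := by
  unfold funOf
  rw [coeffOf_smul, ← tsum_mul_left]
  refine tsum_congr fun α => ?_
  simp [Pi.smul_apply, smul_eq_mul, mul_assoc]

lemma Top_add (hm : IsMultiplier ψ) (x y : H2S d) :
    TopM hm (x + y) = TopM hm x + TopM hm y := by
  have h1 : IsExpansion (fun z => ψ z * funOf (x + y) z) (Tcoef hm (x + y)) :=
    Tcoef_exp hm (x + y)
  have h2 : IsExpansion (fun z => ψ z * funOf (x + y) z)
      (Tcoef hm x + Tcoef hm y) := by
    intro z hz
    have := (Tcoef_exp hm x z hz).add (Tcoef_exp hm y z hz)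
    have heq : (fun α => Tcoef hm x α * mpow z α + Tcoef hm y α * mpow z α)
        = fun α => (Tcoef hm x + Tcoef hm y) α * mpow z α := by
      funext α; simp [add_mul]
    rw [heq] at this
    show HasSum (fun α => (Tcoef hm x + Tcoef hm y) α * mpow z α) (ψ z * funOf (x + y) z)
    rwa [funOf_add x y hz, mul_add]
  have hcoef : Tcoef hm (x + y) = Tcoef hm x + Tcoef hm y := expansion_unique h1 h2
  apply lp.ext
  show toH (Tcoef hm (x + y)) = _
  rw [hcoef]
  funext α
  unfold toH
  rw [lp.coeFn_add]
  show _ = toH (Tcoef hm x) α + toH (Tcoef hm y) α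
  unfold toH
  simp [add_mul]

lemma Top_smul (hm : IsMultiplier ψ) (c : ℂ) (x : H2S d) :
    TopM hm (c • x) = c • TopM hm x := by
  have h1 : IsExpansion (fun z => ψ z * funOf (c • x) z) (Tcoef hm (c • x)) :=
    Tcoef_exp hm (c • x)
  have h2 : IsExpansion (fun z => ψ z * funOf (c • x) z) (c • Tcoef hm x) := by
    intro z hz
    have := (Tcoef_exp hm x z hz).mul_left c
    have heq : (fun α => c * (Tcoef hm x α * mpow z α))
        = fun α => (c • Tcoef hm x) α * mpow z α := by
      funext α; simp [Pi.smul_apply, smul_eq_mul]; ring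
    rw [heq] at this
    show HasSum (fun α => (c • Tcoef hm x) α * mpow z α) (ψ z * funOf (c • x) z)
    rwa [funOf_smul c x hz, ← mul_assoc, mul_comm (ψ z) c, mul_assoc]
  have hcoef : Tcoef hm (c • x) = c • Tcoef hm x := expansion_unique h1 h2
  apply lp.ext
  show toH (Tcoef hm (c • x)) = _
  rw [hcoef]
  funext α
  unfold toH
  rw [lp.coeFn_smul]
  show _ = c • toH (Tcoef hm x) α
  unfold toH
  simp [Pi.smul_apply, smul_eq_mul]
  ring

/-- `T` as a continuous linear map of norm at most 1 -/
noncomputable def TL (hψ : MultNormLE ψ 1) : H2S d →L[ℂ] H2S d :=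
  LinearMap.mkContinuous
    { toFun := TopM hψ.1
      map_add' := Top_add hψ.1
      map_smul' := Top_smul hψ.1 } 1
    (fun x => by simpa using Top_norm_le hψ x)

lemma TL_apply (hψ : MultNormLE ψ 1) (x : H2S d) : TL hψ x = TopM hψ.1 x := rfl

lemma TL_norm_le (hψ : MultNormLE ψ 1) (x : H2S d) : ‖TL hψ x‖ ≤ ‖x‖ := by
  rw [TL_apply]; exact Top_norm_le hψ x

lemma isExpansion_TL (hψ : MultNormLE ψ 1) (x : H2S d) :
    IsExpansion (fun z => ψ z * funOf x z) (coeffOf (TL hψ x)) := by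
  rw [TL_apply]; exact isExpansion_Top hψ.1 x

end Chunk6
section Chunk7
variable {d : ℕ} {ψ : Edim d → ℂ}

def deltaCoef (d : ℕ) : (Fin d → ℕ) → ℂ := fun α => if α = 0 then 1 else 0

lemma summable_delta : SummableH2 (deltaCoef d) := by
  refine summable_of_ne_finset_zero (s := {(0 : Fin d → ℕ)}) fun α hα => ?_
  have : α ≠ 0 := by simpa using hα
  simp [deltaCoef, this]

lemma mpow_zero (z : Edim d) : mpow z 0 = 1 := by simp [mpow]

lemma isExpansion_one : IsExpansion (fun _ : Edim d => (1:ℂ)) (deltaCoef d) := by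
  intro z hz
  have heq : (fun α => deltaCoef d α * mpow z α)
      = fun α : Fin d → ℕ => if α = 0 then (1:ℂ) else 0 := by
    funext α
    by_cases h : α = 0
    · simp [deltaCoef, h, mpow_zero]
    · simp [deltaCoef, h]
  rw [heq]
  exact hasSum_ite_eq 0 1

lemma w2_zero : w2 (0 : Fin d → ℕ) = 1 := by
  simp [w2, msize]

lemma h2NormSq_delta : h2NormSq (deltaCoef d) = 1 := by
  unfold h2NormSq
  rw [tsum_eq_single (0 : Fin d → ℕ)]
  · simp [deltaCoef, w2_zero]
  · intro α hα
    simp [deltaCoef, hα]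

lemma xpow_norm_le (hψ : MultNormLE ψ 1) (n : ℕ) :
    ‖((TL hψ) ^ n) (mkH (deltaCoef d) summable_delta)‖ ≤ 1 := by
  induction n with
  | zero =>
    simp only [pow_zero, ContinuousLinearMap.one_apply]
    have h := norm_mkH (deltaCoef d) summable_delta
    rw [h2NormSq_delta] at h
    nlinarith [norm_nonneg (mkH (deltaCoef d) (summable_delta (d := d)))]
  | succ n IH =>
    rw [pow_succ']
    rw [ContinuousLinearMap.mul_apply]
    exact le_trans (TL_norm_le hψ _) IH

lemma isExpansion_psipow (hψ : MultNormLE ψ 1) (n : ℕ) :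
    IsExpansion (fun z => ψ z ^ n)
      (coeffOf (((TL hψ) ^ n) (mkH (deltaCoef d) summable_delta))) := by
  induction n with
  | zero =>
    simp only [pow_zero, ContinuousLinearMap.one_apply]
    rw [show coeffOf (mkH (deltaCoef d) summable_delta) = deltaCoef d from coeffOf_mk _ _]
    intro z hz
    simpa using isExpansion_one z hz
  | succ n IH =>
    rw [pow_succ', ContinuousLinearMap.mul_apply]
    intro z hz
    have h1 := isExpansion_TL hψ (((TL hψ) ^ n) (mkH (deltaCoef d) summable_delta)) z hz
    have h2 : funOf (((TL hψ) ^ n) (mkH (deltaCoef d) summable_delta)) z = ψ z ^ n :=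
      (IH z hz).tsum_eq
    have h1' := h1
    simp only [h2] at h1'
    simpa [pow_succ'] using h1'

lemma psi_pointwise_bound (hψ : MultNormLE ψ 1) : ∀ z ∈ ballD d, ‖ψ z‖ ≤ 1 := by
  intro z hz
  by_contra hgt
  push_neg at hgt
  have hb : ∀ n : ℕ, ‖ψ z‖ ^ n ≤ Real.sqrt (Kz z) := by
    intro n
    have hexp := isExpansion_psipow hψ n z hz
    have heval : ψ z ^ n = ∑' α,
        coeffOf (((TL hψ) ^ n) (mkH (deltaCoef d) summable_delta)) α * mpow z α :=
      (hexp).tsum_eq.symm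
    have hbound := eval_tsum_norm_le
      (summableH2_coeffOf (((TL hψ) ^ n) (mkH (deltaCoef d) summable_delta))) hz
    rw [← heval] at hbound
    rw [← norm_pow]
    refine le_trans hbound ?_
    refine Real.sqrt_le_sqrt ?_
    rw [h2NormSq_coeffOf]
    have h1 := xpow_norm_le hψ n
    have h2 := norm_nonneg (((TL hψ) ^ n) (mkH (deltaCoef d) summable_delta))
    have h3 := Kz_nonneg hz
    have h4 : ‖((TL hψ) ^ n) (mkH (deltaCoef d) summable_delta)‖ ^ 2 ≤ 1 := by nlinarith
    calc ‖((TL hψ) ^ n) (mkH (deltaCoef d) summable_delta)‖ ^ 2 * Kz z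
        ≤ 1 * Kz z := mul_le_mul_of_nonneg_right h4 h3
      _ = Kz z := one_mul _
  obtain ⟨n, hn⟩ := ((tendsto_pow_atTop_atTop_of_one_lt hgt).eventually
    (eventually_gt_atTop (Real.sqrt (Kz z)))).exists
  linarith [hb n]

end Chunk7
section Chunk8

lemma contraction_ineq {H : Type*} [NormedAddCommGroup H] [InnerProductSpace ℂ H]
    {u v : H} (hv : ‖v‖ ≤ ‖u‖) {r : ℝ} (hr0 : 0 < r) (hr1 : r < 1) :
    ‖u - v‖ ^ 2 ≤ (2 / (1 + r)) ^ 2 * ‖u - (r:ℂ) • v‖ ^ 2 := by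
  set n : ℝ := ‖u‖ with hn
  set s : ℝ := ‖v‖ with hs
  set t : ℝ := RCLike.re (inner ℂ u v : ℂ) with ht
  have h1 : ‖u - v‖ ^ 2 = n ^ 2 - 2 * t + s ^ 2 := norm_sub_sq (𝕜 := ℂ) u v
  have hre : RCLike.re (inner ℂ u ((r:ℂ) • v) : ℂ) = r * t := by
    rw [inner_smul_right]
    rw [ht]
    exact Complex.re_ofReal_mul r _
  have hnormsmul : ‖(r:ℂ) • v‖ = r * s := by
    rw [norm_smul, Complex.norm_real, Real.norm_eq_abs, abs_of_pos hr0, hs]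
  have h2 : ‖u - (r:ℂ) • v‖ ^ 2 = n ^ 2 - 2 * (r * t) + (r * s) ^ 2 := by
    have := norm_sub_sq (𝕜 := ℂ) u ((r:ℂ) • v)
    rw [hre, hnormsmul] at this
    exact this
  have habs : |t| ≤ n * s := by
    have h3 : ‖(inner ℂ u v : ℂ)‖ ≤ n * s := norm_inner_le_norm u v
    have h4 : |t| ≤ ‖(inner ℂ u v : ℂ)‖ := RCLike.abs_re_le_norm _
    linarith
  have hsnn : 0 ≤ s := norm_nonneg _
  have hnnn : 0 ≤ n := norm_nonneg _
  rw [h1, h2]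
  have hden : (0:ℝ) < (1 + r) ^ 2 := by positivity
  rw [div_pow, div_mul_eq_mul_div, le_div_iff₀ hden]
  have ht1 : -(n * s) ≤ t := neg_le_of_abs_le habs
  nlinarith [mul_nonneg (mul_nonneg (by linarith : (0:ℝ) ≤ 1 - r) (by linarith : (0:ℝ) ≤ n - s))
      (by nlinarith : (0:ℝ) ≤ (3 + r) * n + (3 * r + 1) * s),
    mul_nonneg (sq_nonneg (1 - r)) (by linarith : (0:ℝ) ≤ n * s + t)]

end Chunk8
section Chunk9
variable {d : ℕ} {ψ : Edim d → ℂ}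

lemma coeffOf_zero : coeffOf (0 : H2S d) = 0 := by
  funext α
  unfold coeffOf fromHfun
  rw [lp.coeFn_zero]
  simp

lemma TL_pow_norm_le (hψ : MultNormLE ψ 1) (n : ℕ) (x : H2S d) :
    ‖((TL hψ) ^ n) x‖ ≤ ‖x‖ := by
  induction n with
  | zero => simp
  | succ n IH =>
    rw [pow_succ', ContinuousLinearMap.mul_apply]
    exact le_trans (TL_norm_le hψ _) IH

lemma norm_rpsi_lt (hψ : MultNormLE ψ 1) {r : ℝ} (hr0 : 0 < r) (hr1 : r < 1)
    {z : Edim d} (hz : z ∈ ballD d) : ‖(r:ℂ) * ψ z‖ < 1 := by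
  rw [norm_mul, Complex.norm_real, Real.norm_eq_abs, abs_of_pos hr0]
  calc r * ‖ψ z‖ ≤ r * 1 :=
        mul_le_mul_of_nonneg_left (psi_pointwise_bound hψ z hz) hr0.le
    _ = r := mul_one r
    _ < 1 := hr1

lemma one_sub_rpsi_ne (hψ : MultNormLE ψ 1) {r : ℝ} (hr0 : 0 < r) (hr1 : r < 1)
    {z : Edim d} (hz : z ∈ ballD d) : (1 : ℂ) - (r:ℂ) * ψ z ≠ 0 := by
  intro h
  have h1 : (r:ℂ) * ψ z = 1 := by linear_combination -h
  have h2 : ‖(r:ℂ) * ψ z‖ = 1 := by rw [h1]; simp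
  have h3 := norm_rpsi_lt hψ hr0 hr1 hz
  rw [h2] at h3
  exact lt_irrefl _ h3

lemma mobius_key (hψ : MultNormLE ψ 1) {r : ℝ} (hr0 : 0 < r) (hr1 : r < 1)
    {f : Edim d → ℂ} {a : (Fin d → ℕ) → ℂ} (hexp : IsExpansion f a) (ha : SummableH2 a) :
    ∃ c, IsExpansion (fun z => (1 - ψ z) / (1 - (r:ℂ) * ψ z) * f z) c ∧ SummableH2 c ∧
      h2NormSq c ≤ (2 / (1 + r)) ^ 2 * h2NormSq a := by
  classical
  set x : H2S d := mkH a ha with hx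
  set T := TL hψ with hT
  set u : ℕ → H2S d := fun n => (r:ℂ) ^ n • (T ^ n) x with hu
  have hu_norm : ∀ n, ‖u n‖ ≤ r ^ n * ‖x‖ := by
    intro n
    simp only [hu]
    rw [norm_smul]
    have hn : ‖((r:ℂ)) ^ n‖ = r ^ n := by
      rw [norm_pow, Complex.norm_real, Real.norm_eq_abs, abs_of_pos hr0]
    rw [hn]
    exact mul_le_mul_of_nonneg_left (TL_pow_norm_le hψ n x) (by positivity)
  have hsum_u : Summable u := by
    refine Summable.of_norm_bounded (g := fun n => r ^ n * ‖x‖) ?_ hu_norm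
    exact (summable_geometric_of_lt_one hr0.le hr1).mul_right _
  set xinf : H2S d := ∑' n, u n with hxinf
  set L : H2S d →L[ℂ] H2S d := (r : ℂ) • T with hL
  have hu0 : u 0 = x := by simp only [hu]; simp
  have hLu : ∀ n, L (u n) = u (n + 1) := by
    intro n
    simp only [hL, hu]
    rw [ContinuousLinearMap.smul_apply, map_smul, smul_smul, ← pow_succ']
    rw [pow_succ' T n, ContinuousLinearMap.mul_apply]
  have hkey1 : xinf - (r:ℂ) • T xinf = x := by
    have h1 : L xinf = ∑' n, L (u n) := L.map_tsum hsum_u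
    have h2 : L xinf = ∑' n, u (n + 1) := by rw [h1]; exact tsum_congr hLu
    have h3 : xinf = u 0 + ∑' n, u (n + 1) := Summable.tsum_eq_zero_add hsum_u
    have h4 : L xinf = (r:ℂ) • T xinf := by rw [hL]; rfl
    rw [← h4, h2, h3, hu0]
    abel
  have hexp_u : ∀ n, IsExpansion (fun z => ((r:ℂ) * ψ z) ^ n * f z) (coeffOf (u n)) := by
    intro n
    induction n with
    | zero =>
      intro z hz
      rw [hu0, hx, coeffOf_mk]
      simpa using hexp z hz
    | succ n IH =>
      intro z hz
      have hun : u (n+1) = (r:ℂ) • T (u n) := by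
        rw [← hLu n, hL]; rfl
      have hTexp := isExpansion_TL hψ (u n) z hz
      have hfun : funOf (u n) z = ((r:ℂ) * ψ z) ^ n * f z := (IH z hz).tsum_eq
      have hco : coeffOf (u (n+1)) = (r:ℂ) • coeffOf (T (u n)) := by
        rw [hun, coeffOf_smul]
      rw [hco]
      have hms := hTexp.mul_left (r:ℂ)
      have heq : (fun α => (r:ℂ) * (coeffOf (T (u n)) α * mpow z α))
          = fun α => ((r:ℂ) • coeffOf (T (u n))) α * mpow z α := by
        funext α; simp only [Pi.smul_apply, smul_eq_mul]; ring
      rw [heq] at hms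
      have hval : (r:ℂ) * ((fun z => ψ z * funOf (u n) z) z) = ((r:ℂ) * ψ z) ^ (n+1) * f z := by
        simp only
        rw [hfun]; ring
      rwa [hval] at hms
  set sN : ℕ → H2S d := fun N => ∑ n ∈ Finset.range N, u n with hsN
  have hcoeff_sum : ∀ N, coeffOf (sN N) = ∑ n ∈ Finset.range N, coeffOf (u n) := by
    intro N
    induction N with
    | zero => simp only [hsN, Finset.range_zero, Finset.sum_empty]; exact coeffOf_zero
    | succ N IH =>
      simp only [hsN, Finset.sum_range_succ] at *
      rw [coeffOf_add, IH]
  have hexp_sN : ∀ N, IsExpansion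
      (fun z => (∑ n ∈ Finset.range N, ((r:ℂ) * ψ z) ^ n) * f z) (coeffOf (sN N)) := by
    intro N z hz
    rw [hcoeff_sum N]
    have hterm : ∀ n ∈ Finset.range N, HasSum (fun α => coeffOf (u n) α * mpow z α)
        (((r:ℂ) * ψ z) ^ n * f z) := fun n _ => hexp_u n z hz
    have hss := hasSum_sum hterm
    have heq : (fun α => ∑ n ∈ Finset.range N, coeffOf (u n) α * mpow z α)
        = fun α => (∑ n ∈ Finset.range N, coeffOf (u n)) α * mpow z α := by
      funext α
      rw [Finset.sum_apply, Finset.sum_mul]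
    rw [heq] at hss
    have hval : (∑ n ∈ Finset.range N, ((r:ℂ)*ψ z)^n * f z)
        = (∑ n ∈ Finset.range N, ((r:ℂ)*ψ z)^n) * f z := (Finset.sum_mul _ _ _).symm
    rwa [hval] at hss
  have hG : ∀ z ∈ ballD d, funOf xinf z = (1 - (r:ℂ) * ψ z)⁻¹ * f z := by
    intro z hz
    have htendH : Filter.Tendsto sN Filter.atTop (nhds xinf) :=
      hsum_u.hasSum.tendsto_sum_nat
    have htend0 : Filter.Tendsto (fun N => ‖sN N - xinf‖) Filter.atTop (nhds 0) := by
      have h1 : Filter.Tendsto (fun N => sN N - xinf) Filter.atTop (nhds (xinf - xinf)) :=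
        htendH.sub tendsto_const_nhds
      rw [sub_self] at h1
      simpa using h1.norm
    have hbound : ∀ N, ‖funOf (sN N) z - funOf xinf z‖ ≤ ‖sN N - xinf‖ * Real.sqrt (Kz z) := by
      intro N
      refine le_trans (funOf_eval_diff _ _ hz) ?_
      rw [Real.sqrt_mul (sq_nonneg _), Real.sqrt_sq (norm_nonneg _)]
    have htendf0 : Filter.Tendsto (fun N => funOf (sN N) z - funOf xinf z)
        Filter.atTop (nhds 0) := by
      refine squeeze_zero_norm hbound ?_
      have := htend0.mul_const (Real.sqrt (Kz z))
      simpa using this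
    have htendf : Filter.Tendsto (fun N => funOf (sN N) z) Filter.atTop (nhds (funOf xinf z)) := by
      have := htendf0.add_const (funOf xinf z)
      simpa using this
    have hvals : ∀ N, funOf (sN N) z = (∑ n ∈ Finset.range N, ((r:ℂ)*ψ z)^n) * f z :=
      fun N => (hexp_sN N z hz).tsum_eq
    have htendg : Filter.Tendsto (fun N => (∑ n ∈ Finset.range N, ((r:ℂ)*ψ z)^n) * f z)
        Filter.atTop (nhds ((1 - (r:ℂ)*ψ z)⁻¹ * f z)) := by
      have hgeo := (hasSum_geometric_of_norm_lt_one (norm_rpsi_lt hψ hr0 hr1 hz)).tendsto_sum_nat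
      exact hgeo.mul_const (f z)
    refine tendsto_nhds_unique ?_ htendg
    exact htendf.congr hvals
  have hexp_xinf : IsExpansion (fun z => (1 - (r:ℂ) * ψ z)⁻¹ * f z) (coeffOf xinf) := by
    intro z hz
    have hS := (eval_summable (summableH2_coeffOf xinf) hz).hasSum
    rw [show (∑' α, coeffOf xinf α * mpow z α) = funOf xinf z from rfl, hG z hz] at hS
    exact hS
  refine ⟨coeffOf (xinf - T xinf), ?_, summableH2_coeffOf _, ?_⟩
  · intro z hz
    have h1 := hexp_xinf z hz
    have h2 := isExpansion_TL hψ xinf z hz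
    have h3 := h1.sub h2
    have heq : (fun α => coeffOf xinf α * mpow z α - coeffOf (T xinf) α * mpow z α)
        = fun α => coeffOf (xinf - T xinf) α * mpow z α := by
      funext α; rw [coeffOf_sub]; simp [sub_mul]
    rw [heq] at h3
    have hval : (fun z => (1 - (r:ℂ) * ψ z)⁻¹ * f z) z - (fun z => ψ z * funOf xinf z) z
        = (1 - ψ z) / (1 - (r:ℂ)*ψ z) * f z := by
      simp only
      rw [hG z hz]
      have hne := one_sub_rpsi_ne hψ hr0 hr1 hz
      field_simp
    rwa [hval] at h3
  · have hv : ‖T xinf‖ ≤ ‖xinf‖ := TL_norm_le hψ xinf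
    have hc := contraction_ineq hv hr0 hr1
    calc h2NormSq (coeffOf (xinf - T xinf)) = ‖xinf - T xinf‖ ^ 2 := h2NormSq_coeffOf _
      _ ≤ (2/(1+r))^2 * ‖xinf - (r:ℂ) • T xinf‖^2 := hc
      _ = (2/(1+r))^2 * h2NormSq a := by rw [hkey1, hx, norm_mkH]

end Chunk9
/-- if `‖ψ‖_Mult ≤ 1` then `|ψ| ≤ 1` on the ball and
`(1−ψ)/(1−rψ)` is a multiplier of norm at most `2/(1+r)`. -/
theorem stmt_8 (d : ℕ) (hd : 1 ≤ d) (ψ : Edim d → ℂ) (hψ : MultNormLE ψ 1) :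
    (∀ z ∈ ballD d, ‖ψ z‖ ≤ 1) ∧
    ∀ r ∈ Set.Ioo (0:ℝ) 1,
      MultNormLE (fun z => (1 - ψ z) / (1 - (r:ℂ) * ψ z)) (2 / (1 + r)) := by
  refine ⟨psi_pointwise_bound hψ, ?_⟩
  rintro r ⟨hr0, hr1⟩
  constructor
  · constructor
    · have hden : ∀ z ∈ ballD d, (1:ℂ) - (r:ℂ) * ψ z ≠ 0 :=
        fun z hz => one_sub_rpsi_ne hψ hr0 hr1 hz
      have hψd := hψ.1.1
      have h1 : DifferentiableOn ℂ (fun _ : Edim d => (1:ℂ)) (ballD d) :=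
        differentiableOn_const _
      have hr' : DifferentiableOn ℂ (fun _ : Edim d => ((r:ℂ))) (ballD d) :=
        differentiableOn_const _
      have h2 : DifferentiableOn ℂ (fun z => (1 - ψ z) * ((1:ℂ) - (r:ℂ) * ψ z)⁻¹)
          (ballD d) := (h1.sub hψd).mul ((h1.sub (hr'.mul hψd)).inv hden)
      exact h2.congr fun z _ => div_eq_mul_inv _ _
    · intro f hf
      obtain ⟨a, hexp, ha⟩ := hf
      obtain ⟨c, hcexp, hcsum, -⟩ := mobius_key hψ hr0 hr1 hexp ha
      exact ⟨c, hcexp, hcsum⟩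
  · intro f a c hexp ha hc
    obtain ⟨c', hcexp', hcsum', hbound⟩ := mobius_key hψ hr0 hr1 hexp ha
    have hc2 : IsExpansion (fun z => (1 - ψ z) / (1 - (r:ℂ) * ψ z) * f z) c := hc
    have hcc : c = c' := expansion_unique hc2 hcexp'
    rw [hcc]
    exact hbound
end
end

section
/- Let d ≥ 1, let f be holomorphic on B_d with Taylor expansion f(z) = ∑_{α∈ℕ^d} f̂(α) z^α and homogeneous expansion f = ∑_{n=0}^∞ f_n where f_n(z) = ∑_{|α|=n} f̂(α) z^α, and set M(r,f) = sup_{|z|=r} |f(z)| for 0 ≤ r < 1. The following are equivalent: (i) for every c > 0 there exists C ≥ 0 such that M(r,f) ≤ C·e^{c/(1−r)} for all r ∈ (0,1); (ii) for every c > 0 there exists C ≥ 0 such that sup_{z∈B_d}|f_n(z)| ≤ C·e^{c·√n} for all n ∈ ℕ; (iii) for every c > 0 there exists C ≥ 0 such that ‖f_n‖_{H²_d} ≤ C·e^{c·√n} for all n ∈ ℕ; (iv) for every c > 0 there exists C ≥ 0 such that |f̂(α)|·ω_α ≤ C·e^{c·√|α|} for all α ∈ ℕ^d. -/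
open Metric Filter Finset
open scoped BigOperators Real Topology

noncomputable section

namespace Stmt18

open Metric Filter Finset

/-- multi-indices of total degree `n` -/
def Dset (d n : ℕ) : Finset (Fin d → ℕ) := Finset.piAntidiag Finset.univ n

lemma mem_Dset {d n : ℕ} {α : Fin d → ℕ} : α ∈ Dset d n ↔ msize α = n := by
  simp [Dset, Finset.mem_piAntidiag, msize]

lemma card_Dset_le (d n : ℕ) : (Dset d n).card ≤ (n + 1) ^ d := by
  have h : Dset d n ⊆ Fintype.piFinset (fun _ : Fin d => Finset.range (n + 1)) := by
    intro α hα
    rw [mem_Dset] at hα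
    rw [Fintype.mem_piFinset]
    intro i
    rw [Finset.mem_range, Nat.lt_succ_iff, ← hα]
    exact Finset.single_le_sum (f := α) (fun j _ => Nat.zero_le _) (Finset.mem_univ i)
  calc (Dset d n).card ≤ _ := Finset.card_le_card h
    _ = (n+1)^d := by simp [Fintype.card_piFinset]

lemma homPart_eq_sum {d : ℕ} (a : (Fin d → ℕ) → ℂ) (n : ℕ) (z : Edim d) :
    homPart a n z = ∑ α ∈ Dset d n, a α * mpow z α := by
  rw [homPart, tsum_eq_sum (s := Dset d n)
    (fun α hα => if_neg (fun h => hα (mem_Dset.2 h)))]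
  exact Finset.sum_congr rfl fun α hα => if_pos (mem_Dset.1 hα)

lemma homNormSq_eq_sum {d : ℕ} (a : (Fin d → ℕ) → ℂ) (n : ℕ) :
    homNormSq a n = ∑ α ∈ Dset d n, ‖a α‖ ^ 2 * w2 α := by
  rw [homNormSq, tsum_eq_sum (s := Dset d n)
    (fun α hα => if_neg (fun h => hα (mem_Dset.2 h)))]
  exact Finset.sum_congr rfl fun α hα => if_pos (mem_Dset.1 hα)

lemma hasSum_msize_fiber {d : ℕ} {g : (Fin d → ℕ) → ℂ} {S : ℂ} (h : HasSum g S) :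
    HasSum (fun n => ∑ α ∈ Dset d n, g α) S := by
  have h2 : HasSum (g ∘ (Equiv.sigmaFiberEquiv (msize (d := d)))) S :=
    (Equiv.hasSum_iff _).2 h
  refine HasSum.sigma h2 fun n => ?_
  haveI : Fintype {α : Fin d → ℕ // msize α = n} :=
    Fintype.ofFinset (Dset d n) (fun α => mem_Dset)
  have := hasSum_fintype (fun c : {α : Fin d → ℕ // msize α = n} => g c.1)
  convert this using 1
  · rfl
  exact Finset.sum_subtype (Dset d n) (fun α => mem_Dset) g

lemma mpow_smul {d : ℕ} (c : ℂ) (z : Edim d) (α : Fin d → ℕ) :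
    mpow (c • z) α = c ^ msize α * mpow z α := by
  unfold mpow msize
  rw [← Finset.prod_pow_eq_pow_sum, ← Finset.prod_mul_distrib]
  refine Finset.prod_congr rfl fun i _ => ?_
  have : (c • z) i = c * z i := rfl
  rw [this, mul_pow]

lemma norm_coord_le {d : ℕ} (z : Edim d) (i : Fin d) : ‖z i‖ ≤ ‖z‖ := by
  have h := EuclideanSpace.norm_eq z
  have h2 : ‖z i‖^2 ≤ ∑ j, ‖z j‖^2 :=
    Finset.single_le_sum (f := fun j => ‖z j‖^2) (fun j _ => sq_nonneg _) (Finset.mem_univ i)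
  have := Real.sqrt_le_sqrt h2
  rwa [Real.sqrt_sq (norm_nonneg _), ← h] at this

lemma norm_mpow_le {d : ℕ} {z : Edim d} (hz : ‖z‖ ≤ 1) (α : Fin d → ℕ) :
    ‖mpow z α‖ ≤ 1 := by
  rw [mpow]
  calc ‖∏ i, z i ^ α i‖ ≤ ∏ i, ‖z i ^ α i‖ := norm_prod_le _ _
    _ ≤ ∏ i, 1 := by
        refine Finset.prod_le_prod (fun i _ => norm_nonneg _) fun i _ => ?_
        rw [norm_pow]
        exact pow_le_one₀ (norm_nonneg _) ((norm_coord_le z i).trans hz)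
    _ = 1 := Finset.prod_const_one

end Stmt18
namespace Stmt18
open Finset Nat

lemma fact_le_pow_mul (b k : ℕ) : (b + k)! ≤ (b + k) ^ k * b ! := by
  induction k with
  | zero => simp
  | succ k ih =>
      have h1 : (b + (k+1))! = (b + k + 1) * (b + k)! := by
        rw [← Nat.add_assoc]; exact Nat.factorial_succ _
      rw [h1]
      calc (b + k + 1) * (b + k)! ≤ (b + k + 1) * ((b + k) ^ k * b !) :=
            Nat.mul_le_mul_left _ ih
        _ ≤ (b + (k+1)) * ((b + (k+1)) ^ k * b !) := by
            have h2 : b + k + 1 = b + (k + 1) := by omega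
            rw [h2]
            exact Nat.mul_le_mul_left _ (Nat.mul_le_mul_right _
              (Nat.pow_le_pow_left (by omega) k))
        _ = (b + (k+1)) ^ (k+1) * b ! := by ring

lemma pois (a b : ℕ) : a ^ b * a ! ≤ a ^ a * b ! := by
  rcases Nat.le_total b a with h | h
  · obtain ⟨k, rfl⟩ := Nat.exists_eq_add_of_le h
    calc (b+k) ^ b * (b + k)! ≤ (b+k) ^ b * ((b+k) ^ k * b !) :=
          Nat.mul_le_mul_left _ (fact_le_pow_mul b k)
      _ = (b+k) ^ (b + k) * b ! := by ring
  · obtain ⟨k, rfl⟩ := Nat.exists_eq_add_of_le h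
    calc a ^ (a + k) * a ! = a ^ k * (a ! * a ^ a) := by ring
      _ ≤ (a+1) ^ k * (a ! * a ^ a) := Nat.mul_le_mul_right _ (Nat.pow_le_pow_left (by omega) k)
      _ = a ^ a * (a ! * (a+1) ^ k) := by ring
      _ ≤ a ^ a * (a + k)! := Nat.mul_le_mul_left _ Nat.factorial_mul_pow_le_factorial

lemma key_comb {d n : ℕ} {α : Fin d → ℕ} (hα : msize α = n) :
    (∏ i, (α i)!) * n ^ n ≤ (n + 1) ^ d * (n ! * ∏ i, α i ^ α i) := by
  have hmult := Nat.multinomial_spec Finset.univ α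
  rw [← msize, hα] at hmult
  -- multinomial theorem
  have hthm : n ^ n = ∑ β ∈ Dset d n, Nat.multinomial Finset.univ β * ∏ i, α i ^ β i := by
    have := Finset.sum_pow_eq_sum_piAntidiag (R := ℕ) Finset.univ α n
    rw [← msize, hα] at this
    exact this
  -- mode bound per term (after multiplying by positive factorials)
  have hmode : ∀ β ∈ Dset d n,
      Nat.multinomial Finset.univ β * ∏ i, α i ^ β i ≤
      Nat.multinomial Finset.univ α * ∏ i, α i ^ α i := by
    intro β hβ
    have hβ' := mem_Dset.1 hβ
    have hmultβ := Nat.multinomial_spec Finset.univ β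
    rw [← msize, hβ'] at hmultβ
    have hpos : 0 < (∏ i, (β i)!) * ∏ i, (α i)! :=
      Nat.mul_pos (Finset.prod_pos fun i _ => Nat.factorial_pos _)
        (Finset.prod_pos fun i _ => Nat.factorial_pos _)
    refine Nat.le_of_mul_le_mul_right ?_ hpos
    have lhs_eq : Nat.multinomial Finset.univ β * (∏ i, α i ^ β i) *
        ((∏ i, (β i)!) * ∏ i, (α i)!) =
        n ! * ∏ i, (α i ^ β i * (α i)!) := by
      rw [Finset.prod_mul_distrib]
      calc Nat.multinomial Finset.univ β * (∏ i, α i ^ β i) *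
          ((∏ i, (β i)!) * ∏ i, (α i)!)
          = ((∏ i, (β i)!) * Nat.multinomial Finset.univ β) *
            ((∏ i, α i ^ β i) * ∏ i, (α i)!) := by ring
        _ = n ! * ((∏ i, α i ^ β i) * ∏ i, (α i)!) := by rw [hmultβ]
    have rhs_eq : Nat.multinomial Finset.univ α * (∏ i, α i ^ α i) *
        ((∏ i, (β i)!) * ∏ i, (α i)!) =
        n ! * ∏ i, (α i ^ α i * (β i)!) := by
      rw [Finset.prod_mul_distrib]
      calc Nat.multinomial Finset.univ α * (∏ i, α i ^ α i) *
          ((∏ i, (β i)!) * ∏ i, (α i)!)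
          = ((∏ i, (α i)!) * Nat.multinomial Finset.univ α) *
            ((∏ i, α i ^ α i) * ∏ i, (β i)!) := by ring
        _ = n ! * ((∏ i, α i ^ α i) * ∏ i, (β i)!) := by rw [hmult]
    rw [lhs_eq, rhs_eq]
    exact Nat.mul_le_mul_left _ (Finset.prod_le_prod' fun i _ => pois (α i) (β i))
  have hsum : n ^ n ≤ (n + 1) ^ d * (Nat.multinomial Finset.univ α * ∏ i, α i ^ α i) := by
    rw [hthm]
    calc ∑ β ∈ Dset d n, Nat.multinomial Finset.univ β * ∏ i, α i ^ β i
        ≤ ∑ _β ∈ Dset d n, Nat.multinomial Finset.univ α * ∏ i, α i ^ α i :=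
          Finset.sum_le_sum hmode
      _ = (Dset d n).card * (Nat.multinomial Finset.univ α * ∏ i, α i ^ α i) := by
          rw [Finset.sum_const, smul_eq_mul]
      _ ≤ (n + 1) ^ d * (Nat.multinomial Finset.univ α * ∏ i, α i ^ α i) :=
          Nat.mul_le_mul_right _ (card_Dset_le d n)
  calc (∏ i, (α i)!) * n ^ n
      ≤ (∏ i, (α i)!) * ((n + 1) ^ d * (Nat.multinomial Finset.univ α * ∏ i, α i ^ α i)) :=
        Nat.mul_le_mul_left _ hsum
    _ = (n + 1) ^ d * (((∏ i, (α i)!) * Nat.multinomial Finset.univ α) * ∏ i, α i ^ α i) := by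
        ring
    _ = (n + 1) ^ d * (n ! * ∏ i, α i ^ α i) := by rw [hmult]

lemma w2_pos {d : ℕ} (α : Fin d → ℕ) : 0 < w2 α := by
  unfold w2
  positivity

end Stmt18
namespace Stmt18
open Metric Filter Finset

lemma le_limit_aux {A B : ℝ} (m : ℕ) (h : ∀ x : ℝ, x ∈ Set.Ioo (0:ℝ) 1 → A * x ^ m ≤ B) :
    A ≤ B := by
  have hne : (nhdsWithin (1:ℝ) (Set.Ioo (0:ℝ) 1)).NeBot := by
    apply mem_closure_iff_nhdsWithin_neBot.1
    rw [closure_Ioo (by norm_num : (0:ℝ) ≠ 1)]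
    exact Set.right_mem_Icc.2 (by norm_num)
  have ht : Tendsto (fun x : ℝ => A * x ^ m) (nhdsWithin 1 (Set.Ioo 0 1))
      (nhds (A * 1 ^ m)) :=
    ((continuous_const.mul (continuous_pow m)).tendsto 1).mono_left nhdsWithin_le_nhds
  have := le_of_tendsto ht (eventually_nhdsWithin_of_forall h)
  simpa using this

lemma polybound (D : ℕ) {c : ℝ} (hc : 0 < c) :
    ∃ K : ℝ, 0 ≤ K ∧ ∀ n : ℕ, ((n:ℝ) + 1) ^ D ≤ K * Real.exp (c * Real.sqrt n) := by
  set K : ℝ := (2:ℝ)^D * (Nat.factorial (2*D) : ℝ) / c^(2*D) + 1 with hK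
  have hK0 : 0 ≤ K := by positivity
  refine ⟨K, hK0, fun n => ?_⟩
  have hexp1 : (1:ℝ) ≤ Real.exp (c * Real.sqrt n) := by
    rw [Real.one_le_exp_iff]
    positivity
  rcases Nat.eq_zero_or_pos n with rfl | hn
  · have h1K : (1:ℝ) ≤ K := by
      rw [hK]
      have : (0:ℝ) ≤ (2:ℝ)^D * (Nat.factorial (2*D) : ℝ) / c^(2*D) := by positivity
      linarith
    simpa using le_trans h1K (le_mul_of_one_le_right hK0 hexp1)
  · have hn1 : (1:ℝ) ≤ (n:ℝ) := by exact_mod_cast hn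
    have h1 : ((n:ℝ) + 1) ^ D ≤ (2:ℝ)^D * (n:ℝ)^D := by
      rw [← mul_pow]
      exact pow_le_pow_left₀ (by positivity) (by linarith) D
    have h2 : c^(2*D) * (n:ℝ)^D / (Nat.factorial (2*D) : ℝ) ≤ Real.exp (c * Real.sqrt n) := by
      have := Real.pow_div_factorial_le_exp (x := c * Real.sqrt n) (by positivity) (2*D)
      calc c^(2*D) * (n:ℝ)^D / (Nat.factorial (2*D) : ℝ)
          = (c * Real.sqrt n) ^ (2*D) / (Nat.factorial (2*D) : ℝ) := by
            rw [mul_pow]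
            congr 2
            rw [pow_mul, Real.sq_sqrt (by positivity : (0:ℝ) ≤ (n:ℝ))]
        _ ≤ _ := this
    have hfac : (0:ℝ) < (Nat.factorial (2*D) : ℝ) := by exact_mod_cast Nat.factorial_pos (2*D)
    calc ((n:ℝ) + 1) ^ D ≤ (2:ℝ)^D * (n:ℝ)^D := h1
      _ = ((2:ℝ)^D * (Nat.factorial (2*D) : ℝ) / c^(2*D)) * (c^(2*D) * (n:ℝ)^D / (Nat.factorial (2*D) : ℝ)) := by
          field_simp
      _ ≤ ((2:ℝ)^D * (Nat.factorial (2*D) : ℝ) / c^(2*D)) * Real.exp (c * Real.sqrt n) := by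
          exact mul_le_mul_of_nonneg_left h2 (by positivity)
      _ ≤ K * Real.exp (c * Real.sqrt n) := by
          refine mul_le_mul_of_nonneg_right ?_ (Real.exp_nonneg _)
          rw [hK]
          linarith

/-- Cauchy coefficient estimate for a series convergent on the closed unit disk. -/
lemma coeff_bound {F : ℂ → ℂ} {co : ℕ → ℂ} {M ρ : ℝ}
    (hsum : ∀ lam : ℂ, ‖lam‖ ≤ 1 → HasSum (fun n => co n * lam ^ n) (F lam))
    (hρ : ρ ∈ Set.Ioo (0:ℝ) 1)
    (hM : ∀ lam : ℂ, ‖lam‖ = ρ → ‖F lam‖ ≤ M) (n : ℕ) :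
    ‖co n‖ * ρ ^ n ≤ M := by
  obtain ⟨hρ0, hρ1⟩ := hρ
  -- the formal power series
  set q : FormalMultilinearSeries ℂ ℂ ℂ :=
    fun n => ContinuousMultilinearMap.mkPiRing ℂ (Fin n) (co n) with hqdef
  have hqn : ∀ m, ‖q m‖ = ‖co m‖ := fun m => ContinuousMultilinearMap.norm_mkPiRing _
  -- summability at 1 gives boundedness of coefficients
  have hsum1 : Summable co := by
    have := (hsum 1 (by norm_num)).summable
    simpa using this
  have hb : BddAbove (Set.range fun m => ‖co m‖) := by
    have : Tendsto (fun m => ‖co m‖) atTop (nhds 0) := by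
      simpa using hsum1.tendsto_atTop_zero.norm
    simpa using this.bddAbove_range
  obtain ⟨C, hC⟩ := hb
  have hrad : (1 : ENNReal) ≤ q.radius := by
    refine FormalMultilinearSeries.le_radius_of_bound q C fun m => ?_
    rw [hqn]
    simpa using hC (Set.mem_range_self m)
  have hq : HasFPowerSeriesOnBall F q 0 1 := by
    refine ⟨hrad, by norm_num, ?_⟩
    intro y hy
    rw [mem_emetric_ball_zero_iff] at hy
    have hy1 : ‖y‖ ≤ 1 := by
      have : ‖y‖₊ < 1 := by simpa [enorm_eq_nnnorm] using hy
      exact le_of_lt this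
    have := hsum y hy1
    rw [zero_add]
    convert this using 2 with m
    case e'_3 => rfl
    simp [hqdef, ContinuousMultilinearMap.mkPiRing_apply, smul_eq_mul, mul_comm]
  -- differentiability and Cauchy power series at radius ρ
  lift ρ to NNReal using hρ0.le with ρ' hρ'
  have hdiff : DifferentiableOn ℂ F (closedBall (0:ℂ) ρ') := by
    refine (hq.differentiableOn).mono ?_
    intro y hy
    rw [mem_closedBall_zero_iff] at hy
    rw [mem_emetric_ball_zero_iff]
    have : ‖y‖₊ < 1 := by
      have : ‖y‖ < 1 := lt_of_le_of_lt hy hρ1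
      exact_mod_cast this
    simpa [enorm_eq_nnnorm] using this
  have hρ'0 : 0 < ρ' := by exact_mod_cast hρ0
  have hc : HasFPowerSeriesOnBall F (cauchyPowerSeries F 0 ρ') 0 ρ' :=
    DifferentiableOn.hasFPowerSeriesOnBall hdiff hρ'0
  have huniq : q = cauchyPowerSeries F 0 ρ' :=
    hq.hasFPowerSeriesAt.eq_formalMultilinearSeries hc.hasFPowerSeriesAt
  -- the integral bound
  have hcont : Continuous fun θ : ℝ => ‖F (circleMap 0 ρ' θ)‖ := by
    refine Continuous.norm ?_
    refine ContinuousOn.comp_continuous hq.continuousOn (continuous_circleMap 0 ρ') fun θ => ?_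
    rw [mem_emetric_ball_zero_iff]
    have hlt : ‖circleMap 0 ρ' θ‖ < 1 := by
      rw [norm_circleMap_zero, abs_of_pos hρ0]
      exact hρ1
    have h2 : ‖circleMap 0 ρ' θ‖₊ < 1 := by exact_mod_cast hlt
    simpa [enorm_eq_nnnorm] using h2
  have hnormcm : ∀ θ : ℝ, ‖F (circleMap 0 ρ' θ)‖ ≤ M := by
    intro θ
    refine hM _ ?_
    rw [norm_circleMap_zero, abs_of_pos hρ0]
  have hint : (∫ θ : ℝ in (0)..(2 * Real.pi), ‖F (circleMap 0 ρ' θ)‖) ≤ 2 * Real.pi * M := by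
    have h1 : (∫ θ : ℝ in (0)..(2 * Real.pi), ‖F (circleMap 0 ρ' θ)‖) ≤
        ∫ _θ : ℝ in (0)..(2 * Real.pi), M := by
      refine intervalIntegral.integral_mono_on Real.two_pi_pos.le ?_
        intervalIntegrable_const (fun θ _ => hnormcm θ)
      exact hcont.intervalIntegrable _ _
    simpa using h1
  have hM0 : 0 ≤ M := le_trans (norm_nonneg _) (hnormcm 0)
  have hbound := norm_cauchyPowerSeries_le F 0 ρ' n
  rw [← huniq, hqn] at hbound
  have habs : |(ρ' : ℝ)| = (ρ' : ℝ) := abs_of_pos hρ0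
  rw [habs] at hbound
  have hfin : ‖co n‖ ≤ ((2 * Real.pi)⁻¹ * (2 * Real.pi * M)) * ((ρ':ℝ)⁻¹) ^ n := by
    refine le_trans hbound ?_
    refine mul_le_mul_of_nonneg_right ?_ (by positivity)
    exact mul_le_mul_of_nonneg_left hint (by positivity)
  have hsimp : (2 * Real.pi)⁻¹ * (2 * Real.pi * M) = M := by
    field_simp
  rw [hsimp] at hfin
  calc ‖co n‖ * (ρ':ℝ) ^ n ≤ (M * ((ρ':ℝ)⁻¹) ^ n) * (ρ':ℝ) ^ n :=
        mul_le_mul_of_nonneg_right hfin (by positivity)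
    _ = M := by
        rw [mul_assoc, ← mul_pow, inv_mul_cancel₀ (ne_of_gt hρ0), one_pow, mul_one]

end Stmt18
namespace Stmt18
open Metric Filter Finset

lemma mem_ballD_iff {d : ℕ} {z : Edim d} : z ∈ ballD d ↔ ‖z‖ < 1 := by
  simp [ballD, mem_ball_zero_iff]

lemma hasSum_slice {d : ℕ} {f : Edim d → ℂ} {a : (Fin d → ℕ) → ℂ}
    (hfa : IsExpansion f a) {z : Edim d} (hz : z ∈ ballD d)
    {lam : ℂ} (hlam : ‖lam‖ ≤ 1) :
    HasSum (fun n => homPart a n z * lam ^ n) (f (lam • z)) := by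
  have hz1 : ‖z‖ < 1 := mem_ballD_iff.1 hz
  have hzz : lam • z ∈ ballD d := by
    rw [mem_ballD_iff, norm_smul]
    calc ‖lam‖ * ‖z‖ ≤ 1 * ‖z‖ := mul_le_mul_of_nonneg_right hlam (norm_nonneg z)
      _ = ‖z‖ := one_mul _
      _ < 1 := hz1
  have h := hfa _ hzz
  have h2 : (fun α : Fin d → ℕ => a α * mpow (lam • z) α) =
      (fun α : Fin d → ℕ => a α * mpow z α * lam ^ msize α) := by
    funext α; rw [mpow_smul]; ring
  rw [h2] at h
  have h3 := hasSum_msize_fiber h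
  convert h3 using 2 with n
  rw [homPart_eq_sum, Finset.sum_mul]
  exact Finset.sum_congr rfl fun α hα => by rw [mem_Dset.1 hα]

lemma hasSum_homParts {d : ℕ} {f : Edim d → ℂ} {a : (Fin d → ℕ) → ℂ}
    (hfa : IsExpansion f a) {z : Edim d} (hz : z ∈ ballD d) :
    HasSum (fun n => homPart a n z) (f z) := by
  have := hasSum_slice hfa hz (lam := 1) (by norm_num)
  simpa using this

lemma homPart_bound_crude {d : ℕ} (a : (Fin d → ℕ) → ℂ) (n : ℕ) {z : Edim d}
    (hz : z ∈ ballD d) :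
    ‖homPart a n z‖ ≤ ∑ α ∈ Dset d n, ‖a α‖ := by
  rw [homPart_eq_sum]
  refine le_trans (norm_sum_le _ _) (Finset.sum_le_sum fun α _ => ?_)
  rw [norm_mul]
  exact mul_le_of_le_one_right (norm_nonneg _)
    (norm_mpow_le (le_of_lt (mem_ballD_iff.1 hz)) α)

lemma homPart_zero_of_pos {d : ℕ} (a : (Fin d → ℕ) → ℂ) {n : ℕ} (hn : 0 < n) :
    homPart a n (0 : Edim d) = 0 := by
  rw [homPart_eq_sum]
  refine Finset.sum_eq_zero fun α hα => ?_
  have hα' := mem_Dset.1 hα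
  have : ∃ i, α i ≠ 0 := by
    by_contra hcon
    push_neg at hcon
    have : msize α = 0 := Finset.sum_eq_zero fun i _ => hcon i
    omega
  obtain ⟨i, hi⟩ := this
  have : mpow (0 : Edim d) α = 0 := by
    refine Finset.prod_eq_zero (Finset.mem_univ i) ?_
    have h0 : (0 : Edim d) i = 0 := rfl
    rw [h0]
    exact zero_pow hi
  rw [this, mul_zero]

lemma imp_1_2 {d : ℕ} {f : Edim d → ℂ} {a : (Fin d → ℕ) → ℂ} (hfa : IsExpansion f a)
    (h1 : ∀ c > (0:ℝ), ∃ C : ℝ, 0 ≤ C ∧ ∀ r ∈ Set.Ioo (0:ℝ) 1, ∀ z : Edim d, ‖z‖ = r →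
        ‖f z‖ ≤ C * Real.exp (c / (1 - r))) :
    ∀ c > (0:ℝ), ∃ C : ℝ, 0 ≤ C ∧ ∀ n : ℕ, ∀ z ∈ ballD d,
        ‖homPart a n z‖ ≤ C * Real.exp (c * Real.sqrt n) := by
  intro c hc
  set ε : ℝ := c / 4 with hε
  have hε0 : 0 < ε := by positivity
  have hc0 : (0:ℝ) < c ^ 2 / 8 := by positivity
  obtain ⟨C₀, hC₀0, hC₀⟩ := h1 (c ^ 2 / 8) hc0
  set N : ℕ := Nat.ceil (4 * ε ^ 2) + 1 with hN
  -- main estimate for n ≥ N and z ≠ 0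
  have main : ∀ n, N ≤ n → ∀ z ∈ ballD d, z ≠ 0 →
      ‖homPart a n z‖ ≤ C₀ * Real.exp (c * Real.sqrt n) := by
    intro n hnN z hz hz0
    have hn1 : 1 ≤ n := le_trans (by omega) hnN
    have hsq0 : (0:ℝ) < Real.sqrt n := Real.sqrt_pos.2 (by exact_mod_cast hn1)
    have h4ε : 4 * ε ^ 2 ≤ (n : ℝ) := by
      calc 4 * ε ^ 2 ≤ (Nat.ceil (4 * ε ^ 2) : ℝ) := Nat.le_ceil _
        _ ≤ (n : ℝ) := by exact_mod_cast le_trans (by omega) hnN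
    have hx : ε / Real.sqrt n ≤ 1 / 2 := by
      rw [div_le_div_iff₀ hsq0 (by norm_num), one_mul]
      have h2e : (2:ℝ) * ε = Real.sqrt (4 * ε ^ 2) := by
        rw [show (4:ℝ) * ε ^ 2 = (2*ε)^2 by ring, Real.sqrt_sq (by positivity)]
      calc ε * 2 = Real.sqrt (4 * ε ^ 2) := by rw [← h2e]; ring
        _ ≤ Real.sqrt n := Real.sqrt_le_sqrt h4ε

    set x : ℝ := ε / Real.sqrt n with hxdef
    have hx0 : 0 < x := by positivity
    set ρ : ℝ := 1 - x with hρdef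
    have hρmem : ρ ∈ Set.Ioo (0:ℝ) 1 := by
      constructor
      · rw [hρdef]; linarith
      · rw [hρdef]; linarith
    have hz1 : ‖z‖ < 1 := mem_ballD_iff.1 hz
    have hznorm : 0 < ‖z‖ := norm_pos_iff.2 hz0
    -- apply coeff_bound
    have hM : ∀ lam : ℂ, ‖lam‖ = ρ →
        ‖(fun lam => f (lam • z)) lam‖ ≤ C₀ * Real.exp ((c^2/8) / (1 - ρ)) := by
      intro lam hlam
      show ‖f (lam • z)‖ ≤ _
      have hr' : ‖lam • z‖ = ρ * ‖z‖ := by rw [norm_smul, hlam]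
      have hmem : ρ * ‖z‖ ∈ Set.Ioo (0:ℝ) 1 := by
        constructor
        · exact mul_pos hρmem.1 hznorm
        · nlinarith [hρmem.1, hρmem.2, hz1, norm_nonneg z]
      have hest := hC₀ (ρ * ‖z‖) hmem (lam • z) hr'
      refine le_trans hest ?_
      refine mul_le_mul_of_nonneg_left ?_ hC₀0
      apply Real.exp_le_exp.2
      apply div_le_div_of_nonneg_left (le_of_lt hc0) (by linarith [hρmem.2])
      have hrle : ρ * ‖z‖ ≤ ρ := by
        calc ρ * ‖z‖ ≤ ρ * 1 := mul_le_mul_of_nonneg_left (le_of_lt hz1) (le_of_lt hρmem.1)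
          _ = ρ := mul_one _
      linarith
    have hb := coeff_bound (F := fun lam => f (lam • z)) (co := fun m => homPart a m z)
      (M := C₀ * Real.exp ((c^2/8) / (1 - ρ))) (ρ := ρ)
      (fun lam hlam => hasSum_slice hfa hz hlam) hρmem hM n
    -- now hb : ‖homPart a n z‖ * ρ ^ n ≤ C₀ * exp ((c²/8)/(1-ρ))
    have h1ρ : 1 - ρ = x := by rw [hρdef]; ring
    have hexp1 : (c^2/8) / (1 - ρ) = (c/2) * Real.sqrt n := by
      rw [h1ρ, hxdef, hε]
      field_simp
      ring
    -- ρ⁻¹ ≤ exp (2x)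
    have hρinv : ρ⁻¹ ≤ Real.exp (2 * x) := by
      rw [hρdef]
      have he : 1 + 2*x ≤ Real.exp (2*x) := by
        have := Real.add_one_le_exp (2*x)
        linarith
      have hpos : (0:ℝ) < 1 - x := by linarith
      rw [inv_le_iff_one_le_mul₀ hpos]  -- maybe wrong name
      calc (1:ℝ) ≤ (1 - x) * (1 + 2*x) := by nlinarith
        _ ≤ (1 - x) * Real.exp (2*x) := mul_le_mul_of_nonneg_left he (by linarith)
        _ = Real.exp (2*x) * (1 - x) := mul_comm _ _
    have hρinvpow : (ρ⁻¹) ^ n ≤ Real.exp (2 * ε * Real.sqrt n) := by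
      calc (ρ⁻¹) ^ n ≤ (Real.exp (2 * x)) ^ n := by
            exact pow_le_pow_left₀ (inv_nonneg.2 hρmem.1.le) hρinv n
        _ = Real.exp (n * (2 * x)) := by rw [← Real.exp_nat_mul]
        _ = Real.exp (2 * ε * Real.sqrt n) := by
            congr 1
            rw [hxdef]
            rw [show (n:ℝ) * (2 * (ε / Real.sqrt n)) = 2 * ε * ((n:ℝ) / Real.sqrt n) by ring]
            rw [Real.div_sqrt]
    have hρn : (0:ℝ) < ρ ^ n := pow_pos hρmem.1 n
    have hfinal : ‖homPart a n z‖ ≤ (C₀ * Real.exp ((c/2) * Real.sqrt n)) * (ρ⁻¹) ^ n := by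
      rw [← hexp1]
      calc ‖homPart a n z‖ = ‖homPart a n z‖ * ρ ^ n * (ρ⁻¹)^n := by
            rw [mul_assoc, ← mul_pow, mul_inv_cancel₀ (ne_of_gt hρmem.1), one_pow, mul_one]
        _ ≤ (C₀ * Real.exp ((c^2/8) / (1 - ρ))) * (ρ⁻¹)^n :=
            mul_le_mul_of_nonneg_right hb (pow_nonneg (inv_nonneg.2 hρmem.1.le) n)
    calc ‖homPart a n z‖ ≤ (C₀ * Real.exp ((c/2) * Real.sqrt n)) * (ρ⁻¹) ^ n := hfinal
      _ ≤ (C₀ * Real.exp ((c/2) * Real.sqrt n)) * Real.exp (2 * ε * Real.sqrt n) :=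
          mul_le_mul_of_nonneg_left hρinvpow (by positivity)
      _ = C₀ * Real.exp (c * Real.sqrt n) := by
          rw [mul_assoc, ← Real.exp_add]
          congr 2
          rw [hε]
          ring
  -- assemble with small n
  set B : ℕ → ℝ := fun n => ∑ α ∈ Dset d n, ‖a α‖ with hB
  have hB0 : ∀ n, 0 ≤ B n := fun n => Finset.sum_nonneg fun α _ => norm_nonneg _
  set C : ℝ := C₀ + ∑ m ∈ Finset.range N, B m with hC
  have hC0 : 0 ≤ C := by
    rw [hC]
    exact add_nonneg hC₀0 (Finset.sum_nonneg fun m _ => hB0 m)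
  refine ⟨C, hC0, fun n z hz => ?_⟩
  have hexppos : (1:ℝ) ≤ Real.exp (c * Real.sqrt n) := by
    rw [Real.one_le_exp_iff]; positivity
  rcases lt_or_ge n N with hsmall | hbig
  · calc ‖homPart a n z‖ ≤ B n := homPart_bound_crude a n hz
      _ ≤ C := by
          rw [hC]
          have : B n ≤ ∑ m ∈ Finset.range N, B m :=
            Finset.single_le_sum (f := B) (fun m _ => hB0 m) (Finset.mem_range.2 hsmall)
          linarith
      _ ≤ C * Real.exp (c * Real.sqrt n) := le_mul_of_one_le_right hC0 hexppos
  · rcases eq_or_ne z 0 with rfl | hz0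
    · have hn1 : 0 < n := by omega
      rw [homPart_zero_of_pos a hn1]
      simpa using mul_nonneg hC0 (Real.exp_nonneg _)
    · calc ‖homPart a n z‖ ≤ C₀ * Real.exp (c * Real.sqrt n) := main n hbig z hz hz0
        _ ≤ C * Real.exp (c * Real.sqrt n) := by
            refine mul_le_mul_of_nonneg_right ?_ (Real.exp_nonneg _)
            rw [hC]
            have := Finset.sum_nonneg (s := Finset.range N) fun m _ => hB0 m
            linarith

end Stmt18
namespace Stmt18
open Metric Filter Finset

def key {d : ℕ} (n : ℕ) (β : Fin d → ℕ) : ℕ := ∑ i, β i * (n+1) ^ (i : ℕ)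

lemma coord_le_of_mem {d n : ℕ} {β : Fin d → ℕ} (hβ : β ∈ Dset d n) (i : Fin d) :
    β i ≤ n := by
  rw [← mem_Dset.1 hβ]
  exact Finset.single_le_sum (f := β) (fun j _ => Nat.zero_le _) (Finset.mem_univ i)

lemma key_inj_aux : ∀ (d b : ℕ) (β γ : Fin d → ℕ),
    (∀ i, β i < b) → (∀ i, γ i < b) →
    (∑ i, β i * b ^ (i : ℕ)) = (∑ i, γ i * b ^ (i : ℕ)) → β = γ := by
  intro d
  induction d with
  | zero => intro b β γ _ _ _; funext i; exact i.elim0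
  | succ d ih =>
      intro b β γ hβ hγ hsum
      have hb : 0 < b := lt_of_le_of_lt (Nat.zero_le _) (hβ 0)
      rw [Fin.sum_univ_succ, Fin.sum_univ_succ] at hsum
      have hrw : ∀ (δ : Fin (d+1) → ℕ),
          (∑ i : Fin d, δ i.succ * b ^ ((i.succ : Fin (d+1)) : ℕ)) =
          b * ∑ i : Fin d, δ i.succ * b ^ (i:ℕ) := by
        intro δ
        rw [Finset.mul_sum]
        refine Finset.sum_congr rfl fun i _ => ?_
        have hv : ((i.succ : Fin (d+1)) : ℕ) = (i:ℕ) + 1 := rfl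
        rw [hv, pow_succ]
        ring
      rw [hrw β, hrw γ] at hsum
      simp only [Fin.val_zero, pow_zero, mul_one] at hsum
      have h0 : β 0 = γ 0 := by
        have h1 := congrArg (· % b) hsum
        simpa [Nat.add_mul_mod_self_left, Nat.mod_eq_of_lt (hβ 0),
          Nat.mod_eq_of_lt (hγ 0)] using h1
      have htail : (∑ i : Fin d, β i.succ * b ^ (i:ℕ)) =
          ∑ i : Fin d, γ i.succ * b ^ (i:ℕ) := by
        rw [h0] at hsum
        exact Nat.eq_of_mul_eq_mul_left hb (Nat.add_left_cancel hsum)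
      have htl := ih b (fun i => β i.succ) (fun i => γ i.succ)
        (fun i => hβ _) (fun i => hγ _) htail
      funext i
      refine Fin.cases ?_ ?_ i
      · exact h0
      · intro j; exact congrFun htl j

lemma filter_key_singleton {d n : ℕ} {α : Fin d → ℕ} (hα : α ∈ Dset d n) :
    (Dset d n).filter (fun β => key n β = key n α) = {α} := by
  ext β
  simp only [Finset.mem_filter, Finset.mem_singleton]
  constructor
  · rintro ⟨hβ, hk⟩
    exact key_inj_aux d (n+1) β α
      (fun i => Nat.lt_succ_of_le (coord_le_of_mem hβ i))
      (fun i => Nat.lt_succ_of_le (coord_le_of_mem hα i)) hk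
  · rintro rfl; exact ⟨hα, rfl⟩

lemma key_lt_of_mem {d n : ℕ} {β : Fin d → ℕ} (hβ : β ∈ Dset d n) :
    key n β < d * (n * (n+1) ^ d) + 1 := by
  have h : key n β ≤ d * (n * (n+1) ^ d) := by
    calc key n β ≤ ∑ _i : Fin d, n * (n+1) ^ d := by
          refine Finset.sum_le_sum fun i _ => ?_
          exact Nat.mul_le_mul (coord_le_of_mem hβ i)
            (Nat.pow_le_pow_right (Nat.succ_pos n) (le_of_lt i.2))
      _ = d * (n * (n+1) ^ d) := by simp [Finset.sum_const, mul_comm]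
  omega

lemma homPart_deg_zero {d : ℕ} (a : (Fin d → ℕ) → ℂ) (z : Edim d) :
    homPart a 0 z = a (fun _ => 0) := by
  have hD : Dset d 0 = {fun _ => 0} := by
    ext β
    simp only [mem_Dset, Finset.mem_singleton]
    constructor
    · intro h
      funext i
      have := (Finset.sum_eq_zero_iff (s := Finset.univ) (f := β)).1 h i (Finset.mem_univ i)
      exact this
    · rintro rfl
      exact Finset.sum_const_zero
  rw [homPart_eq_sum, hD, Finset.sum_singleton]
  have : mpow z (fun _ => 0) = 1 := by
    unfold mpow
    simp
  rw [this, mul_one]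

lemma w2_zero_idx {d : ℕ} : w2 (fun _ : Fin d => 0) = 1 := by
  unfold w2 msize
  simp

end Stmt18
namespace Stmt18
open Metric Filter Finset

lemma sqrt_exp_half (x : ℝ) : Real.sqrt (Real.exp x) = Real.exp (x / 2) := by
  rw [← Real.exp_half]

lemma imp_2_4 {d : ℕ} (a : (Fin d → ℕ) → ℂ)
    (h2 : ∀ c > (0:ℝ), ∃ C : ℝ, 0 ≤ C ∧ ∀ n : ℕ, ∀ z ∈ ballD d,
        ‖homPart a n z‖ ≤ C * Real.exp (c * Real.sqrt n)) :
    ∀ c > (0:ℝ), ∃ C : ℝ, 0 ≤ C ∧ ∀ α : Fin d → ℕ,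
        ‖a α‖ * omegaIdx α ≤ C * Real.exp (c * Real.sqrt (msize α)) := by
  intro c hc
  obtain ⟨C, hC0, hC⟩ := h2 (c/2) (by positivity)
  obtain ⟨K, hK0, hK⟩ := polybound d hc
  have hK1 : (1:ℝ) ≤ K := by
    have := hK 0
    simpa using this
  have hsqK1 : (1:ℝ) ≤ Real.sqrt K := by
    rw [show (1:ℝ) = Real.sqrt 1 by simp]
    exact Real.sqrt_le_sqrt hK1
  refine ⟨C * Real.sqrt K, by positivity, fun α => ?_⟩
  have h00 : (0:Edim d) ∈ ballD d := by
    rw [mem_ballD_iff]; simp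
  rcases Nat.eq_zero_or_pos (msize α) with hn0 | hnpos
  · -- degree zero
    have hα0 : α = fun _ => 0 := by
      funext i
      exact (Finset.sum_eq_zero_iff (s := Finset.univ) (f := α)).1 hn0 i (Finset.mem_univ i)
    have hhp := hC 0 0 h00
    rw [homPart_deg_zero] at hhp
    rw [hα0]
    have hm0 : msize (fun _ : Fin d => 0) = 0 := by simp [msize]
    rw [hm0, omegaIdx, w2_zero_idx, Real.sqrt_one, mul_one]
    calc ‖a (fun _ => 0)‖ ≤ C := by simpa using hhp
      _ ≤ C * Real.sqrt K := le_mul_of_one_le_right hC0 hsqK1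
      _ ≤ C * Real.sqrt K * Real.exp (c * Real.sqrt ((0:ℕ):ℝ)) := by
          refine le_mul_of_one_le_right (by positivity) ?_
          rw [Real.one_le_exp_iff]
          positivity
  · set n := msize α with hn
    have hαD : α ∈ Dset d n := mem_Dset.2 rfl
    have hn1 : (1:ℝ) ≤ (n:ℝ) := by exact_mod_cast hnpos
    have hnne : (n:ℝ) ≠ 0 := by positivity
    set r : Fin d → ℝ := fun i => Real.sqrt ((α i : ℝ) / n) with hr
    have hr0 : ∀ i, 0 ≤ r i := fun i => Real.sqrt_nonneg _
    have hr2 : ∀ i, (r i)^2 = (α i : ℝ) / n := fun i =>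
      Real.sq_sqrt (by positivity)
    have hsumr2 : ∑ i, (r i)^2 = 1 := by
      have hcastsum : ∑ i, ((α i : ℝ)) = (n:ℝ) := by
        rw [hn]
        unfold msize
        push_cast
        rfl
      have : ∑ i, ((α i : ℝ) / n) = 1 := by
        rw [← Finset.sum_div, hcastsum]
        exact div_self hnne
      rw [← this]
      exact Finset.sum_congr rfl fun i _ => hr2 i
    -- product of r^α squared
    have hprodr0 : 0 ≤ ∏ i, (r i) ^ (α i) :=
      Finset.prod_nonneg fun i _ => pow_nonneg (hr0 i) _
    have hprodr_sq : (∏ i, (r i) ^ (α i))^2 = (∏ i, ((α i:ℝ)) ^ (α i)) / (n:ℝ)^n := by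
      rw [← Finset.prod_pow]
      have : ∀ i ∈ Finset.univ, ((r i) ^ (α i))^2 = ((α i:ℝ))^(α i) / (n:ℝ)^(α i) := by
        intro i _
        rw [← pow_mul, mul_comm (α i) 2, pow_mul, hr2 i, div_pow]
      rw [Finset.prod_congr rfl this, Finset.prod_div_distrib]
      congr 1
      rw [Finset.prod_pow_eq_pow_sum]
      rfl
    -- the key coefficient bound, for every σ ∈ (0,1)
    have main : ∀ σ ∈ Set.Ioo (0:ℝ) 1,
        (‖a α‖ * ∏ i, (r i) ^ (α i)) * σ ^ n ≤ C * Real.exp ((c/2) * Real.sqrt n) := by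
      intro σ hσ
      obtain ⟨hσ0, hσ1⟩ := hσ
      -- the curve
      set ζ : ℂ → Edim d := fun lam => WithLp.toLp 2 fun i : Fin d =>
        (((σ * r i : ℝ)) : ℂ) * lam ^ ((n+1) ^ (i:ℕ)) with hζ
      have hζi : ∀ lam (i : Fin d), (ζ lam) i = (((σ * r i : ℝ)) : ℂ) * lam ^ ((n+1) ^ (i:ℕ)) :=
        fun lam i => rfl
      have hζball : ∀ lam : ℂ, ‖lam‖ ≤ 1 → ζ lam ∈ ballD d := by
        intro lam hlam
        rw [mem_ballD_iff]
        have hnormi : ∀ i, ‖(ζ lam) i‖ ≤ σ * r i := by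
          intro i
          rw [hζi, norm_mul, Complex.norm_real, norm_pow, Real.norm_eq_abs,
            abs_of_nonneg (by positivity : (0:ℝ) ≤ σ * r i)]
          refine mul_le_of_le_one_right (by positivity) ?_
          exact pow_le_one₀ (norm_nonneg _) hlam
        have hsq : ∑ i, ‖(ζ lam) i‖^2 ≤ σ^2 := by
          calc ∑ i, ‖(ζ lam) i‖^2 ≤ ∑ i, (σ * r i)^2 := by
                refine Finset.sum_le_sum fun i _ => ?_
                exact pow_le_pow_left₀ (norm_nonneg _) (hnormi i) 2
            _ = σ^2 * ∑ i, (r i)^2 := by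
                rw [Finset.mul_sum]
                exact Finset.sum_congr rfl fun i _ => by ring
            _ = σ^2 := by rw [hsumr2, mul_one]
        calc ‖ζ lam‖ = Real.sqrt (∑ i, ‖(ζ lam) i‖^2) := EuclideanSpace.norm_eq (ζ lam)
          _ ≤ Real.sqrt (σ^2) := Real.sqrt_le_sqrt hsq
          _ = σ := Real.sqrt_sq hσ0.le
          _ < 1 := hσ1
      -- coefficients
      set co : ℕ → ℂ := fun k => ∑ β ∈ (Dset d n).filter (fun β => key n β = k),
        a β * ∏ i, (((σ * r i : ℝ)) : ℂ) ^ β i with hco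
      set B : ℕ := d * (n * (n+1) ^ d) + 1 with hB
      have hmpow : ∀ (lam : ℂ) (β : Fin d → ℕ), β ∈ Dset d n →
          mpow (ζ lam) β = (∏ i, (((σ * r i : ℝ)) : ℂ) ^ β i) * lam ^ key n β := by
        intro lam β _
        unfold mpow
        calc ∏ i, ((ζ lam) i) ^ β i
            = ∏ i, ((((σ * r i : ℝ)) : ℂ) ^ β i * (lam ^ ((n+1) ^ (i:ℕ))) ^ β i) := by
              refine Finset.prod_congr rfl fun i _ => ?_
              rw [hζi, mul_pow]
          _ = (∏ i, (((σ * r i : ℝ)) : ℂ) ^ β i) * ∏ i, lam ^ (β i * (n+1) ^ (i:ℕ)) := by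
              rw [← Finset.prod_mul_distrib]
              refine Finset.prod_congr rfl fun i _ => ?_
              rw [← pow_mul, mul_comm ((n+1) ^ (i:ℕ)) (β i)]
          _ = (∏ i, (((σ * r i : ℝ)) : ℂ) ^ β i) * lam ^ key n β := by
              rw [Finset.prod_pow_eq_pow_sum]
              rfl
      have hhs : ∀ lam : ℂ, ‖lam‖ ≤ 1 →
          HasSum (fun k => co k * lam ^ k) (homPart a n (ζ lam)) := by
        intro lam _
        have hsupp : ∀ k ∉ Finset.range B, co k * lam ^ k = 0 := by
          intro k hk
          rw [Finset.mem_range, not_lt] at hk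
          have : co k = 0 := by
            rw [hco]
            refine Finset.sum_eq_zero fun β hβ => ?_
            rw [Finset.mem_filter] at hβ
            exact absurd (hβ.2 ▸ key_lt_of_mem hβ.1) (by omega)
          rw [this, zero_mul]
        have h1 := hasSum_sum_of_ne_finset_zero (L := SummationFilter.unconditional ℕ) hsupp
        have h2 : ∑ k ∈ Finset.range B, co k * lam ^ k = homPart a n (ζ lam) := by
          rw [homPart_eq_sum]
          have h3 : ∀ k ∈ Finset.range B, co k * lam ^ k =
              ∑ β ∈ (Dset d n).filter (fun β => key n β = k),
                a β * mpow (ζ lam) β := by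
            intro k _
            rw [hco, Finset.sum_mul]
            refine Finset.sum_congr rfl fun β hβ => ?_
            rw [Finset.mem_filter] at hβ
            rw [hmpow lam β hβ.1, ← hβ.2]
            ring
          rw [Finset.sum_congr rfl h3]
          exact (Finset.sum_fiberwise_of_maps_to
            (fun β hβ => Finset.mem_range.2 (key_lt_of_mem hβ)) _)
        rw [← h2]
        exact h1
      -- apply the Cauchy estimate for every ρ and let ρ → 1
      have hcb : ∀ ρ ∈ Set.Ioo (0:ℝ) 1, ‖co (key n α)‖ * ρ ^ (key n α) ≤
          C * Real.exp ((c/2) * Real.sqrt n) := by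
        intro ρ hρ
        refine coeff_bound (F := fun lam => homPart a n (ζ lam)) hhs hρ ?_ (key n α)
        intro lam hlam
        exact hC n (ζ lam) (hζball lam (le_of_eq hlam |>.trans hρ.2.le))
      have hcole : ‖co (key n α)‖ ≤ C * Real.exp ((c/2) * Real.sqrt n) :=
        le_limit_aux (key n α) fun ρ hρ => hcb ρ hρ
      -- compute co (key n α)
      have hsing : co (key n α) = a α * ∏ i, (((σ * r i : ℝ)) : ℂ) ^ α i := by
        show (∑ β ∈ (Dset d n).filter (fun β => key n β = key n α),
          a β * ∏ i, (((σ * r i : ℝ)) : ℂ) ^ β i) = _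
        rw [filter_key_singleton hαD, Finset.sum_singleton]
      have hnorm : ‖co (key n α)‖ = ‖a α‖ * (σ ^ n * ∏ i, (r i) ^ (α i)) := by
        rw [hsing, norm_mul]
        congr 1
        rw [norm_prod]
        have : ∀ i ∈ Finset.univ, ‖(((σ * r i : ℝ)) : ℂ) ^ α i‖ = (σ * r i) ^ α i := by
          intro i _
          rw [norm_pow, Complex.norm_real, Real.norm_eq_abs,
            abs_of_nonneg (by positivity : (0:ℝ) ≤ σ * r i)]
        rw [Finset.prod_congr rfl this]
        calc ∏ i, (σ * r i) ^ α i = ∏ i, (σ ^ α i * (r i) ^ α i) := by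
              exact Finset.prod_congr rfl fun i _ => mul_pow _ _ _
          _ = (∏ i, σ ^ α i) * ∏ i, (r i) ^ α i := Finset.prod_mul_distrib
          _ = σ ^ n * ∏ i, (r i) ^ α i := by
              rw [Finset.prod_pow_eq_pow_sum]
              rfl
      rw [hnorm] at hcole
      calc (‖a α‖ * ∏ i, (r i) ^ (α i)) * σ ^ n
          = ‖a α‖ * (σ ^ n * ∏ i, (r i) ^ (α i)) := by ring
        _ ≤ C * Real.exp ((c/2) * Real.sqrt n) := hcole
    have hA : ‖a α‖ * ∏ i, (r i) ^ (α i) ≤ C * Real.exp ((c/2) * Real.sqrt n) :=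
      le_limit_aux n main
    -- combinatorial bound : omegaIdx α ≤ √((n+1)^d) * ∏ r^α
    have homega : omegaIdx α ≤ Real.sqrt (((n:ℝ)+1)^d) * ∏ i, (r i) ^ (α i) := by
      have hcomb := key_comb (α := α) rfl
      have hcombR : ((∏ i, Nat.factorial (α i) : ℕ) : ℝ) * (n:ℝ)^n ≤
          ((n:ℝ)+1)^d * ((Nat.factorial n : ℝ) * ∏ i, ((α i:ℝ))^(α i)) := by
        have := hcomb
        have hcast : (((∏ i, Nat.factorial (α i)) * n ^ n : ℕ) : ℝ) ≤
            (((n + 1) ^ d * (Nat.factorial n * ∏ i, α i ^ α i) : ℕ) : ℝ) := by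
          exact_mod_cast this
        push_cast at hcast
        convert hcast using 2 <;> push_cast <;> ring
      have hw2le : w2 α ≤ ((n:ℝ)+1)^d * ((∏ i, ((α i:ℝ))^(α i)) / (n:ℝ)^n) := by
        rw [w2, ← hn]
        rw [div_le_iff₀ (by positivity : (0:ℝ) < (Nat.factorial n : ℝ))]
        rw [show ((n:ℝ)+1)^d * ((∏ i, ((α i:ℝ))^(α i)) / (n:ℝ)^n) * (Nat.factorial n : ℝ)
            = (((n:ℝ)+1)^d * ((Nat.factorial n : ℝ) * ∏ i, ((α i:ℝ))^(α i))) / (n:ℝ)^n by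
              field_simp]
        rw [le_div_iff₀ (by positivity : (0:ℝ) < (n:ℝ)^n)]
        exact hcombR
      have hsqrtprod : Real.sqrt ((∏ i, ((α i:ℝ))^(α i)) / (n:ℝ)^n) = ∏ i, (r i) ^ (α i) := by
        rw [← hprodr_sq]
        exact Real.sqrt_sq hprodr0
      calc omegaIdx α = Real.sqrt (w2 α) := rfl
        _ ≤ Real.sqrt (((n:ℝ)+1)^d * ((∏ i, ((α i:ℝ))^(α i)) / (n:ℝ)^n)) :=
            Real.sqrt_le_sqrt hw2le
        _ = Real.sqrt (((n:ℝ)+1)^d) * Real.sqrt ((∏ i, ((α i:ℝ))^(α i)) / (n:ℝ)^n) :=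
            Real.sqrt_mul (by positivity) _
        _ = Real.sqrt (((n:ℝ)+1)^d) * ∏ i, (r i) ^ (α i) := by rw [hsqrtprod]
    -- finish
    have hsqpoly : Real.sqrt (((n:ℝ)+1)^d) ≤ Real.sqrt K * Real.exp ((c/2) * Real.sqrt n) := by
      calc Real.sqrt (((n:ℝ)+1)^d) ≤ Real.sqrt (K * Real.exp (c * Real.sqrt n)) :=
            Real.sqrt_le_sqrt (hK n)
        _ = Real.sqrt K * Real.sqrt (Real.exp (c * Real.sqrt n)) := Real.sqrt_mul hK0 _
        _ = Real.sqrt K * Real.exp ((c/2) * Real.sqrt n) := by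
            rw [sqrt_exp_half, show c * Real.sqrt n / 2 = (c/2) * Real.sqrt n by ring]
    calc ‖a α‖ * omegaIdx α
        ≤ ‖a α‖ * (Real.sqrt (((n:ℝ)+1)^d) * ∏ i, (r i) ^ (α i)) :=
          mul_le_mul_of_nonneg_left homega (norm_nonneg _)
      _ = Real.sqrt (((n:ℝ)+1)^d) * (‖a α‖ * ∏ i, (r i) ^ (α i)) := by ring
      _ ≤ (Real.sqrt K * Real.exp ((c/2) * Real.sqrt n)) * (C * Real.exp ((c/2) * Real.sqrt n)) := by
          refine mul_le_mul hsqpoly hA (by positivity) (by positivity)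
      _ = C * Real.sqrt K * Real.exp (c * Real.sqrt n) := by
          rw [show (Real.sqrt K * Real.exp ((c/2) * Real.sqrt n)) * (C * Real.exp ((c/2) * Real.sqrt n)) = C * Real.sqrt K * (Real.exp ((c/2) * Real.sqrt n) * Real.exp ((c/2) * Real.sqrt n)) by ring, ← Real.exp_add]
          congr 2
          ring

end Stmt18
namespace Stmt18
open Metric Filter Finset

lemma omegaIdx_sq {d : ℕ} (α : Fin d → ℕ) : (omegaIdx α) ^ 2 = w2 α :=
  Real.sq_sqrt (w2_pos α).le

lemma imp_4_3 {d : ℕ} (a : (Fin d → ℕ) → ℂ)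
    (h4 : ∀ c > (0:ℝ), ∃ C : ℝ, 0 ≤ C ∧ ∀ α : Fin d → ℕ,
        ‖a α‖ * omegaIdx α ≤ C * Real.exp (c * Real.sqrt (msize α))) :
    ∀ c > (0:ℝ), ∃ C : ℝ, 0 ≤ C ∧ ∀ n : ℕ,
        Real.sqrt (homNormSq a n) ≤ C * Real.exp (c * Real.sqrt n) := by
  intro c hc
  obtain ⟨C, hC0, hC⟩ := h4 (c/4) (by positivity)
  obtain ⟨K, hK0, hK⟩ := polybound d hc
  refine ⟨Real.sqrt K * C, by positivity, fun n => ?_⟩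
  have hterm : ∀ α ∈ Dset d n, ‖a α‖^2 * w2 α ≤ (C * Real.exp ((c/4) * Real.sqrt n))^2 := by
    intro α hα
    have h1 := hC α
    rw [mem_Dset.1 hα] at h1
    calc ‖a α‖^2 * w2 α = (‖a α‖ * omegaIdx α)^2 := by
          rw [mul_pow, omegaIdx_sq]
      _ ≤ (C * Real.exp ((c/4) * Real.sqrt n))^2 := by
          exact pow_le_pow_left₀ (mul_nonneg (norm_nonneg _) (Real.sqrt_nonneg _)) h1 2
  have hsum : homNormSq a n ≤ ((n:ℝ)+1)^d * (C * Real.exp ((c/4) * Real.sqrt n))^2 := by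
    rw [homNormSq_eq_sum]
    calc ∑ α ∈ Dset d n, ‖a α‖^2 * w2 α
        ≤ ∑ _α ∈ Dset d n, (C * Real.exp ((c/4) * Real.sqrt n))^2 :=
          Finset.sum_le_sum hterm
      _ = (Dset d n).card * (C * Real.exp ((c/4) * Real.sqrt n))^2 := by
          rw [Finset.sum_const, nsmul_eq_mul]
      _ ≤ ((n:ℝ)+1)^d * (C * Real.exp ((c/4) * Real.sqrt n))^2 := by
          refine mul_le_mul_of_nonneg_right ?_ (by positivity)
          calc ((Dset d n).card : ℝ) ≤ (((n+1)^d : ℕ) : ℝ) := by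
                exact_mod_cast card_Dset_le d n
            _ = ((n:ℝ)+1)^d := by push_cast; ring
  calc Real.sqrt (homNormSq a n)
      ≤ Real.sqrt (((n:ℝ)+1)^d * (C * Real.exp ((c/4) * Real.sqrt n))^2) :=
        Real.sqrt_le_sqrt hsum
    _ = Real.sqrt (((n:ℝ)+1)^d) * (C * Real.exp ((c/4) * Real.sqrt n)) := by
        rw [Real.sqrt_mul (by positivity), Real.sqrt_sq (by positivity)]
    _ ≤ (Real.sqrt K * Real.exp ((c/2) * Real.sqrt n)) * (C * Real.exp ((c/4) * Real.sqrt n)) := by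
        refine mul_le_mul_of_nonneg_right ?_ (by positivity)
        calc Real.sqrt (((n:ℝ)+1)^d) ≤ Real.sqrt (K * Real.exp (c * Real.sqrt n)) :=
              Real.sqrt_le_sqrt (hK n)
          _ = Real.sqrt K * Real.sqrt (Real.exp (c * Real.sqrt n)) := Real.sqrt_mul hK0 _
          _ = Real.sqrt K * Real.exp ((c/2) * Real.sqrt n) := by
              rw [sqrt_exp_half, show c * Real.sqrt n / 2 = (c/2) * Real.sqrt n by ring]
    _ ≤ Real.sqrt K * C * Real.exp (c * Real.sqrt n) := by
        rw [show (Real.sqrt K * Real.exp ((c/2) * Real.sqrt n)) * (C * Real.exp ((c/4) * Real.sqrt n))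
          = Real.sqrt K * C * (Real.exp ((c/2) * Real.sqrt n) * Real.exp ((c/4) * Real.sqrt n)) by ring,
          ← Real.exp_add]
        refine mul_le_mul_of_nonneg_left (Real.exp_le_exp.2 ?_) (by positivity)
        have : (0:ℝ) ≤ (c/4) * Real.sqrt n := by positivity
        nlinarith [Real.sqrt_nonneg (n:ℝ)]

lemma imp_3_2 {d : ℕ} (a : (Fin d → ℕ) → ℂ)
    (h3 : ∀ c > (0:ℝ), ∃ C : ℝ, 0 ≤ C ∧ ∀ n : ℕ,
        Real.sqrt (homNormSq a n) ≤ C * Real.exp (c * Real.sqrt n)) :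
    ∀ c > (0:ℝ), ∃ C : ℝ, 0 ≤ C ∧ ∀ n : ℕ, ∀ z ∈ ballD d,
        ‖homPart a n z‖ ≤ C * Real.exp (c * Real.sqrt n) := by
  intro c hc
  obtain ⟨C, hC0, hC⟩ := h3 c hc
  refine ⟨C, hC0, fun n z hz => ?_⟩
  have hz1 : ‖z‖ < 1 := mem_ballD_iff.1 hz
  -- Cauchy-Schwarz
  have hCS : ‖homPart a n z‖ ≤
      Real.sqrt (∑ α ∈ Dset d n, ‖a α‖^2 * w2 α) *
      Real.sqrt (∑ α ∈ Dset d n, ‖mpow z α‖^2 / w2 α) := by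
    rw [homPart_eq_sum]
    calc ‖∑ α ∈ Dset d n, a α * mpow z α‖
        ≤ ∑ α ∈ Dset d n, ‖a α‖ * ‖mpow z α‖ := by
          refine le_trans (norm_sum_le _ _) (Finset.sum_le_sum fun α _ => ?_)
          rw [norm_mul]
      _ = ∑ α ∈ Dset d n, (‖a α‖ * omegaIdx α) * (‖mpow z α‖ / omegaIdx α) := by
          refine Finset.sum_congr rfl fun α _ => ?_
          have := (w2_pos α)
          have hω : 0 < omegaIdx α := Real.sqrt_pos.2 this
          field_simp
      _ ≤ Real.sqrt (∑ α ∈ Dset d n, (‖a α‖ * omegaIdx α)^2) *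
          Real.sqrt (∑ α ∈ Dset d n, (‖mpow z α‖ / omegaIdx α)^2) :=
          Real.sum_mul_le_sqrt_mul_sqrt _ _ _
      _ = Real.sqrt (∑ α ∈ Dset d n, ‖a α‖^2 * w2 α) *
          Real.sqrt (∑ α ∈ Dset d n, ‖mpow z α‖^2 / w2 α) := by
          congr 1
          · congr 1
            exact Finset.sum_congr rfl fun α _ => by rw [mul_pow, omegaIdx_sq]
          · congr 1
            exact Finset.sum_congr rfl fun α _ => by rw [div_pow, omegaIdx_sq]
  -- second factor ≤ 1
  have hzsq : ∑ i, ‖z i‖^2 = ‖z‖^2 := by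
    rw [EuclideanSpace.norm_eq, Real.sq_sqrt (Finset.sum_nonneg fun i _ => sq_nonneg _)]
  have hsec : ∑ α ∈ Dset d n, ‖mpow z α‖^2 / w2 α ≤ 1 := by
    have hterm : ∀ α ∈ Dset d n, ‖mpow z α‖^2 / w2 α =
        (Nat.multinomial Finset.univ α : ℝ) * ∏ i, (‖z i‖^2) ^ α i := by
      intro α hα
      have hspec := Nat.multinomial_spec Finset.univ α
      have hspecR : (Nat.multinomial Finset.univ α : ℝ) *
          ((∏ i, Nat.factorial (α i) : ℕ) : ℝ) = (Nat.factorial (msize α) : ℝ) := by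
        rw [← Nat.cast_mul, mul_comm]
        exact_mod_cast congrArg (Nat.cast (R := ℝ)) (hspec.trans (by rw [← msize]))
      have hm0 : (0:ℝ) < (Nat.multinomial Finset.univ α : ℝ) := by
        exact_mod_cast Nat.multinomial_pos _ _
      have hw2 : w2 α = 1 / (Nat.multinomial Finset.univ α : ℝ) := by
        rw [w2, div_eq_div_iff (by positivity : ((Nat.factorial (msize α) : ℕ) : ℝ) ≠ 0)
          (ne_of_gt hm0), one_mul, mul_comm]
        exact hspecR
      have hmp : ‖mpow z α‖^2 = ∏ i, (‖z i‖^2) ^ α i := by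
        rw [mpow, norm_prod, ← Finset.prod_pow]
        refine Finset.prod_congr rfl fun i _ => ?_
        rw [norm_pow, ← pow_mul, mul_comm (α i) 2, pow_mul]
      rw [hmp, hw2, div_eq_mul_inv, one_div, inv_inv]
      ring
    have hmulti := Finset.sum_pow_eq_sum_piAntidiag (R := ℝ) Finset.univ
      (fun i => ‖z i‖^2) n
    calc ∑ α ∈ Dset d n, ‖mpow z α‖^2 / w2 α
        = ∑ α ∈ Dset d n, (Nat.multinomial Finset.univ α : ℝ) * ∏ i, (‖z i‖^2) ^ α i :=
          Finset.sum_congr rfl hterm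
      _ = (∑ i, ‖z i‖^2)^n := (hmulti).symm
      _ = (‖z‖^2)^n := by rw [hzsq]
      _ ≤ 1 := pow_le_one₀ (sq_nonneg _) (pow_le_one₀ (norm_nonneg _) hz1.le)
  have h1 : Real.sqrt (∑ α ∈ Dset d n, ‖a α‖^2 * w2 α) = Real.sqrt (homNormSq a n) := by
    rw [homNormSq_eq_sum]
  have h2 : Real.sqrt (∑ α ∈ Dset d n, ‖mpow z α‖^2 / w2 α) ≤ 1 := by
    rw [show (1:ℝ) = Real.sqrt 1 by simp]
    exact Real.sqrt_le_sqrt hsec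
  calc ‖homPart a n z‖
      ≤ Real.sqrt (∑ α ∈ Dset d n, ‖a α‖^2 * w2 α) *
        Real.sqrt (∑ α ∈ Dset d n, ‖mpow z α‖^2 / w2 α) := hCS
    _ ≤ Real.sqrt (homNormSq a n) * 1 := by
        rw [h1]
        exact mul_le_mul_of_nonneg_left h2 (Real.sqrt_nonneg _)
    _ = Real.sqrt (homNormSq a n) := mul_one _
    _ ≤ C * Real.exp (c * Real.sqrt n) := hC n

end Stmt18
namespace Stmt18
open Metric Filter Finset

lemma homPart_smul {d : ℕ} (a : (Fin d → ℕ) → ℂ) (n : ℕ) (cc : ℂ) (w : Edim d) :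
    homPart a n (cc • w) = cc ^ n * homPart a n w := by
  rw [homPart_eq_sum, homPart_eq_sum, Finset.mul_sum]
  refine Finset.sum_congr rfl fun α hα => ?_
  rw [mpow_smul, mem_Dset.1 hα]
  ring

lemma series_bound {ρ c₀ : ℝ} (hρ0 : 0 ≤ ρ) (hρ1 : ρ < 1) (hu1 : 1 - ρ ≤ 1) (hc₀ : 0 < c₀) :
    Summable (fun n : ℕ => ρ ^ n * Real.exp (c₀ * Real.sqrt n)) ∧
    ∑' n : ℕ, ρ ^ n * Real.exp (c₀ * Real.sqrt n) ≤
      Real.exp (c₀^2 / (2 * (1 - ρ))) * (4 / (1 - ρ)) := by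
  set u : ℝ := 1 - ρ with hudef
  have hu0 : 0 < u := by rw [hudef]; linarith
  set q : ℝ := Real.exp (-(u/2)) with hqdef
  have hq0 : 0 < q := Real.exp_pos _
  have hq1 : q < 1 := by
    rw [hqdef, Real.exp_lt_one_iff]
    linarith
  set E : ℝ := Real.exp (c₀^2 / (2 * u)) with hEdef
  have hE0 : 0 < E := Real.exp_pos _
  have hterm : ∀ n : ℕ, ρ ^ n * Real.exp (c₀ * Real.sqrt n) ≤ E * q ^ n := by
    intro n
    have hsq : Real.sqrt n ^ 2 = (n:ℝ) := Real.sq_sqrt (Nat.cast_nonneg n)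
    have h1 : c₀ * Real.sqrt n ≤ c₀^2 / (2*u) + u * n / 2 := by
      have hkey : 2 * u * (c₀ * Real.sqrt n) ≤ c₀^2 + u^2 * n := by
        nlinarith [sq_nonneg (c₀ - u * Real.sqrt n), hsq]
      calc c₀ * Real.sqrt n = (2 * u * (c₀ * Real.sqrt n)) / (2 * u) := by
            field_simp
        _ ≤ (c₀^2 + u^2 * n) / (2 * u) := by
            gcongr
        _ = c₀^2 / (2*u) + u * n / 2 := by
            field_simp
    have h2 : ρ ^ n ≤ Real.exp (-(u * n)) := by
      have hρe : ρ ≤ Real.exp (-u) := by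
        have := Real.add_one_le_exp (-u)
        rw [hudef] at *
        linarith
      calc ρ ^ n ≤ (Real.exp (-u)) ^ n := pow_le_pow_left₀ hρ0 hρe n
        _ = Real.exp (n * (-u)) := by rw [← Real.exp_nat_mul]
        _ = Real.exp (-(u * n)) := by ring_nf
    calc ρ ^ n * Real.exp (c₀ * Real.sqrt n)
        ≤ Real.exp (-(u * n)) * Real.exp (c₀^2 / (2*u) + u * n / 2) :=
          mul_le_mul h2 (Real.exp_le_exp.2 h1) (Real.exp_nonneg _) (Real.exp_nonneg _)
      _ = E * q ^ n := by
          rw [← Real.exp_add, hEdef, hqdef,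
            show q ^ n = Real.exp ((n:ℝ) * (-(u/2))) by rw [← Real.exp_nat_mul],
            ← Real.exp_add]
          congr 1
          ring
  have hgeom : Summable (fun n : ℕ => E * q ^ n) :=
    (summable_geometric_of_lt_one hq0.le hq1).mul_left E
  have hpos : ∀ n : ℕ, 0 ≤ ρ ^ n * Real.exp (c₀ * Real.sqrt n) := by
    intro n; positivity
  have hsummable : Summable (fun n : ℕ => ρ ^ n * Real.exp (c₀ * Real.sqrt n)) :=
    Summable.of_nonneg_of_le hpos hterm hgeom
  refine ⟨hsummable, ?_⟩
  have h3 : ∑' n : ℕ, ρ ^ n * Real.exp (c₀ * Real.sqrt n) ≤ ∑' n : ℕ, E * q ^ n :=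
    Summable.tsum_le_tsum hterm hsummable hgeom
  have h4 : ∑' n : ℕ, E * q ^ n = E * (1 - q)⁻¹ := by
    rw [tsum_mul_left, tsum_geometric_of_lt_one hq0.le hq1]
  have h5 : (1 - q)⁻¹ ≤ 4 / u := by
    have hq4 : u / 4 ≤ 1 - q := by
      have he : 1 + u/2 ≤ Real.exp (u/2) := by
        have := Real.add_one_le_exp (u/2)
        linarith
      have hinv : q ≤ (1 + u/2)⁻¹ := by
        rw [hqdef, Real.exp_neg]
        exact inv_anti₀ (by linarith) he
      have h6 : (1 + u/2)⁻¹ ≤ 1 - u/4 := by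
        rw [inv_le_iff_one_le_mul₀ (by linarith)]
        nlinarith
      linarith
    calc (1 - q)⁻¹ ≤ (u/4)⁻¹ := by
          apply inv_anti₀ (by positivity) hq4
      _ = 4 / u := by field_simp
  calc ∑' n : ℕ, ρ ^ n * Real.exp (c₀ * Real.sqrt n) ≤ E * (1 - q)⁻¹ := h3.trans_eq h4
    _ ≤ E * (4 / u) := mul_le_mul_of_nonneg_left h5 hE0.le
    _ = Real.exp (c₀^2 / (2 * (1 - ρ))) * (4 / (1 - ρ)) := by rw [hEdef, hudef]

end Stmt18
namespace Stmt18
open Metric Filter Finset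

lemma imp_2_1 {d : ℕ} {f : Edim d → ℂ} {a : (Fin d → ℕ) → ℂ} (hfa : IsExpansion f a)
    (h2 : ∀ c > (0:ℝ), ∃ C : ℝ, 0 ≤ C ∧ ∀ n : ℕ, ∀ z ∈ ballD d,
        ‖homPart a n z‖ ≤ C * Real.exp (c * Real.sqrt n)) :
    ∀ c > (0:ℝ), ∃ C : ℝ, 0 ≤ C ∧ ∀ r ∈ Set.Ioo (0:ℝ) 1, ∀ z : Edim d, ‖z‖ = r →
        ‖f z‖ ≤ C * Real.exp (c / (1 - r)) := by
  intro c hc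
  set c₀ : ℝ := Real.sqrt (c/2) with hc₀def
  have hc₀ : 0 < c₀ := Real.sqrt_pos.2 (by positivity)
  have hc₀sq : c₀^2 = c/2 := Real.sq_sqrt (by positivity)
  obtain ⟨C, hC0, hC⟩ := h2 c₀ hc₀
  refine ⟨C * (16 / c), by positivity, fun r hr z hzr => ?_⟩
  obtain ⟨hr0, hr1⟩ := hr
  set t : ℝ := (1 + r) / 2 with htdef
  have ht0 : 0 < t := by rw [htdef]; linarith
  have hrt : r < t := by rw [htdef]; linarith
  have ht1 : t < 1 := by rw [htdef]; linarith
  set ρ : ℝ := r / t with hρdef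
  have hρ0 : 0 ≤ ρ := by positivity
  have hρ1 : ρ < 1 := by
    rw [hρdef, div_lt_one ht0]
    exact hrt
  have hz : z ∈ ballD d := by
    rw [mem_ballD_iff, hzr]
    exact hr1
  -- the rescaled point
  set w : Edim d := ((t/r : ℝ) : ℂ) • z with hwdef
  have hw : w ∈ ballD d := by
    rw [mem_ballD_iff, hwdef, norm_smul, Complex.norm_real, Real.norm_eq_abs,
      abs_of_nonneg (by positivity : (0:ℝ) ≤ t/r), hzr]
    rw [div_mul_cancel₀ _ (ne_of_gt hr0)]
    exact ht1
  have hzw : z = ((r/t : ℝ) : ℂ) • w := by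
    rw [hwdef, smul_smul, ← Complex.ofReal_mul,
      div_mul_div_comm, mul_comm r t, div_self (by positivity : t * r ≠ 0),
      Complex.ofReal_one, one_smul]
  have hhom : ∀ n : ℕ, ‖homPart a n z‖ ≤ ρ ^ n * (C * Real.exp (c₀ * Real.sqrt n)) := by
    intro n
    calc ‖homPart a n z‖ = ‖(((r/t : ℝ) : ℂ))^n * homPart a n w‖ := by
          rw [hzw] at *
          rw [homPart_smul]
      _ = ρ ^ n * ‖homPart a n w‖ := by
          rw [norm_mul, norm_pow, Complex.norm_real, Real.norm_eq_abs,
            abs_of_nonneg (by positivity : (0:ℝ) ≤ r/t), hρdef]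
      _ ≤ ρ ^ n * (C * Real.exp (c₀ * Real.sqrt n)) :=
          mul_le_mul_of_nonneg_left (hC n w hw) (pow_nonneg hρ0 n)
  have hsum := hasSum_homParts hfa hz
  have hsumnorm : Summable (fun n => ‖homPart a n z‖) := hsum.summable.norm
  obtain ⟨hsummB, hB⟩ := series_bound hρ0 hρ1 (by linarith) hc₀
  have hsummB' : Summable (fun n : ℕ => ρ ^ n * (C * Real.exp (c₀ * Real.sqrt n))) := by
    have : (fun n : ℕ => ρ ^ n * (C * Real.exp (c₀ * Real.sqrt n))) =
        (fun n : ℕ => C * (ρ ^ n * Real.exp (c₀ * Real.sqrt n))) := by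
      funext n; ring
    rw [this]
    exact hsummB.mul_left C
  have hfz : ‖f z‖ ≤ ∑' n, ‖homPart a n z‖ := by
    rw [← hsum.tsum_eq]
    exact norm_tsum_le_tsum_norm hsumnorm
  have hu : 1 - ρ = (1 - r) / (1 + r) := by
    rw [hρdef, htdef]
    field_simp
    ring
  have huinv : 1 / (1 - ρ) ≤ 2 / (1 - r) := by
    rw [hu, one_div_div]
    rw [div_le_div_iff₀ (by linarith) (by linarith)]
    nlinarith
  have hexpfin : Real.exp (c₀^2 / (2 * (1 - ρ))) * (4 / (1 - ρ)) ≤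
      (16 / c) * Real.exp (c / (1 - r)) := by
    have h1ρ : 0 < 1 - ρ := by linarith
    set y : ℝ := 1 / (1 - ρ) with hydef
    have hy0 : 0 < y := by positivity
    -- 4/(1-ρ) = 4 y ≤ (16/c) exp (c y / 4)
    have hy4 : 4 / (1 - ρ) ≤ (16 / c) * Real.exp ((c/4) * y) := by
      have hxe : (c/4) * y ≤ Real.exp ((c/4) * y) := by
        have := Real.add_one_le_exp ((c/4) * y)
        linarith
      have h44 : 4 / (1 - ρ) = (16 / c) * ((c/4) * y) := by
        rw [hydef]
        field_simp
        ring
      rw [h44]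
      exact mul_le_mul_of_nonneg_left hxe (by positivity)
    have hexp4 : c₀^2 / (2 * (1 - ρ)) = (c/4) * y := by
      have hne : (1 - ρ) ≠ 0 := ne_of_gt h1ρ
      rw [hc₀sq, hydef]
      rw [mul_one_div, div_eq_div_iff (by positivity : (0:ℝ) < 2*(1-ρ)).ne' hne]
      ring
    calc Real.exp (c₀^2 / (2 * (1 - ρ))) * (4 / (1 - ρ))
        ≤ Real.exp ((c/4) * y) * ((16 / c) * Real.exp ((c/4) * y)) := by
          rw [hexp4]
          exact mul_le_mul_of_nonneg_left hy4 (Real.exp_nonneg _)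
      _ = (16 / c) * Real.exp ((c/4) * y + (c/4) * y) := by
          rw [Real.exp_add]
          ring
      _ ≤ (16 / c) * Real.exp (c / (1 - r)) := by
          refine mul_le_mul_of_nonneg_left (Real.exp_le_exp.2 ?_) (by positivity)
          have : (c/4) * y + (c/4) * y = (c/2) * y := by ring
          rw [this]
          calc (c/2) * y ≤ (c/2) * (2 / (1-r)) := by
                refine mul_le_mul_of_nonneg_left ?_ (by positivity)
                rw [hydef]
                exact huinv
            _ = c / (1-r) := by
                field_simp
  calc ‖f z‖ ≤ ∑' n, ‖homPart a n z‖ := hfz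
    _ ≤ ∑' n : ℕ, ρ ^ n * (C * Real.exp (c₀ * Real.sqrt n)) :=
        Summable.tsum_le_tsum hhom hsumnorm hsummB'
    _ = C * ∑' n : ℕ, ρ ^ n * Real.exp (c₀ * Real.sqrt n) := by
        rw [← tsum_mul_left]
        congr 1
        funext n
        ring
    _ ≤ C * (Real.exp (c₀^2 / (2 * (1 - ρ))) * (4 / (1 - ρ))) :=
        mul_le_mul_of_nonneg_left hB hC0
    _ ≤ C * ((16 / c) * Real.exp (c / (1 - r))) :=
        mul_le_mul_of_nonneg_left hexpfin hC0
    _ = C * (16 / c) * Real.exp (c / (1 - r)) := by ring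

end Stmt18
/-- equivalent growth conditions (the containing Fréchet space `F_u⁺`). -/
theorem stmt_18 (d : ℕ) (hd : 1 ≤ d) (f : Edim d → ℂ) (a : (Fin d → ℕ) → ℂ)
    (hfa : IsExpansion f a) :
    [ -- (i) growth of the maximum modulus
      (∀ c > (0:ℝ), ∃ C : ℝ, 0 ≤ C ∧ ∀ r ∈ Set.Ioo (0:ℝ) 1, ∀ z : Edim d, ‖z‖ = r →
        ‖f z‖ ≤ C * Real.exp (c / (1 - r))),
      -- (ii) growth of sup-norms of homogeneous components
      (∀ c > (0:ℝ), ∃ C : ℝ, 0 ≤ C ∧ ∀ n : ℕ, ∀ z ∈ ballD d,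
        ‖homPart a n z‖ ≤ C * Real.exp (c * Real.sqrt (n : ℝ))),
      -- (iii) growth of H²_d-norms of homogeneous components
      (∀ c > (0:ℝ), ∃ C : ℝ, 0 ≤ C ∧ ∀ n : ℕ,
        Real.sqrt (homNormSq a n) ≤ C * Real.exp (c * Real.sqrt (n : ℝ))),
      -- (iv) growth of the coefficients
      (∀ c > (0:ℝ), ∃ C : ℝ, 0 ≤ C ∧ ∀ α : Fin d → ℕ,
        ‖a α‖ * omegaIdx α ≤ C * Real.exp (c * Real.sqrt (msize α : ℝ))) ].TFAE := by
  tfae_have 1 → 2 := fun h => Stmt18.imp_1_2 hfa h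
  tfae_have 2 → 4 := Stmt18.imp_2_4 a
  tfae_have 4 → 3 := Stmt18.imp_4_3 a
  tfae_have 3 → 2 := Stmt18.imp_3_2 a
  tfae_have 2 → 1 := Stmt18.imp_2_1 hfa
  tfae_finish
end
end

section
/- Let f be holomorphic on the unit disk 𝔻 with sup_{0<r<1} (1/2π)∫₀^{2π} log(1+|f(r e^{iθ})|) dθ < ∞ (f is in the Nevanlinna class), and suppose f* : [0,2π] → ℂ is a measurable function such that f(r e^{iθ}) → f*(θ) as r ↑ 1 for almost every θ. Then the following are equivalent: (i) lim_{r↑1} (1/2π)∫₀^{2π} log⁺|f(r e^{iθ})| dθ = (1/2π)∫₀^{2π} log⁺|f*(θ)| dθ; (ii) lim_{r↑1} (1/2π)∫₀^{2π} log(1+|f(r e^{iθ}) − f*(θ)|) dθ = 0; (iii) lim_{r↑1} ⦀f − f_r⦀ = 0, where f_r(z) = f(rz) and ⦀g⦀ = sup_{0<s<1} (1/2π)∫₀^{2π} log(1+|g(s e^{iθ})|) dθ. -/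
open Metric Filter Finset
open scoped BigOperators Real Topology

noncomputable section

namespace Stmt19
open MeasureTheory
open scoped ENNReal


lemma log1p_nonneg (x : ℝ) (hx : 0 ≤ x) : 0 ≤ Real.log (1 + x) :=
  Real.log_nonneg (by linarith)

lemma log1p_mono {x y : ℝ} (hx : 0 ≤ x) (h : x ≤ y) :
    Real.log (1 + x) ≤ Real.log (1 + y) :=
  Real.log_le_log (by linarith) (by linarith)

lemma log1p_add_le (a b : ℝ) (ha : 0 ≤ a) (hb : 0 ≤ b) :
    Real.log (1 + (a + b)) ≤ Real.log (1 + a) + Real.log (1 + b) := by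
  have h1 : (1:ℝ) + (a + b) ≤ (1 + a) * (1 + b) := by nlinarith
  calc Real.log (1 + (a + b)) ≤ Real.log ((1 + a) * (1 + b)) :=
        Real.log_le_log (by linarith) h1
    _ = Real.log (1 + a) + Real.log (1 + b) :=
        Real.log_mul (by linarith) (by linarith)

lemma log1p_norm_add (a b : ℂ) :
    Real.log (1 + ‖a + b‖) ≤ Real.log (1 + ‖a‖) + Real.log (1 + ‖b‖) := by
  refine le_trans (log1p_mono (norm_nonneg _) (norm_add_le a b)) ?_
  exact log1p_add_le _ _ (norm_nonneg _) (norm_nonneg _)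

lemma log1p_norm_sub (a b : ℂ) :
    Real.log (1 + ‖a - b‖) ≤ Real.log (1 + ‖a‖) + Real.log (1 + ‖b‖) := by
  have := log1p_norm_add a (-b)
  simpa [sub_eq_add_neg] using this

/-- `log⁺` lemmas -/
lemma logplus_nonneg (x : ℝ) : 0 ≤ Real.log (max x 1) :=
  Real.log_nonneg (le_max_right _ _)

lemma logplus_le_log1p (x : ℝ) (hx : 0 ≤ x) :
    Real.log (max x 1) ≤ Real.log (1 + x) := by
  apply Real.log_le_log (by positivity)
  rcases max_cases x 1 with ⟨h, _⟩ | ⟨h, _⟩ <;> rw [h] <;> linarith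

lemma log1p_le_logplus (x : ℝ) (hx : 0 ≤ x) :
    Real.log (1 + x) ≤ Real.log 2 + Real.log (max x 1) := by
  have h1 : (1:ℝ) + x ≤ 2 * max x 1 := by
    rcases le_total x 1 with h | h
    · rw [max_eq_right h]; linarith
    · rw [max_eq_left h]; linarith
  calc Real.log (1 + x) ≤ Real.log (2 * max x 1) :=
        Real.log_le_log (by linarith) h1
    _ = Real.log 2 + Real.log (max x 1) :=
        Real.log_mul (by norm_num) (by rcases le_total x 1 with h | h <;> simp [max_eq_right, max_eq_left, h] <;> linarith)

lemma logplus_sub_le (a b : ℂ) :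
    Real.log (max ‖a‖ 1) ≤ Real.log (max ‖b‖ 1) + Real.log (1 + ‖a - b‖) := by
  have h1 : ‖a‖ ≤ ‖b‖ + ‖a - b‖ := by
    have h := norm_add_le (a - b) b
    rw [sub_add_cancel] at h
    linarith
  have h2 : max ‖a‖ 1 ≤ max ‖b‖ 1 * (1 + ‖a - b‖) := by
    have hb1 : (1:ℝ) ≤ max ‖b‖ 1 := le_max_right _ _
    have hd : (0:ℝ) ≤ ‖a - b‖ := norm_nonneg _
    rcases le_total ‖a‖ 1 with h | h
    · rw [max_eq_right h]; nlinarith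
    · rw [max_eq_left h]
      have : ‖b‖ ≤ max ‖b‖ 1 := le_max_left _ _
      nlinarith
  calc Real.log (max ‖a‖ 1) ≤ Real.log (max ‖b‖ 1 * (1 + ‖a - b‖)) :=
        Real.log_le_log (by positivity) h2
    _ = _ := Real.log_mul (by positivity) (by positivity)

lemma abs_logplus_sub (a b : ℂ) :
    |Real.log (max ‖a‖ 1) - Real.log (max ‖b‖ 1)| ≤ Real.log (1 + ‖a - b‖) := by
  rw [abs_sub_le_iff]
  constructor
  · have := logplus_sub_le a b; linarith
  · have := logplus_sub_le b a
    rw [show b - a = -(a-b) by ring, norm_neg] at this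
    linarith



variable {μ : MeasureTheory.Measure ℝ}

lemma fatou_mine {g : ℕ → ℝ → ℝ} {G : ℝ → ℝ}
    (hGm : AEMeasurable G μ) (hgm : ∀ n, AEMeasurable (g n) μ)
    (hG0 : ∀ θ, 0 ≤ G θ)
    (hconv : ∀ᵐ θ ∂μ, Tendsto (fun n => g n θ) atTop (nhds (G θ)))
    (M : ℝ) (hM0 : 0 ≤ M)
    (hM : ∀ n, ∫⁻ θ, ENNReal.ofReal (g n θ) ∂μ ≤ ENNReal.ofReal M) :
    MeasureTheory.Integrable G μ ∧ ∫ θ, G θ ∂μ ≤ M := by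
  have hae : ∀ᵐ θ ∂μ, ENNReal.ofReal (G θ) =
      liminf (fun n => ENNReal.ofReal (g n θ)) atTop := by
    filter_upwards [hconv] with θ hθ
    exact ((ENNReal.tendsto_ofReal hθ).liminf_eq).symm
  have key : ∫⁻ θ, ENNReal.ofReal (G θ) ∂μ ≤ ENNReal.ofReal M := by
    calc ∫⁻ θ, ENNReal.ofReal (G θ) ∂μ
        = ∫⁻ θ, liminf (fun n => ENNReal.ofReal (g n θ)) atTop ∂μ :=
          lintegral_congr_ae hae
      _ ≤ liminf (fun n => ∫⁻ θ, ENNReal.ofReal (g n θ) ∂μ) atTop :=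
          lintegral_liminf_le' fun n =>
            ENNReal.measurable_ofReal.comp_aemeasurable (hgm n)
      _ ≤ ENNReal.ofReal M := by
          refine liminf_le_of_le ?_ ?_
          · isBoundedDefault
          · intro b hb
            rcases (hb.and (Eventually.of_forall hM)).exists with ⟨n, hn1, hn2⟩
            exact hn1.trans hn2
  have hGae : 0 ≤ᵐ[μ] G := Eventually.of_forall hG0
  have hint : MeasureTheory.Integrable G μ := by
    refine ⟨hGm.aestronglyMeasurable, ?_⟩
    rw [hasFiniteIntegral_iff_ofReal hGae]
    exact lt_of_le_of_lt key ENNReal.ofReal_lt_top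
  refine ⟨hint, ?_⟩
  rw [integral_eq_lintegral_of_nonneg_ae hGae hGm.aestronglyMeasurable]
  calc (∫⁻ θ, ENNReal.ofReal (G θ) ∂μ).toReal ≤ (ENNReal.ofReal M).toReal :=
        ENNReal.toReal_mono ENNReal.ofReal_ne_top key
    _ = M := ENNReal.toReal_ofReal hM0

lemma gdct_mine {h g : ℕ → ℝ → ℝ} {G : ℝ → ℝ}
    (hhm : ∀ n, AEMeasurable (h n) μ) (hgm : ∀ n, AEMeasurable (g n) μ)
    (hle : ∀ n, ∀ᵐ θ ∂μ, h n θ ≤ g n θ)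
    (hh : ∀ᵐ θ ∂μ, Tendsto (fun n => h n θ) atTop (nhds 0))
    (hgG : ∀ᵐ θ ∂μ, Tendsto (fun n => g n θ) atTop (nhds (G θ)))
    (hGfin : ∫⁻ θ, ENNReal.ofReal (G θ) ∂μ ≠ ∞)
    (hint : Tendsto (fun n => ∫⁻ θ, ENNReal.ofReal (g n θ) ∂μ) atTop
      (nhds (∫⁻ θ, ENNReal.ofReal (G θ) ∂μ))) :
    Tendsto (fun n => ∫⁻ θ, ENNReal.ofReal (h n θ) ∂μ) atTop (nhds 0) := by
  set A := ∫⁻ θ, ENNReal.ofReal (G θ) ∂μ with hA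
  rw [ENNReal.tendsto_nhds_zero]
  intro ε hε
  -- Fatou for g - h
  have hfat : A ≤ liminf
      (fun n => ∫⁻ θ, (ENNReal.ofReal (g n θ) - ENNReal.ofReal (h n θ)) ∂μ) atTop := by
    have hptw : ∀ᵐ θ ∂μ, ENNReal.ofReal (G θ) =
        liminf (fun n => ENNReal.ofReal (g n θ) - ENNReal.ofReal (h n θ)) atTop := by
      filter_upwards [hh, hgG] with θ h1 h2
      have ht : Tendsto (fun n => ENNReal.ofReal (g n θ) - ENNReal.ofReal (h n θ)) atTop
          (nhds (ENNReal.ofReal (G θ) - 0)) := by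
        exact ENNReal.Tendsto.sub (ENNReal.tendsto_ofReal h2)
          (by simpa using ENNReal.tendsto_ofReal h1) (Or.inl ENNReal.ofReal_ne_top)
      simpa using ht.liminf_eq.symm
    calc A = ∫⁻ θ, liminf (fun n => ENNReal.ofReal (g n θ) - ENNReal.ofReal (h n θ)) atTop ∂μ :=
          lintegral_congr_ae hptw
      _ ≤ _ := lintegral_liminf_le' fun n =>
          (ENNReal.measurable_ofReal.comp_aemeasurable (hgm n)).sub
            (ENNReal.measurable_ofReal.comp_aemeasurable (hhm n))
  have h1 : ∀ᶠ n in atTop, ∫⁻ θ, ENNReal.ofReal (g n θ) ∂μ < A + ε / 2 := by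
    refine hint.eventually_lt_const ?_
    exact ENNReal.lt_add_right hGfin (by simpa using (ENNReal.half_pos hε.ne').ne')
  have h2 : ∀ᶠ n in atTop, A - ε / 2 ≤
      ∫⁻ θ, (ENNReal.ofReal (g n θ) - ENNReal.ofReal (h n θ)) ∂μ := by
    rcases eq_or_ne A 0 with hA0 | hA0
    · simp [hA0]
    · have hlt : A - ε / 2 < A := ENNReal.sub_lt_self hGfin hA0
        (by simpa using (ENNReal.half_pos hε.ne').ne')
      filter_upwards [eventually_lt_of_lt_liminf (lt_of_lt_of_le hlt hfat)] with n hn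
      exact hn.le
  filter_upwards [h1, h2] with n hn1 hn2
  have hmono : ∫⁻ θ, ENNReal.ofReal (h n θ) ∂μ ≤ ∫⁻ θ, ENNReal.ofReal (g n θ) ∂μ := by
    refine lintegral_mono_ae ?_
    filter_upwards [hle n] with θ hθ
    exact ENNReal.ofReal_le_ofReal hθ
  have hhfin : ∫⁻ θ, ENNReal.ofReal (h n θ) ∂μ ≠ ∞ :=
    (lt_of_le_of_lt hmono (hn1.trans_le le_top)).ne
  have hsub : ∫⁻ θ, (ENNReal.ofReal (g n θ) - ENNReal.ofReal (h n θ)) ∂μ =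
      ∫⁻ θ, ENNReal.ofReal (g n θ) ∂μ - ∫⁻ θ, ENNReal.ofReal (h n θ) ∂μ := by
    refine lintegral_sub' (ENNReal.measurable_ofReal.comp_aemeasurable (hhm n)) hhfin ?_
    filter_upwards [hle n] with θ hθ
    exact ENNReal.ofReal_le_ofReal hθ
  rw [hsub] at hn2
  -- arithmetic: from A - ε/2 ≤ ∫g - ∫h and ∫g < A + ε/2 conclude ∫h ≤ ε
  set X := ∫⁻ θ, ENNReal.ofReal (h n θ) ∂μ
  set Y := ∫⁻ θ, ENNReal.ofReal (g n θ) ∂μ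
  have hXY : X ≤ Y := hmono
  have hkey : X + (A - ε / 2) ≤ Y := by
    calc X + (A - ε / 2) ≤ X + (Y - X) := by
          exact add_le_add_right hn2 X
      _ = Y := add_tsub_cancel_of_le hXY
  have hY : Y ≤ (A - ε / 2) + ε := by
    calc Y ≤ A + ε / 2 := hn1.le
      _ ≤ ((A - ε / 2) + ε / 2) + ε / 2 := add_le_add_left le_tsub_add _
      _ = (A - ε / 2) + (ε / 2 + ε / 2) := by rw [add_assoc]
      _ = (A - ε / 2) + ε := by rw [ENNReal.add_halves]
  have hfc : A - ε / 2 ≠ ∞ := (lt_of_le_of_lt (tsub_le_self) (lt_top_iff_ne_top.mpr hGfin)).ne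
  have := hkey.trans hY
  rw [add_comm X (A - ε/2), add_comm (A - ε/2) ε] at this
  exact (ENNReal.add_le_add_iff_left hfc).mp (by rwa [add_comm ε (A - ε/2)] at this)



def pt (r θ : ℝ) : ℂ := (r:ℂ) * Complex.exp (Complex.I * θ)

lemma norm_pt (r θ : ℝ) (hr : 0 ≤ r) : ‖pt r θ‖ = r := by
  simp [pt, map_mul, Complex.norm_exp, Complex.norm_real,
    abs_of_nonneg hr]

lemma norm_pt_sub_pt (a b θ : ℝ) : ‖pt a θ - pt b θ‖ = |a - b| := by
  have : pt a θ - pt b θ = ((a - b : ℝ) : ℂ) * Complex.exp (Complex.I * θ) := by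
    simp [pt]; ring
  rw [this]
  have he : ‖Complex.exp (Complex.I * θ)‖ = 1 := by
    simp [Complex.norm_exp]
  rw [norm_mul, he, mul_one, Complex.norm_real, Real.norm_eq_abs]

lemma pt_smul (r s θ : ℝ) : (r:ℂ) * pt s θ = pt (r*s) θ := by
  simp [pt]; ring

lemma pt_mem_ball {r : ℝ} (hr0 : 0 ≤ r) (hr1 : r < 1) (θ : ℝ) :
    pt r θ ∈ Metric.ball (0:ℂ) 1 := by
  rw [mem_ball_zero_iff, norm_pt r θ hr0]; exact hr1

lemma cont_pt (r : ℝ) : Continuous (pt r) :=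
  continuous_const.mul (Complex.continuous_exp.comp
    (continuous_const.mul Complex.continuous_ofReal))

lemma contF {f : ℂ → ℂ} (hf : ContinuousOn f (Metric.ball 0 1)) {r : ℝ}
    (hr0 : 0 ≤ r) (hr1 : r < 1) : Continuous fun θ => f (pt r θ) :=
  hf.comp_continuous (cont_pt r) fun θ => pt_mem_ball hr0 hr1 θ

abbrev μ2π : MeasureTheory.Measure ℝ :=
  MeasureTheory.volume.restrict (Set.Ioc 0 (2*Real.pi))

lemma sliceInt1_eq (f : ℂ → ℂ) (r : ℝ) :
    sliceInt1 f r = (1 / (2 * Real.pi)) * ∫ θ, Real.log (1 + ‖f (pt r θ)‖) ∂μ2π := by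
  rw [sliceInt1, intervalIntegral.integral_of_le (by positivity : (0:ℝ) ≤ 2*Real.pi)]
  rfl

lemma integrable_cont {g : ℝ → ℝ} (hg : Continuous g) : Integrable g μ2π :=
  hg.integrableOn_Ioc

lemma μ2π_univ : μ2π Set.univ = ENNReal.ofReal (2*Real.pi) := by
  rw [Measure.restrict_apply_univ, Real.volume_Ioc]
  norm_num

lemma μ2π_univ_toReal : (μ2π Set.univ).toReal = 2*Real.pi := by
  rw [μ2π_univ, ENNReal.toReal_ofReal (by positivity)]

lemma lint_eq_ofReal {g : ℝ → ℝ} (hg : Integrable g μ2π) (h0 : ∀ θ, 0 ≤ g θ) :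
    ∫⁻ θ, ENNReal.ofReal (g θ) ∂μ2π = ENNReal.ofReal (∫ θ, g θ ∂μ2π) :=
  (ofReal_integral_eq_lintegral_ofReal hg (Eventually.of_forall h0)).symm

lemma aemeas_log1p_norm {φ : ℝ → ℂ} (hφ : AEMeasurable φ μ2π) :
    AEMeasurable (fun θ => Real.log (1 + ‖φ θ‖)) μ2π :=
  Real.measurable_log.comp_aemeasurable (aemeasurable_const.add hφ.norm)

lemma aemeas_logplus_norm {φ : ℝ → ℂ} (hφ : AEMeasurable φ μ2π) :
    AEMeasurable (fun θ => Real.log (max ‖φ θ‖ 1)) μ2π :=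
  Real.measurable_log.comp_aemeasurable (hφ.norm.max aemeasurable_const)

lemma tendsto_log1p_norm {ι : Type*} {l : Filter ι} {x : ι → ℂ} {a : ℂ}
    (hx : Tendsto x l (nhds a)) :
    Tendsto (fun n => Real.log (1 + ‖x n‖)) l (nhds (Real.log (1 + ‖a‖))) := by
  have h1 : Tendsto (fun n => 1 + ‖x n‖) l (nhds (1 + ‖a‖)) :=
    tendsto_const_nhds.add hx.norm
  exact ((Real.continuousAt_log (by positivity)).tendsto).comp h1

lemma tendsto_logplus_norm {ι : Type*} {l : Filter ι} {x : ι → ℂ} {a : ℂ}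
    (hx : Tendsto x l (nhds a)) :
    Tendsto (fun n => Real.log (max ‖x n‖ 1)) l (nhds (Real.log (max ‖a‖ 1))) := by
  have h1 : Tendsto (fun n => max ‖x n‖ 1) l (nhds (max ‖a‖ 1)) :=
    hx.norm.max tendsto_const_nhds
  have hpos : (0:ℝ) < max ‖a‖ 1 := lt_of_lt_of_le one_pos (le_max_right _ _)
  exact ((Real.continuousAt_log hpos.ne').tendsto).comp h1

def rseq (n : ℕ) : ℝ := 1 - 1/(n+2)

lemma rseq_mem (n : ℕ) : rseq n ∈ Set.Ioo (0:ℝ) 1 := by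
  have h2 : (2:ℝ) ≤ (n:ℝ) + 2 := by
    have : (0:ℝ) ≤ (n:ℝ) := Nat.cast_nonneg n
    linarith
  have hp : (0:ℝ) < (n:ℝ) + 2 := by linarith
  have hle : 1/((n:ℝ)+2) ≤ 1/2 := by
    apply one_div_le_one_div_of_le <;> linarith
  have hpos : 0 < 1/((n:ℝ)+2) := by positivity
  constructor
  · simp only [rseq]; linarith
  · simp only [rseq]; linarith

lemma rseq_tendsto : Tendsto rseq atTop (nhdsWithin 1 (Set.Ioo 0 1)) := by
  apply tendsto_nhdsWithin_of_tendsto_nhds_of_eventually_within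
  · have h1 : Tendsto (fun n : ℕ => ((n:ℝ)+2)) atTop atTop :=
      tendsto_atTop_add_const_right _ 2 tendsto_natCast_atTop_atTop
    have h2 : Tendsto (fun n : ℕ => 1/((n:ℝ)+2)) atTop (nhds 0) := by
      simpa [one_div, Pi.inv_def] using h1.inv_tendsto_atTop
    have h3 : Tendsto (fun n : ℕ => 1 - 1/((n:ℝ)+2)) atTop (nhds (1 - 0)) :=
      tendsto_const_nhds.sub h2
    unfold rseq
    simpa [one_div] using h3
  · exact Eventually.of_forall rseq_mem


section Ctx
variable {f : ℂ → ℂ} {fstar : ℝ → ℂ} {C : ℝ}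

lemma cont_log1p {φ : ℝ → ℂ} (hφ : Continuous φ) :
    Continuous fun θ => Real.log (1 + ‖φ θ‖) :=
  (continuous_const.add hφ.norm).log (fun θ => (by positivity : (0:ℝ) < 1 + ‖φ θ‖).ne')

lemma cont_logplus {φ : ℝ → ℂ} (hφ : Continuous φ) :
    Continuous fun θ => Real.log (max ‖φ θ‖ 1) :=
  (hφ.norm.max continuous_const).log (fun θ => by positivity)

lemma slice_le_bound (hC : ∀ x ∈ smirnovSet1 f, x ≤ C) {r : ℝ}
    (hr : r ∈ Set.Ioo (0:ℝ) 1) : sliceInt1 f r ≤ C := hC _ ⟨r, hr, rfl⟩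

lemma integral_log1p_le (hC : ∀ x ∈ smirnovSet1 f, x ≤ C) {r : ℝ}
    (hr : r ∈ Set.Ioo (0:ℝ) 1) :
    ∫ θ, Real.log (1 + ‖f (pt r θ)‖) ∂μ2π ≤ 2*Real.pi*C := by
  have h := slice_le_bound hC hr
  rw [sliceInt1_eq] at h
  have hπ : (0:ℝ) < 2*Real.pi := by positivity
  have h2 := mul_le_mul_of_nonneg_left h hπ.le
  calc ∫ θ, Real.log (1 + ‖f (pt r θ)‖) ∂μ2π
      = (2*Real.pi) * ((1/(2*Real.pi)) * ∫ θ, Real.log (1 + ‖f (pt r θ)‖) ∂μ2π) := by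
        field_simp
    _ ≤ (2*Real.pi) * C := h2

lemma boundary_fatou {φ : ℕ → ℝ → ℂ} {Φ : ℝ → ℂ}
    (hφm : ∀ n, AEMeasurable (φ n) μ2π) (hΦm : AEMeasurable Φ μ2π)
    (hconv : ∀ᵐ θ ∂μ2π, Tendsto (fun n => φ n θ) atTop (nhds (Φ θ)))
    (M : ℝ) (hM0 : 0 ≤ M)
    (hφint : ∀ n, Integrable (fun θ => Real.log (1 + ‖φ n θ‖)) μ2π)
    (hM : ∀ n, ∫ θ, Real.log (1 + ‖φ n θ‖) ∂μ2π ≤ M) :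
    Integrable (fun θ => Real.log (1 + ‖Φ θ‖)) μ2π ∧
      ∫ θ, Real.log (1 + ‖Φ θ‖) ∂μ2π ≤ M := by
  refine fatou_mine (aemeas_log1p_norm hΦm) (fun n => aemeas_log1p_norm (hφm n))
    (fun θ => log1p_nonneg _ (norm_nonneg _)) ?_ M hM0 ?_
  · filter_upwards [hconv] with θ hθ
    exact tendsto_log1p_norm hθ
  · intro n
    rw [lint_eq_ofReal (hφint n) (fun θ => log1p_nonneg _ (norm_nonneg _))]
    exact ENNReal.ofReal_le_ofReal (hM n)

lemma fstar_log1p (hfc : ContinuousOn f (Metric.ball 0 1)) (hmeas : Measurable fstar)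
    (hC : ∀ x ∈ smirnovSet1 f, x ≤ C) (hC0 : 0 ≤ C)
    (hlim' : ∀ᵐ θ ∂μ2π, Tendsto (fun r : ℝ => f (pt r θ))
      (nhdsWithin 1 (Set.Ioo 0 1)) (nhds (fstar θ))) :
    Integrable (fun θ => Real.log (1 + ‖fstar θ‖)) μ2π ∧
      ∫ θ, Real.log (1 + ‖fstar θ‖) ∂μ2π ≤ 2*Real.pi*C := by
  refine boundary_fatou (φ := fun n θ => f (pt (rseq n) θ))
    (fun n => (contF hfc (rseq_mem n).1.le (rseq_mem n).2).aemeasurable)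
    hmeas.aemeasurable ?_ (2*Real.pi*C) (by positivity) ?_ ?_
  · filter_upwards [hlim'] with θ hθ
    exact hθ.comp rseq_tendsto
  · intro n
    exact integrable_cont (cont_log1p (contF hfc (rseq_mem n).1.le (rseq_mem n).2))
  · intro n
    exact integral_log1p_le hC (rseq_mem n)

lemma integrable_logplus {φ : ℝ → ℂ} (hφm : AEMeasurable φ μ2π)
    (h : Integrable (fun θ => Real.log (1 + ‖φ θ‖)) μ2π) :
    Integrable (fun θ => Real.log (max ‖φ θ‖ 1)) μ2π := by
  refine h.mono' (aemeas_logplus_norm hφm).aestronglyMeasurable ?_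
  refine Eventually.of_forall fun θ => ?_
  rw [Real.norm_eq_abs, abs_of_nonneg (logplus_nonneg _)]
  exact logplus_le_log1p _ (norm_nonneg _)

lemma integrable_log1p_sub {φ ψ : ℝ → ℂ} (hφm : AEMeasurable φ μ2π)
    (hψm : AEMeasurable ψ μ2π)
    (hφ : Integrable (fun θ => Real.log (1+‖φ θ‖)) μ2π)
    (hψ : Integrable (fun θ => Real.log (1+‖ψ θ‖)) μ2π) :
    Integrable (fun θ => Real.log (1+‖φ θ - ψ θ‖)) μ2π := by
  refine (hφ.add hψ).mono' (aemeas_log1p_norm (hφm.sub hψm)).aestronglyMeasurable ?_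
  refine Eventually.of_forall fun θ => ?_
  rw [Real.norm_eq_abs, abs_of_nonneg (log1p_nonneg _ (norm_nonneg _))]
  exact log1p_norm_sub _ _

lemma integral_log1p_sub_le {φ ψ : ℝ → ℂ} (hφm : AEMeasurable φ μ2π)
    (hψm : AEMeasurable ψ μ2π)
    (hφ : Integrable (fun θ => Real.log (1+‖φ θ‖)) μ2π)
    (hψ : Integrable (fun θ => Real.log (1+‖ψ θ‖)) μ2π) :
    ∫ θ, Real.log (1+‖φ θ - ψ θ‖) ∂μ2π ≤
      (∫ θ, Real.log (1+‖φ θ‖) ∂μ2π) + ∫ θ, Real.log (1+‖ψ θ‖) ∂μ2π := by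
  rw [← integral_add hφ hψ]
  exact integral_mono (integrable_log1p_sub hφm hψm hφ hψ) (hφ.add hψ)
    (fun θ => log1p_norm_sub _ _)

lemma integrable_w (hfc : ContinuousOn f (Metric.ball 0 1)) (hmeas : Measurable fstar)
    (hC : ∀ x ∈ smirnovSet1 f, x ≤ C) (hC0 : 0 ≤ C)
    (hlim' : ∀ᵐ θ ∂μ2π, Tendsto (fun r : ℝ => f (pt r θ))
      (nhdsWithin 1 (Set.Ioo 0 1)) (nhds (fstar θ)))
    {r : ℝ} (hr : r ∈ Set.Ioo (0:ℝ) 1) :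
    Integrable (fun θ => Real.log (1 + ‖f (pt r θ) - fstar θ‖)) μ2π :=
  integrable_log1p_sub (contF hfc hr.1.le hr.2).aemeasurable hmeas.aemeasurable
    (integrable_cont (cont_log1p (contF hfc hr.1.le hr.2)))
    (fstar_log1p hfc hmeas hC hC0 hlim').1

end Ctx

section Impl
variable {f : ℂ → ℂ} {fstar : ℝ → ℂ} {C : ℝ}

lemma ii_to_i (hfc : ContinuousOn f (Metric.ball 0 1)) (hmeas : Measurable fstar)
    (hC : ∀ x ∈ smirnovSet1 f, x ≤ C) (hC0 : 0 ≤ C)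
    (hlim' : ∀ᵐ θ ∂μ2π, Tendsto (fun r : ℝ => f (pt r θ))
      (nhdsWithin 1 (Set.Ioo 0 1)) (nhds (fstar θ)))
    (hii : Tendsto (fun r : ℝ => (1/(2*Real.pi)) *
        ∫ θ, Real.log (1 + ‖f (pt r θ) - fstar θ‖) ∂μ2π)
      (nhdsWithin 1 (Set.Ioo 0 1)) (nhds 0)) :
    Tendsto (fun r : ℝ => (1/(2*Real.pi)) * ∫ θ, Real.log (max ‖f (pt r θ)‖ 1) ∂μ2π)
      (nhdsWithin 1 (Set.Ioo 0 1))
      (nhds ((1/(2*Real.pi)) * ∫ θ, Real.log (max ‖fstar θ‖ 1) ∂μ2π)) := by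
  have hfint := (fstar_log1p hfc hmeas hC hC0 hlim').1
  have hfplus : Integrable (fun θ => Real.log (max ‖fstar θ‖ 1)) μ2π :=
    integrable_logplus hmeas.aemeasurable hfint
  have hbound : ∀ᶠ r in nhdsWithin (1:ℝ) (Set.Ioo 0 1),
      ‖(1/(2*Real.pi)) * ∫ θ, Real.log (max ‖f (pt r θ)‖ 1) ∂μ2π
      - (1/(2*Real.pi)) * ∫ θ, Real.log (max ‖fstar θ‖ 1) ∂μ2π‖
      ≤ (1/(2*Real.pi)) * ∫ θ, Real.log (1 + ‖f (pt r θ) - fstar θ‖) ∂μ2π := by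
    filter_upwards [self_mem_nhdsWithin] with r hr
    have hFi : Integrable (fun θ => Real.log (max ‖f (pt r θ)‖ 1)) μ2π :=
      integrable_cont (cont_logplus (contF hfc hr.1.le hr.2))
    have hwi := integrable_w hfc hmeas hC hC0 hlim' hr
    have hdiff : Integrable (fun θ => Real.log (max ‖f (pt r θ)‖ 1)
        - Real.log (max ‖fstar θ‖ 1)) μ2π := hFi.sub hfplus
    rw [← mul_sub, ← integral_sub hFi hfplus]
    rw [Real.norm_eq_abs, abs_mul, abs_of_nonneg (by positivity : (0:ℝ) ≤ 1/(2*Real.pi))]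
    refine mul_le_mul_of_nonneg_left ?_ (by positivity)
    calc |∫ θ, (Real.log (max ‖f (pt r θ)‖ 1) - Real.log (max ‖fstar θ‖ 1)) ∂μ2π|
        ≤ ∫ θ, ‖Real.log (max ‖f (pt r θ)‖ 1) - Real.log (max ‖fstar θ‖ 1)‖ ∂μ2π :=
          by rw [← Real.norm_eq_abs]; exact norm_integral_le_integral_norm _
      _ ≤ ∫ θ, Real.log (1 + ‖f (pt r θ) - fstar θ‖) ∂μ2π :=
          integral_mono hdiff.norm hwi (fun θ => by
            rw [Real.norm_eq_abs]; exact abs_logplus_sub _ _)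
  have h0 := squeeze_zero_norm' hbound hii
  have h1 := h0.add_const ((1/(2*Real.pi)) * ∫ θ, Real.log (max ‖fstar θ‖ 1) ∂μ2π)
  have h2 : (fun r : ℝ => ((1/(2*Real.pi)) * ∫ θ, Real.log (max ‖f (pt r θ)‖ 1) ∂μ2π
      - (1/(2*Real.pi)) * ∫ θ, Real.log (max ‖fstar θ‖ 1) ∂μ2π)
      + (1/(2*Real.pi)) * ∫ θ, Real.log (max ‖fstar θ‖ 1) ∂μ2π)
      = fun r : ℝ => (1/(2*Real.pi)) * ∫ θ, Real.log (max ‖f (pt r θ)‖ 1) ∂μ2π := by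
    funext r; ring
  rw [h2, zero_add] at h1
  exact h1

end Impl

section Impl2
variable {f : ℂ → ℂ} {fstar : ℝ → ℂ} {C : ℝ}

lemma sliceInt1_nonneg (g : ℂ → ℂ) (r : ℝ) : 0 ≤ sliceInt1 g r := by
  rw [sliceInt1_eq]
  have h : 0 ≤ ∫ θ, Real.log (1 + ‖g (pt r θ)‖) ∂μ2π :=
    integral_nonneg (fun θ => log1p_nonneg _ (norm_nonneg _))
  positivity

lemma slice_sub_eq (f : ℂ → ℂ) (r s : ℝ) :
    sliceInt1 (fun z => f z - f ((r:ℂ)*z)) s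
      = (1/(2*Real.pi)) * ∫ θ, Real.log (1 + ‖f (pt s θ) - f (pt (r*s) θ)‖) ∂μ2π := by
  rw [sliceInt1_eq]
  congr 1
  refine integral_congr_ae (Eventually.of_forall fun θ => ?_)
  simp only [pt_smul]

lemma mul_mem_Ioo {r s : ℝ} (hr : r ∈ Set.Ioo (0:ℝ) 1) (hs : s ∈ Set.Ioo (0:ℝ) 1) :
    r*s ∈ Set.Ioo (0:ℝ) 1 :=
  ⟨mul_pos hr.1 hs.1, by nlinarith [hr.1, hr.2, hs.1, hs.2]⟩

lemma slice_sub_le (hfc : ContinuousOn f (Metric.ball 0 1)) {r s : ℝ}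
    (hr : r ∈ Set.Ioo (0:ℝ) 1) (hs : s ∈ Set.Ioo (0:ℝ) 1) :
    sliceInt1 (fun z => f z - f ((r:ℂ)*z)) s ≤ sliceInt1 f s + sliceInt1 f (r*s) := by
  have hrs := mul_mem_Ioo hr hs
  rw [slice_sub_eq, sliceInt1_eq (r := s), sliceInt1_eq (r := r*s), ← mul_add]
  refine mul_le_mul_of_nonneg_left ?_ (by positivity)
  exact integral_log1p_sub_le (contF hfc hs.1.le hs.2).aemeasurable
    (contF hfc hrs.1.le hrs.2).aemeasurable
    (integrable_cont (cont_log1p (contF hfc hs.1.le hs.2)))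
    (integrable_cont (cont_log1p (contF hfc hrs.1.le hrs.2)))

lemma bdd_sub (hfc : ContinuousOn f (Metric.ball 0 1))
    (hC : ∀ x ∈ smirnovSet1 f, x ≤ C) {r : ℝ} (hr : r ∈ Set.Ioo (0:ℝ) 1) :
    BddAbove (smirnovSet1 (fun z => f z - f ((r:ℂ)*z))) := by
  refine ⟨2*C, ?_⟩
  rintro x ⟨s, hs, rfl⟩
  calc sliceInt1 _ s ≤ sliceInt1 f s + sliceInt1 f (r*s) := slice_sub_le hfc hr hs
    _ ≤ C + C := add_le_add (slice_le_bound hC hs) (slice_le_bound hC (mul_mem_Ioo hr hs))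
    _ = 2*C := by ring

lemma half_mem_Ioo : (1/2 : ℝ) ∈ Set.Ioo (0:ℝ) 1 := by norm_num

lemma tnorm1_nonneg_of_bdd {g : ℂ → ℂ} (hb : BddAbove (smirnovSet1 g)) : 0 ≤ tnorm1 g :=
  le_trans (sliceInt1_nonneg g (1/2)) (le_csSup hb ⟨1/2, half_mem_Ioo, rfl⟩)

lemma tnorm1_le {g : ℂ → ℂ} {ε : ℝ}
    (h : ∀ s ∈ Set.Ioo (0:ℝ) 1, sliceInt1 g s ≤ ε) : tnorm1 g ≤ ε :=
  csSup_le ⟨sliceInt1 g (1/2), ⟨1/2, half_mem_Ioo, rfl⟩⟩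
    (by rintro x ⟨s, hs, rfl⟩; exact h s hs)

lemma le_tnorm1 {g : ℂ → ℂ} (hb : BddAbove (smirnovSet1 g)) {s : ℝ}
    (hs : s ∈ Set.Ioo (0:ℝ) 1) : sliceInt1 g s ≤ tnorm1 g :=
  le_csSup hb ⟨s, hs, rfl⟩

lemma unif_small (hfc : ContinuousOn f (Metric.ball 0 1)) {s1 : ℝ} (hs1 : 0 ≤ s1)
    (hs2 : s1 < 1) {ε : ℝ} (hε : 0 < ε) :
    ∃ δ > 0, ∀ x ∈ Metric.closedBall (0:ℂ) s1, ∀ y ∈ Metric.closedBall (0:ℂ) s1,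
      dist x y < δ → ‖f x - f y‖ < ε := by
  have hsub : Metric.closedBall (0:ℂ) s1 ⊆ Metric.ball 0 1 :=
    closedBall_subset_ball hs2
  have hu : UniformContinuousOn f (Metric.closedBall (0:ℂ) s1) :=
    (isCompact_closedBall _ _).uniformContinuousOn_of_continuous (hfc.mono hsub)
  rw [Metric.uniformContinuousOn_iff] at hu
  obtain ⟨δ, hδ, h⟩ := hu ε hε
  refine ⟨δ, hδ, fun x hx y hy hxy => ?_⟩
  have hd := h x hx y hy hxy
  rwa [dist_eq_norm] at hd

lemma slice_le_const {φ : ℝ → ℂ} (hφ : Continuous φ) {c : ℝ} (hc : 0 ≤ c)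
    (h : ∀ θ, Real.log (1 + ‖φ θ‖) ≤ c) :
    (1/(2*Real.pi)) * ∫ θ, Real.log (1 + ‖φ θ‖) ∂μ2π ≤ c := by
  have h1 : ∫ θ, Real.log (1 + ‖φ θ‖) ∂μ2π ≤ ∫ _θ, c ∂μ2π :=
    integral_mono (integrable_cont (cont_log1p hφ)) (integrable_const c) (fun θ => h θ)
  rw [integral_const, measureReal_def, μ2π_univ_toReal, smul_eq_mul] at h1
  have hπ : (0:ℝ) < 2*Real.pi := by positivity
  calc (1/(2*Real.pi)) * ∫ θ, Real.log (1 + ‖φ θ‖) ∂μ2π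
      ≤ (1/(2*Real.pi)) * (2*Real.pi*c) := by
        refine mul_le_mul_of_nonneg_left ?_ (by positivity)
        linarith [h1]
    _ = c := by field_simp

lemma ii_to_iii (hfc : ContinuousOn f (Metric.ball 0 1)) (hmeas : Measurable fstar)
    (hC : ∀ x ∈ smirnovSet1 f, x ≤ C) (hC0 : 0 ≤ C)
    (hlim' : ∀ᵐ θ ∂μ2π, Tendsto (fun r : ℝ => f (pt r θ))
      (nhdsWithin 1 (Set.Ioo 0 1)) (nhds (fstar θ)))
    (hii : Tendsto (fun r : ℝ => (1/(2*Real.pi)) *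
        ∫ θ, Real.log (1 + ‖f (pt r θ) - fstar θ‖) ∂μ2π)
      (nhdsWithin 1 (Set.Ioo 0 1)) (nhds 0)) :
    Tendsto (fun r : ℝ => tnorm1 (fun z => f z - f ((r:ℂ) * z)))
      (nhdsWithin 1 (Set.Ioo 0 1)) (nhds 0) := by
  rw [Metric.tendsto_nhds]
  intro ε hε
  set ε' := ε/4 with hε'def
  have hε'pos : 0 < ε' := by positivity
  have hev : ∀ᶠ t in nhdsWithin (1:ℝ) (Set.Ioo 0 1),
      (1/(2*Real.pi)) * ∫ θ, Real.log (1 + ‖f (pt t θ) - fstar θ‖) ∂μ2π < ε' :=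
    hii.eventually_lt_const hε'pos
  rw [eventually_nhdsWithin_iff, Metric.eventually_nhds_iff] at hev
  obtain ⟨δ0, hδ0, hδ⟩ := hev
  set δ := min δ0 1 with hδdef
  have hδpos : 0 < δ := lt_min hδ0 one_pos
  have hδ1 : δ ≤ 1 := min_le_right _ _
  have hEsmall : ∀ t ∈ Set.Ioo (0:ℝ) 1, 1 - δ < t →
      (1/(2*Real.pi)) * ∫ θ, Real.log (1 + ‖f (pt t θ) - fstar θ‖) ∂μ2π < ε' := by
    intro t ht h1
    refine hδ ?_ ht
    rw [Real.dist_eq, abs_of_nonpos (by linarith [ht.2] : t - 1 ≤ 0),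
      (by ring : -(t-1) = 1 - t)]
    have h2 : 1 - t < δ := by linarith
    exact lt_of_lt_of_le h2 (min_le_left _ _)
  have hhalf : (0:ℝ) < 1 - δ/2 := by linarith
  set s1 := (1-δ)/(1-δ/2) with hs1def
  have hs10 : 0 ≤ s1 := div_nonneg (by linarith) (by linarith)
  have hs11 : s1 < 1 := by rw [div_lt_one hhalf]; linarith
  set ε'' := Real.exp ε' - 1 with hε''def
  have hε''pos : 0 < ε'' := by
    have h := Real.add_one_lt_exp (ne_of_gt hε'pos)
    simp only [hε''def]; linarith
  obtain ⟨δ2, hδ2pos, hUC⟩ := unif_small hfc hs10 hs11 hε''pos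
  have hlog_small : ∀ x : ℝ, 0 ≤ x → x ≤ ε'' → Real.log (1 + x) ≤ ε' := by
    intro x hx0 hx
    calc Real.log (1 + x) ≤ Real.log (1 + ε'') := log1p_mono hx0 hx
      _ = Real.log (Real.exp ε') := by rw [hε''def]; ring_nf
      _ = ε' := Real.log_exp ε'
  have hm1 : max (1-δ/2) (1-δ2) < 1 := max_lt (by linarith) (by linarith)
  have hevr : ∀ᶠ r in nhdsWithin (1:ℝ) (Set.Ioo 0 1),
      r ∈ Set.Ioo (0:ℝ) 1 ∧ max (1-δ/2) (1-δ2) < r := by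
    filter_upwards [self_mem_nhdsWithin,
      eventually_nhdsWithin_of_eventually_nhds (eventually_gt_nhds hm1)] with r h1 h2
    exact ⟨h1, h2⟩
  filter_upwards [hevr] with r hrpair
  obtain ⟨hr, hrm⟩ := hrpair
  have hrhalf : 1 - δ/2 < r := lt_of_le_of_lt (le_max_left _ _) hrm
  have hrδ2 : 1 - δ2 < r := lt_of_le_of_lt (le_max_right _ _) hrm
  have hb : BddAbove (smirnovSet1 (fun z => f z - f ((r:ℂ)*z))) := bdd_sub hfc hC hr
  have key : ∀ s ∈ Set.Ioo (0:ℝ) 1, sliceInt1 (fun z => f z - f ((r:ℂ)*z)) s ≤ 3*ε' := by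
    intro s hs
    rcases le_or_gt (r*s) (1-δ) with hcase | hcase
    · -- uniform continuity case
      have hrs := mul_mem_Ioo hr hs
      have hsle : s ≤ s1 := by
        rw [hs1def, le_div_iff₀ hhalf]
        nlinarith [hs.1, hrhalf, hcase, hs.2]
      rw [slice_sub_eq]
      have hpw : ∀ θ, Real.log (1 + ‖f (pt s θ) - f (pt (r*s) θ)‖) ≤ ε' := by
        intro θ
        have hx : pt s θ ∈ Metric.closedBall (0:ℂ) s1 := by
          rw [Metric.mem_closedBall, dist_zero_right, norm_pt _ _ hs.1.le]; exact hsle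
        have hy : pt (r*s) θ ∈ Metric.closedBall (0:ℂ) s1 := by
          rw [Metric.mem_closedBall, dist_zero_right, norm_pt _ _ hrs.1.le]
          nlinarith [hs.1, hr.2]
        have hdist : dist (pt s θ) (pt (r*s) θ) < δ2 := by
          rw [dist_eq_norm, norm_pt_sub_pt]
          rw [abs_of_nonneg (by nlinarith [hs.1, hr.2])]
          nlinarith [hs.1, hs.2, hrδ2]
        have := hUC _ hx _ hy hdist
        exact hlog_small _ (norm_nonneg _) this.le
      refine le_trans (slice_le_const ?_ hε'pos.le hpw) (by linarith)
      exact (contF hfc hs.1.le hs.2).sub (contF hfc hrs.1.le hrs.2)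
    · -- boundary case
      have hrs := mul_mem_Ioo hr hs
      have hs' : 1 - δ < s := lt_of_lt_of_le hcase (by nlinarith [hr.2, hs.1])
      have hES := hEsmall s hs hs'
      have hERS := hEsmall (r*s) hrs hcase
      rw [slice_sub_eq]
      have hws := integrable_w hfc hmeas hC hC0 hlim' hs
      have hwrs := integrable_w hfc hmeas hC hC0 hlim' hrs
      have hsub := integral_log1p_sub_le
        (φ := fun θ => f (pt s θ) - fstar θ) (ψ := fun θ => f (pt (r*s) θ) - fstar θ)
        ((contF hfc hs.1.le hs.2).aemeasurable.sub hmeas.aemeasurable)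
        ((contF hfc hrs.1.le hrs.2).aemeasurable.sub hmeas.aemeasurable) hws hwrs
      have heq : (fun θ => Real.log (1 + ‖(f (pt s θ) - fstar θ) - (f (pt (r*s) θ) - fstar θ)‖))
          = fun θ => Real.log (1 + ‖f (pt s θ) - f (pt (r*s) θ)‖) := by
        funext θ; congr 2; ring_nf
      rw [heq] at hsub
      calc (1/(2*Real.pi)) * ∫ θ, Real.log (1 + ‖f (pt s θ) - f (pt (r*s) θ)‖) ∂μ2π
          ≤ (1/(2*Real.pi)) * ((∫ θ, Real.log (1 + ‖f (pt s θ) - fstar θ‖) ∂μ2π)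
            + ∫ θ, Real.log (1 + ‖f (pt (r*s) θ) - fstar θ‖) ∂μ2π) :=
            mul_le_mul_of_nonneg_left hsub (by positivity)
        _ = ((1/(2*Real.pi)) * ∫ θ, Real.log (1 + ‖f (pt s θ) - fstar θ‖) ∂μ2π)
            + (1/(2*Real.pi)) * ∫ θ, Real.log (1 + ‖f (pt (r*s) θ) - fstar θ‖) ∂μ2π := by
            ring
        _ ≤ 3*ε' := by linarith
  have htle : tnorm1 (fun z => f z - f ((r:ℂ)*z)) ≤ 3*ε' := tnorm1_le key
  have ht0 : 0 ≤ tnorm1 (fun z => f z - f ((r:ℂ)*z)) := tnorm1_nonneg_of_bdd hb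
  rw [Real.dist_eq, sub_zero, abs_of_nonneg ht0]
  calc tnorm1 (fun z => f z - f ((r:ℂ)*z)) ≤ 3*ε' := htle
    _ < ε := by rw [hε'def]; linarith

end Impl2

lemma log1p_norm_sub_three (a b c d : ℂ) :
    Real.log (1+‖a-d‖) ≤ Real.log (1+‖a-b‖) + Real.log (1+‖b-c‖) + Real.log (1+‖c-d‖) := by
  have h1 : a - d = (a-b) + ((b-c)+(c-d)) := by ring
  rw [h1]
  refine le_trans (log1p_norm_add _ _) ?_
  have h2 := log1p_norm_add (b-c) (c-d)
  linarith

lemma l_neBot : (nhdsWithin (1:ℝ) (Set.Ioo 0 1)).NeBot := by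
  rw [← mem_closure_iff_nhdsWithin_neBot, closure_Ioo (by norm_num : (0:ℝ) ≠ 1)]
  exact ⟨by norm_num, le_refl 1⟩

section Impl3
variable {f : ℂ → ℂ} {fstar : ℝ → ℂ} {C : ℝ}

lemma iii_to_ii (hfc : ContinuousOn f (Metric.ball 0 1)) (hmeas : Measurable fstar)
    (hC : ∀ x ∈ smirnovSet1 f, x ≤ C) (hC0 : 0 ≤ C)
    (hlim' : ∀ᵐ θ ∂μ2π, Tendsto (fun r : ℝ => f (pt r θ))
      (nhdsWithin 1 (Set.Ioo 0 1)) (nhds (fstar θ)))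
    (hiii : Tendsto (fun r : ℝ => tnorm1 (fun z => f z - f ((r:ℂ) * z)))
      (nhdsWithin 1 (Set.Ioo 0 1)) (nhds 0)) :
    Tendsto (fun s : ℝ => (1/(2*Real.pi)) *
        ∫ θ, Real.log (1 + ‖f (pt s θ) - fstar θ‖) ∂μ2π)
      (nhdsWithin 1 (Set.Ioo 0 1)) (nhds 0) := by
  have hNB : (nhdsWithin (1:ℝ) (Set.Ioo 0 1)).NeBot := l_neBot
  rw [Metric.tendsto_nhds]
  intro ε hε
  set ε' := ε/4 with hε'def
  have hε'pos : 0 < ε' := by positivity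
  -- choose r with small tail norm
  have hev1 : ∀ᶠ r : ℝ in nhdsWithin (1:ℝ) (Set.Ioo 0 1),
      tnorm1 (fun z => f z - f ((r:ℂ) * z)) < ε' := by
    have h := Metric.tendsto_nhds.mp hiii ε' hε'pos
    filter_upwards [h] with r hr
    rw [Real.dist_eq, sub_zero] at hr
    exact lt_of_le_of_lt (le_abs_self _) hr
  obtain ⟨r, htn, hrI⟩ := (hev1.and self_mem_nhdsWithin).exists
  have hb : BddAbove (smirnovSet1 (fun z => f z - f ((r:ℂ)*z))) := bdd_sub hfc hC hrI
  have ht0 : 0 ≤ tnorm1 (fun z => f z - f ((r:ℂ)*z)) := tnorm1_nonneg_of_bdd hb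
  -- Fatou-type bound for the boundary term
  have hbf : Integrable (fun θ => Real.log (1 + ‖f (pt r θ) - fstar θ‖)) μ2π ∧
      ∫ θ, Real.log (1 + ‖f (pt r θ) - fstar θ‖) ∂μ2π
        ≤ 2*Real.pi * tnorm1 (fun z => f z - f ((r:ℂ)*z)) := by
    refine boundary_fatou
      (φ := fun n θ => f (pt (r * rseq n) θ) - f (pt (rseq n) θ))
      (Φ := fun θ => f (pt r θ) - fstar θ)
      (fun n => ((contF hfc (mul_mem_Ioo hrI (rseq_mem n)).1.le
          (mul_mem_Ioo hrI (rseq_mem n)).2).sub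
        (contF hfc (rseq_mem n).1.le (rseq_mem n).2)).aemeasurable)
      ((contF hfc hrI.1.le hrI.2).aemeasurable.sub hmeas.aemeasurable) ?_ _
      (by positivity) ?_ ?_
    · filter_upwards [hlim'] with θ hθ
      have part1 : Tendsto (fun n => f (pt (rseq n) θ)) atTop (nhds (fstar θ)) :=
        hθ.comp rseq_tendsto
      have hcontA : ContinuousAt f (pt r θ) :=
        hfc.continuousAt (Metric.isOpen_ball.mem_nhds (pt_mem_ball hrI.1.le hrI.2 θ))
      have hca : Continuous fun a : ℝ => pt a θ :=
        Complex.continuous_ofReal.mul continuous_const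
      have hr1 : Tendsto (fun n => r * rseq n) atTop (nhds r) := by
        have := (tendsto_const_nhds (x := r)).mul
          (rseq_tendsto.mono_right nhdsWithin_le_nhds)
        simpa using this
      have hpt : Tendsto (fun n => pt (r * rseq n) θ) atTop (nhds (pt r θ)) :=
        (hca.tendsto r).comp hr1
      exact (hcontA.tendsto.comp hpt).sub part1
    · intro n
      refine integrable_cont (cont_log1p ?_)
      exact ((contF hfc (mul_mem_Ioo hrI (rseq_mem n)).1.le
          (mul_mem_Ioo hrI (rseq_mem n)).2).sub
        (contF hfc (rseq_mem n).1.le (rseq_mem n).2))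
    · intro n
      have heq : ∫ θ, Real.log (1 + ‖f (pt (r * rseq n) θ) - f (pt (rseq n) θ)‖) ∂μ2π
          = ∫ θ, Real.log (1 + ‖f (pt (rseq n) θ) - f (pt (r * rseq n) θ)‖) ∂μ2π := by
        refine integral_congr_ae (Eventually.of_forall fun θ => ?_)
        simp only
        rw [norm_sub_rev]
      rw [heq]
      have hsl : (1/(2*Real.pi)) *
          ∫ θ, Real.log (1 + ‖f (pt (rseq n) θ) - f (pt (r * rseq n) θ)‖) ∂μ2π
          ≤ tnorm1 (fun z => f z - f ((r:ℂ)*z)) := by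
        rw [← slice_sub_eq]
        exact le_tnorm1 hb (rseq_mem n)
      have hπ : (0:ℝ) < 2*Real.pi := by positivity
      have h2 := mul_le_mul_of_nonneg_left hsl hπ.le
      calc ∫ θ, Real.log (1 + ‖f (pt (rseq n) θ) - f (pt (r * rseq n) θ)‖) ∂μ2π
          = (2*Real.pi) * ((1/(2*Real.pi)) *
            ∫ θ, Real.log (1 + ‖f (pt (rseq n) θ) - f (pt (r * rseq n) θ)‖) ∂μ2π) := by
            field_simp
        _ ≤ 2*Real.pi * tnorm1 (fun z => f z - f ((r:ℂ)*z)) := h2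
  -- uniform continuity near radius r
  set ε'' := Real.exp ε' - 1 with hε''def
  have hε''pos : 0 < ε'' := by
    have h := Real.add_one_lt_exp (ne_of_gt hε'pos)
    simp only [hε''def]; linarith
  have hlog_small : ∀ x : ℝ, 0 ≤ x → x ≤ ε'' → Real.log (1 + x) ≤ ε' := by
    intro x hx0 hx
    calc Real.log (1 + x) ≤ Real.log (1 + ε'') := log1p_mono hx0 hx
      _ = Real.log (Real.exp ε') := by rw [hε''def]; ring_nf
      _ = ε' := Real.log_exp ε'
  obtain ⟨δ2, hδ2pos, hUC⟩ := unif_small hfc hrI.1.le hrI.2 hε''pos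
  have hm1 : (1 - δ2 : ℝ) < 1 := by linarith
  have hevs : ∀ᶠ s in nhdsWithin (1:ℝ) (Set.Ioo 0 1),
      s ∈ Set.Ioo (0:ℝ) 1 ∧ 1 - δ2 < s := by
    filter_upwards [self_mem_nhdsWithin,
      eventually_nhdsWithin_of_eventually_nhds (eventually_gt_nhds hm1)] with s h1 h2
    exact ⟨h1, h2⟩
  filter_upwards [hevs] with s hspair
  obtain ⟨hs, hsδ2⟩ := hspair
  have hrs := mul_mem_Ioo hrI hs
  -- pointwise bound on the B term
  have hBpw : ∀ θ, Real.log (1 + ‖f (pt (r*s) θ) - f (pt r θ)‖) ≤ ε' := by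
    intro θ
    have hx : pt (r*s) θ ∈ Metric.closedBall (0:ℂ) r := by
      rw [Metric.mem_closedBall, dist_zero_right, norm_pt _ _ hrs.1.le]
      nlinarith [hrI.1, hs.2]
    have hy : pt r θ ∈ Metric.closedBall (0:ℂ) r := by
      rw [Metric.mem_closedBall, dist_zero_right, norm_pt _ _ hrI.1.le]
    have hdist : dist (pt (r*s) θ) (pt r θ) < δ2 := by
      rw [dist_eq_norm, norm_pt_sub_pt, abs_of_nonpos (by nlinarith [hrI.1, hs.2] : r*s - r ≤ 0)]
      have h3 : -(r*s - r) = r*(1-s) := by ring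
      rw [h3]
      nlinarith [hrI.1, hrI.2, hsδ2]
    exact hlog_small _ (norm_nonneg _) (hUC _ hx _ hy hdist).le
  -- assemble
  have hA : Continuous fun θ => Real.log (1 + ‖f (pt s θ) - f (pt (r*s) θ)‖) :=
    cont_log1p ((contF hfc hs.1.le hs.2).sub (contF hfc hrs.1.le hrs.2))
  have hB : Continuous fun θ => Real.log (1 + ‖f (pt (r*s) θ) - f (pt r θ)‖) :=
    cont_log1p ((contF hfc hrs.1.le hrs.2).sub (contF hfc hrI.1.le hrI.2))
  have hintA := integrable_cont hA
  have hintB := integrable_cont hB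
  have hintC := hbf.1
  have hws := integrable_w hfc hmeas hC hC0 hlim' hs
  have hmono : ∫ θ, Real.log (1 + ‖f (pt s θ) - fstar θ‖) ∂μ2π
      ≤ (∫ θ, Real.log (1 + ‖f (pt s θ) - f (pt (r*s) θ)‖) ∂μ2π)
        + (∫ θ, Real.log (1 + ‖f (pt (r*s) θ) - f (pt r θ)‖) ∂μ2π)
        + ∫ θ, Real.log (1 + ‖f (pt r θ) - fstar θ‖) ∂μ2π := by
    calc ∫ θ, Real.log (1 + ‖f (pt s θ) - fstar θ‖) ∂μ2π
        ≤ ∫ θ, (Real.log (1 + ‖f (pt s θ) - f (pt (r*s) θ)‖)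
          + Real.log (1 + ‖f (pt (r*s) θ) - f (pt r θ)‖)
          + Real.log (1 + ‖f (pt r θ) - fstar θ‖)) ∂μ2π :=
          integral_mono hws ((hintA.add hintB).add hintC)
            (fun θ => log1p_norm_sub_three _ _ _ _)
      _ = _ := by
          have hAB : Integrable (fun θ => Real.log (1 + ‖f (pt s θ) - f (pt (r*s) θ)‖)
              + Real.log (1 + ‖f (pt (r*s) θ) - f (pt r θ)‖)) μ2π := hintA.add hintB
          rw [integral_add hAB hintC, integral_add hintA hintB]
  have hπ : (0:ℝ) < 2*Real.pi := by positivity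
  have hAle : (1/(2*Real.pi)) * ∫ θ, Real.log (1 + ‖f (pt s θ) - f (pt (r*s) θ)‖) ∂μ2π
      ≤ tnorm1 (fun z => f z - f ((r:ℂ)*z)) := by
    rw [← slice_sub_eq]
    exact le_tnorm1 hb hs
  have hBle : (1/(2*Real.pi)) * ∫ θ, Real.log (1 + ‖f (pt (r*s) θ) - f (pt r θ)‖) ∂μ2π
      ≤ ε' := slice_le_const ((contF hfc hrs.1.le hrs.2).sub (contF hfc hrI.1.le hrI.2))
        hε'pos.le hBpw
  have hCle : (1/(2*Real.pi)) * ∫ θ, Real.log (1 + ‖f (pt r θ) - fstar θ‖) ∂μ2π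
      ≤ tnorm1 (fun z => f z - f ((r:ℂ)*z)) := by
    have h2 := mul_le_mul_of_nonneg_left hbf.2 (by positivity : (0:ℝ) ≤ 1/(2*Real.pi))
    calc (1/(2*Real.pi)) * ∫ θ, Real.log (1 + ‖f (pt r θ) - fstar θ‖) ∂μ2π
        ≤ (1/(2*Real.pi)) * (2*Real.pi * tnorm1 (fun z => f z - f ((r:ℂ)*z))) := h2
      _ = tnorm1 (fun z => f z - f ((r:ℂ)*z)) := by field_simp
  have hnn : 0 ≤ (1/(2*Real.pi)) * ∫ θ, Real.log (1 + ‖f (pt s θ) - fstar θ‖) ∂μ2π := by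
    have h0 : 0 ≤ ∫ θ, Real.log (1 + ‖f (pt s θ) - fstar θ‖) ∂μ2π :=
      integral_nonneg (fun θ => log1p_nonneg _ (norm_nonneg _))
    positivity
  rw [Real.dist_eq, sub_zero, abs_of_nonneg hnn]
  have hfinal := mul_le_mul_of_nonneg_left hmono (by positivity : (0:ℝ) ≤ 1/(2*Real.pi))
  calc (1/(2*Real.pi)) * ∫ θ, Real.log (1 + ‖f (pt s θ) - fstar θ‖) ∂μ2π
      ≤ (1/(2*Real.pi)) * ((∫ θ, Real.log (1 + ‖f (pt s θ) - f (pt (r*s) θ)‖) ∂μ2π)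
        + (∫ θ, Real.log (1 + ‖f (pt (r*s) θ) - f (pt r θ)‖) ∂μ2π)
        + ∫ θ, Real.log (1 + ‖f (pt r θ) - fstar θ‖) ∂μ2π) := hfinal
    _ = ((1/(2*Real.pi)) * ∫ θ, Real.log (1 + ‖f (pt s θ) - f (pt (r*s) θ)‖) ∂μ2π)
        + ((1/(2*Real.pi)) * ∫ θ, Real.log (1 + ‖f (pt (r*s) θ) - f (pt r θ)‖) ∂μ2π)
        + (1/(2*Real.pi)) * ∫ θ, Real.log (1 + ‖f (pt r θ) - fstar θ‖) ∂μ2π := by ring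
    _ < ε := by rw [hε'def] at *; linarith
  
end Impl3

section Impl4
variable {f : ℂ → ℂ} {fstar : ℝ → ℂ} {C : ℝ}

lemma i_to_ii (hfc : ContinuousOn f (Metric.ball 0 1)) (hmeas : Measurable fstar)
    (hC : ∀ x ∈ smirnovSet1 f, x ≤ C) (hC0 : 0 ≤ C)
    (hlim' : ∀ᵐ θ ∂μ2π, Tendsto (fun r : ℝ => f (pt r θ))
      (nhdsWithin 1 (Set.Ioo 0 1)) (nhds (fstar θ)))
    (hi : Tendsto (fun r : ℝ => (1/(2*Real.pi)) * ∫ θ, Real.log (max ‖f (pt r θ)‖ 1) ∂μ2π)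
      (nhdsWithin 1 (Set.Ioo 0 1))
      (nhds ((1/(2*Real.pi)) * ∫ θ, Real.log (max ‖fstar θ‖ 1) ∂μ2π))) :
    Tendsto (fun r : ℝ => (1/(2*Real.pi)) *
        ∫ θ, Real.log (1 + ‖f (pt r θ) - fstar θ‖) ∂μ2π)
      (nhdsWithin 1 (Set.Ioo 0 1)) (nhds 0) := by
  have hfint := (fstar_log1p hfc hmeas hC hC0 hlim').1
  have hfplus : Integrable (fun θ => Real.log (max ‖fstar θ‖ 1)) μ2π :=
    integrable_logplus hmeas.aemeasurable hfint
  rw [tendsto_iff_seq_tendsto]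
  intro x hx
  set y : ℕ → ℝ := fun n => if x n ∈ Set.Ioo (0:ℝ) 1 then x n else 1/2 with hydef
  have hyeq : ∀ n, x n ∈ Set.Ioo (0:ℝ) 1 → y n = x n := by
    intro n hn
    simp only [hydef]
    exact if_pos hn
  have hymem : ∀ n, y n ∈ Set.Ioo (0:ℝ) 1 := by
    intro n
    by_cases hn : x n ∈ Set.Ioo (0:ℝ) 1
    · rw [hyeq n hn]; exact hn
    · have h9 : y n = 1/2 := by simp only [hydef]; exact if_neg hn
      rw [h9]; exact half_mem_Ioo
  have hxev : ∀ᶠ n in atTop, x n ∈ Set.Ioo (0:ℝ) 1 := hx self_mem_nhdsWithin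
  have hyx : y =ᶠ[atTop] x := by
    filter_upwards [hxev] with n hn
    exact hyeq n hn
  have hy : Tendsto y atTop (nhdsWithin 1 (Set.Ioo 0 1)) := hx.congr' hyx.symm
  suffices hY : Tendsto (fun n => (1/(2*Real.pi)) *
      ∫ θ, Real.log (1 + ‖f (pt (y n) θ) - fstar θ‖) ∂μ2π) atTop (nhds 0) by
    refine hY.congr' ?_
    filter_upwards [hyx] with n hn
    simp only [Function.comp]
    rw [hn]
  set A : ℕ → ℝ → ℝ := fun n θ => Real.log (max ‖f (pt (y n) θ)‖ 1) with hAdef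
  set B : ℝ → ℝ := fun θ => Real.log (max ‖fstar θ‖ 1) with hBdef
  set h : ℕ → ℝ → ℝ := fun n θ => Real.log (1 + ‖f (pt (y n) θ) - fstar θ‖) with hhdef
  set g : ℕ → ℝ → ℝ := fun n θ => 2*Real.log 2 + A n θ + B θ with hgdef
  set G : ℝ → ℝ := fun θ => 2*Real.log 2 + 2 * B θ with hGdef
  have hFc : ∀ n, Continuous fun θ => f (pt (y n) θ) :=
    fun n => contF hfc (hymem n).1.le (hymem n).2
  have hhm : ∀ n, AEMeasurable (h n) μ2π :=
    fun n => aemeas_log1p_norm ((hFc n).aemeasurable.sub hmeas.aemeasurable)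
  have hgm : ∀ n, AEMeasurable (g n) μ2π := fun n =>
    (aemeasurable_const.add (aemeas_logplus_norm (hFc n).aemeasurable)).add
      (aemeas_logplus_norm hmeas.aemeasurable)
  have hAint : ∀ n, Integrable (A n) μ2π :=
    fun n => integrable_cont (cont_logplus (hFc n))
  have hgl : ∀ n, Integrable (g n) μ2π :=
    fun n => ((integrable_const _).add (hAint n)).add hfplus
  have hGint : Integrable G μ2π := (integrable_const _).add (hfplus.const_mul 2)
  have hlog2 : (0:ℝ) ≤ Real.log 2 := Real.log_nonneg one_le_two
  have hg0 : ∀ n θ, 0 ≤ g n θ := fun n θ =>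
    add_nonneg (add_nonneg (by linarith) (logplus_nonneg _)) (logplus_nonneg _)
  have hG0 : ∀ θ, 0 ≤ G θ := fun θ => by
    have := logplus_nonneg (‖fstar θ‖); simp only [hGdef, hBdef]; linarith
  have hle : ∀ n, ∀ᵐ θ ∂μ2π, h n θ ≤ g n θ := by
    intro n
    refine Eventually.of_forall fun θ => ?_
    calc h n θ ≤ Real.log (1+‖f (pt (y n) θ)‖) + Real.log (1+‖fstar θ‖) :=
          log1p_norm_sub _ _
      _ ≤ (Real.log 2 + Real.log (max ‖f (pt (y n) θ)‖ 1))
          + (Real.log 2 + Real.log (max ‖fstar θ‖ 1)) :=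
          add_le_add (log1p_le_logplus _ (norm_nonneg _))
            (log1p_le_logplus _ (norm_nonneg _))
      _ = g n θ := by simp only [hgdef, hAdef, hBdef]; ring
  have hconv_pt : ∀ᵐ θ ∂μ2π, Tendsto (fun n => f (pt (y n) θ)) atTop (nhds (fstar θ)) := by
    filter_upwards [hlim'] with θ hθ
    exact hθ.comp hy
  have hh0 : ∀ᵐ θ ∂μ2π, Tendsto (fun n => h n θ) atTop (nhds 0) := by
    filter_upwards [hconv_pt] with θ hθ
    have hsub : Tendsto (fun n => f (pt (y n) θ) - fstar θ) atTop (nhds 0) := by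
      have h10 : Tendsto (fun n => f (pt (y n) θ) - fstar θ) atTop
          (nhds (fstar θ - fstar θ)) := hθ.sub tendsto_const_nhds
      simpa using h10
    have h2 := tendsto_log1p_norm hsub
    simpa using h2
  have hgG : ∀ᵐ θ ∂μ2π, Tendsto (fun n => g n θ) atTop (nhds (G θ)) := by
    filter_upwards [hconv_pt] with θ hθ
    have h1 := tendsto_logplus_norm hθ
    have h2 : Tendsto (fun n => 2*Real.log 2 + A n θ + B θ) atTop
        (nhds (2*Real.log 2 + B θ + B θ)) :=
      (tendsto_const_nhds.add h1).add tendsto_const_nhds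
    have h3 : G θ = 2*Real.log 2 + B θ + B θ := by simp only [hGdef]; ring
    rw [h3]
    exact h2
  -- integral convergence
  have hIy : Tendsto (fun n => ∫ θ, A n θ ∂μ2π) atTop (nhds (∫ θ, B θ ∂μ2π)) := by
    have hcomp := hi.comp hy
    have hmul := hcomp.const_mul (2*Real.pi)
    have heq : ∀ a : ℝ, (2*Real.pi) * ((1/(2*Real.pi))*a) = a := fun a => by
      field_simp
    have h4 : (fun n => (2*Real.pi) * ((1/(2*Real.pi)) * ∫ θ, A n θ ∂μ2π))
        = fun n => ∫ θ, A n θ ∂μ2π := by funext n; rw [heq]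
    rw [Function.comp_def] at hmul
    rw [h4] at hmul
    rwa [heq] at hmul
  have hgn_eq : ∀ n, ∫ θ, g n θ ∂μ2π
      = (2*Real.log 2)*(2*Real.pi) + (∫ θ, A n θ ∂μ2π) + ∫ θ, B θ ∂μ2π := by
    intro n
    have h1 : Integrable (fun θ => 2*Real.log 2 + A n θ) μ2π :=
      (integrable_const _).add (hAint n)
    simp only [hgdef]
    rw [integral_add h1 hfplus, integral_add (integrable_const _) (hAint n),
      integral_const, measureReal_def, μ2π_univ_toReal, smul_eq_mul]
    ring
  have hG_eq : ∫ θ, G θ ∂μ2π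
      = (2*Real.log 2)*(2*Real.pi) + 2 * ∫ θ, B θ ∂μ2π := by
    simp only [hGdef]
    rw [integral_add (integrable_const _) (hfplus.const_mul 2), integral_const,
      measureReal_def, μ2π_univ_toReal, smul_eq_mul, integral_const_mul]
    ring
  have hIg : Tendsto (fun n => ∫ θ, g n θ ∂μ2π) atTop (nhds (∫ θ, G θ ∂μ2π)) := by
    have h2 : Tendsto (fun n => (2*Real.log 2)*(2*Real.pi) + (∫ θ, A n θ ∂μ2π)
        + ∫ θ, B θ ∂μ2π) atTop
        (nhds ((2*Real.log 2)*(2*Real.pi) + (∫ θ, B θ ∂μ2π) + ∫ θ, B θ ∂μ2π)) :=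
      (tendsto_const_nhds.add hIy).add tendsto_const_nhds
    have h3 : (fun n => ∫ θ, g n θ ∂μ2π) = fun n => (2*Real.log 2)*(2*Real.pi)
        + (∫ θ, A n θ ∂μ2π) + ∫ θ, B θ ∂μ2π := by funext n; exact hgn_eq n
    rw [h3, hG_eq]
    have h5 : (2*Real.log 2)*(2*Real.pi) + 2 * ∫ θ, B θ ∂μ2π
        = (2*Real.log 2)*(2*Real.pi) + (∫ θ, B θ ∂μ2π) + ∫ θ, B θ ∂μ2π := by ring
    rw [h5]
    exact h2
  have hGlint : ∫⁻ θ, ENNReal.ofReal (G θ) ∂μ2π = ENNReal.ofReal (∫ θ, G θ ∂μ2π) :=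
    lint_eq_ofReal hGint hG0
  have hGfin : ∫⁻ θ, ENNReal.ofReal (G θ) ∂μ2π ≠ ∞ := by
    rw [hGlint]; exact ENNReal.ofReal_ne_top
  have hgl_lint : Tendsto (fun n => ∫⁻ θ, ENNReal.ofReal (g n θ) ∂μ2π) atTop
      (nhds (∫⁻ θ, ENNReal.ofReal (G θ) ∂μ2π)) := by
    rw [hGlint]
    refine Tendsto.congr (fun n => (lint_eq_ofReal (hgl n) (hg0 n)).symm) ?_
    exact ENNReal.tendsto_ofReal hIg
  have hmain := gdct_mine hhm hgm hle hh0 hgG hGfin hgl_lint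
  have hint_h : ∀ n, ∫ θ, h n θ ∂μ2π = (∫⁻ θ, ENNReal.ofReal (h n θ) ∂μ2π).toReal := by
    intro n
    exact integral_eq_lintegral_of_nonneg_ae
      (Eventually.of_forall fun θ => log1p_nonneg _ (norm_nonneg _))
      (hhm n).aestronglyMeasurable
  have htoreal : Tendsto (fun n => (∫⁻ θ, ENNReal.ofReal (h n θ) ∂μ2π).toReal) atTop
      (nhds 0) := by
    have h6 := (ENNReal.tendsto_toReal (by simp : (0:ℝ≥0∞) ≠ ∞)).comp hmain
    simpa [Function.comp_def] using h6
  have h7 : Tendsto (fun n => ∫ θ, h n θ ∂μ2π) atTop (nhds 0) :=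
    Tendsto.congr (fun n => (hint_h n).symm) htoreal
  have h8 := h7.const_mul (1/(2*Real.pi))
  simpa using h8

end Impl4

lemma interval_eq (g : ℝ → ℝ) :
    ∫ θ in (0:ℝ)..(2 * Real.pi), g θ = ∫ θ, g θ ∂μ2π := by
  rw [intervalIntegral.integral_of_le (by positivity : (0:ℝ) ≤ 2*Real.pi)]

end Stmt19

open Stmt19 MeasureTheory

/-- three equivalent definitions of the Smirnov class on the disk. -/
theorem stmt_19 (f : ℂ → ℂ) (hfhol : DifferentiableOn ℂ f (Metric.ball 0 1))
    (hfbdd : BddAbove (smirnovSet1 f))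
    (fstar : ℝ → ℂ) (hmeas : Measurable fstar)
    (hlim : ∀ᵐ (θ : ℝ) ∂(MeasureTheory.volume.restrict (Set.Icc (0:ℝ) (2 * Real.pi))),
      Tendsto (fun r : ℝ => f ((r:ℂ) * Complex.exp (Complex.I * (θ:ℂ))))
        (nhdsWithin 1 (Set.Ioo 0 1)) (nhds (fstar θ))) :
    [ -- (i) convergence of the log⁺ integral means
      Tendsto (fun r : ℝ => (1 / (2 * Real.pi)) *
          ∫ θ in (0:ℝ)..(2 * Real.pi),
            Real.log (max ‖f ((r:ℂ) * Complex.exp (Complex.I * θ))‖ 1))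
        (nhdsWithin 1 (Set.Ioo 0 1))
        (nhds ((1 / (2 * Real.pi)) *
          ∫ θ in (0:ℝ)..(2 * Real.pi), Real.log (max ‖fstar θ‖ 1))),
      -- (ii) convergence to the boundary values
      Tendsto (fun r : ℝ => (1 / (2 * Real.pi)) *
          ∫ θ in (0:ℝ)..(2 * Real.pi),
            Real.log (1 + ‖f ((r:ℂ) * Complex.exp (Complex.I * θ)) - fstar θ‖))
        (nhdsWithin 1 (Set.Ioo 0 1)) (nhds 0),
      -- (iii) `⦀f − f_r⦀ → 0`
      Tendsto (fun r : ℝ => tnorm1 (fun z => f z - f ((r:ℂ) * z)))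
        (nhdsWithin 1 (Set.Ioo 0 1)) (nhds 0) ].TFAE := by
  have hfc : ContinuousOn f (Metric.ball 0 1) := hfhol.continuousOn
  obtain ⟨C0, hC0mem⟩ := hfbdd
  have hC : ∀ x ∈ smirnovSet1 f, x ≤ max C0 0 :=
    fun x hx => le_trans (hC0mem hx) (le_max_left _ _)
  have hC0 : (0:ℝ) ≤ max C0 0 := le_max_right _ _
  have hlim' : ∀ᵐ θ ∂μ2π, Tendsto (fun r : ℝ => f (pt r θ))
      (nhdsWithin 1 (Set.Ioo 0 1)) (nhds (fstar θ)) :=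
    ae_restrict_of_ae_restrict_of_subset Set.Ioc_subset_Icc_self hlim
  have e1 : ∀ r : ℝ, (∫ θ in (0:ℝ)..(2 * Real.pi),
        Real.log (max ‖f ((r:ℂ) * Complex.exp (Complex.I * θ))‖ 1))
      = ∫ θ, Real.log (max ‖f (pt r θ)‖ 1) ∂μ2π :=
    fun r => interval_eq _
  have e1s : (∫ θ in (0:ℝ)..(2 * Real.pi), Real.log (max ‖fstar θ‖ 1))
      = ∫ θ, Real.log (max ‖fstar θ‖ 1) ∂μ2π := interval_eq _
  have e2 : ∀ r : ℝ, (∫ θ in (0:ℝ)..(2 * Real.pi),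
        Real.log (1 + ‖f ((r:ℂ) * Complex.exp (Complex.I * θ)) - fstar θ‖))
      = ∫ θ, Real.log (1 + ‖f (pt r θ) - fstar θ‖) ∂μ2π :=
    fun r => interval_eq _
  tfae_have 1 → 2
  · intro h1
    simp only [e1, e1s, e2] at *
    exact i_to_ii hfc hmeas hC hC0 hlim' h1
  tfae_have 2 → 1
  · intro h2
    simp only [e1, e1s, e2] at *
    exact ii_to_i hfc hmeas hC hC0 hlim' h2
  tfae_have 2 → 3
  · intro h2
    simp only [e2] at *
    exact ii_to_iii hfc hmeas hC hC0 hlim' h2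
  tfae_have 3 → 2
  · intro h3
    simp only [e2] at *
    exact iii_to_ii hfc hmeas hC hC0 hlim' h3
  tfae_finish
end
end
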